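/- arXiv:2407.20620 — 7 statements merged into one kernel-verified Lean document; each statement's English description precedes it below -/
import Mathlib

section
/- Let f : ℝⁿ → ℝ be continuously differentiable, m-strongly convex with m > 0, and have L-Lipschitz gradient, let g : ℝⁿ → ℝ be convex and lower semicontinuous, and let μ ∈ (0, 1/L). Then for every x, x' ∈ ℝⁿ: F_μ(x) − F(x') ≤ ⟨G_μ(x), x − x'⟩ − (m/2)‖x − x'‖² − (μ/2)‖G_μ(x)‖². -/
open Set RealInnerProductSpace

noncomputable section

lemma deriv_le_sub_of_convexOn (ψ : ℝ → ℝ) (hc : ConvexOn ℝ univ ψ) {d : ℝ}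
    (hd : HasDerivAt ψ d 0) : d ≤ ψ 1 - ψ 0 := by
  have h := hc.le_slope_of_hasDerivAt (mem_univ (0:ℝ)) (mem_univ (1:ℝ)) one_pos hd
  simpa [slope_def_field] using h

variable {n : ℕ}

lemma strong_grad_ineq (f : EuclideanSpace ℝ (Fin n) → ℝ) (m : ℝ)
    (hdiff : Differentiable ℝ f)
    (hconv : ConvexOn ℝ univ (fun x => f x - m / 2 * ‖x‖ ^ 2))
    (x y : EuclideanSpace ℝ (Fin n)) :
    f x + ⟪gradient f x, y - x⟫ + m / 2 * ‖y - x‖ ^ 2 ≤ f y := by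
  set v := y - x with hv
  set d := gradient f x with hdd
  have hg : HasGradientAt f d x := (hdiff x).hasGradientAt
  have hα : HasDerivAt (fun t : ℝ => x + t • v) v 0 := by
    simpa using ((hasDerivAt_id (0:ℝ)).smul_const v).const_add x
  have hF : HasFDerivAt f ((InnerProductSpace.toDual ℝ (EuclideanSpace ℝ (Fin n))) d)
      ((fun t : ℝ => x + t • v) 0) := by
    simpa using hg.hasFDerivAt
  have hf' : HasDerivAt (fun t : ℝ => f (x + t • v)) ⟪d, v⟫ 0 := by
    have h := hF.comp_hasDerivAt (0:ℝ) hα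
    simp at h
    exact h
  have hn : HasDerivAt (fun t : ℝ => ‖x + t • v‖ ^ 2) (2 * ⟪x, v⟫) 0 := by
    simpa using hα.norm_sq
  have hψ : HasDerivAt (fun t : ℝ => f (x + t • v) - m / 2 * ‖x + t • v‖ ^ 2)
      (⟪d, v⟫ - m / 2 * (2 * ⟪x, v⟫)) 0 := hf'.sub (hn.const_mul (m / 2))
  have hψc : ConvexOn ℝ univ (fun t : ℝ => f (x + t • v) - m / 2 * ‖x + t • v‖ ^ 2) := by
    have h := hconv.comp_affineMap (AffineMap.lineMap x y)
    have hl : ∀ t : ℝ, (AffineMap.lineMap x y) t = x + t • v := by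
      intro t
      rw [AffineMap.lineMap_apply_module, hv]
      module
    have he : (fun t : ℝ => f (x + t • v) - m / 2 * ‖x + t • v‖ ^ 2)
        = (fun z => f z - m / 2 * ‖z‖ ^ 2) ∘ (AffineMap.lineMap x y) := by
      funext t; simp [Function.comp, hl t]
    rw [he]
    simpa using h
  have key := deriv_le_sub_of_convexOn _ hψc hψ
  have h1 : x + (1:ℝ) • v = y := by simp [hv]
  have h0 : x + (0:ℝ) • v = x := by simp
  rw [h1, h0] at key
  have hxy : ‖v‖ ^ 2 = ‖y‖ ^ 2 - 2 * ⟪x, y⟫ + ‖x‖ ^ 2 := by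
    rw [hv, norm_sub_sq_real, real_inner_comm]
  have hii : ⟪x, x⟫ = ‖x‖ ^ 2 := real_inner_self_eq_norm_sq x
  have hiv : ⟪x, v⟫ = ⟪x, y⟫ - ⟪x, x⟫ := by rw [hv, inner_sub_right]
  rw [hiv, hii] at key
  have hmv : m / 2 * ‖v‖ ^ 2 = m / 2 * ‖y‖ ^ 2 - m * ⟪x, y⟫ + m / 2 * ‖x‖ ^ 2 := by
    rw [hxy]; ring
  linarith [key, hmv]
lemma prox_subgrad (g : EuclideanSpace ℝ (Fin n) → ℝ) (hg : ConvexOn ℝ univ g)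
    (μ : ℝ) (hμ : 0 < μ) (v p : EuclideanSpace ℝ (Fin n))
    (hp : IsMinOn (fun z => g z + ‖z - v‖ ^ 2 / (2 * μ)) univ p)
    (q : EuclideanSpace ℝ (Fin n)) :
    g p + μ⁻¹ * ⟪v - p, q - p⟫ ≤ g q := by
  set w := q - p with hw
  set A : ℝ := g q - g p + μ⁻¹ * ⟪p - v, w⟫ with hA
  set B : ℝ := ‖w‖ ^ 2 / (2 * μ) with hB
  have hBnn : 0 ≤ B := by positivity
  have key : ∀ t : ℝ, 0 < t → t ≤ 1 → 0 ≤ A + t * B := by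
    intro t ht0 ht1
    have hmin := hp (mem_univ (p + t • w))
    simp only at hmin
    have hpt : p + t • w = (1 - t) • p + t • q := by rw [hw]; module
    have hcv : g (p + t • w) ≤ (1 - t) * g p + t * g q := by
      rw [hpt]
      exact hg.2 (mem_univ p) (mem_univ q) (by linarith) ht0.le (by ring)
    have hns : ‖p + t • w - v‖ ^ 2
        = ‖p - v‖ ^ 2 + 2 * (t * ⟪p - v, w⟫) + t ^ 2 * ‖w‖ ^ 2 := by
      have h1 : p + t • w - v = (p - v) + t • w := by module
      rw [h1, norm_add_sq_real, inner_smul_right, norm_smul]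
      simp [mul_pow, abs_of_nonneg, sq_abs]
    have hmain : g p + ‖p - v‖ ^ 2 / (2 * μ)
        ≤ (1 - t) * g p + t * g q
          + (‖p - v‖ ^ 2 + 2 * (t * ⟪p - v, w⟫) + t ^ 2 * ‖w‖ ^ 2) / (2 * μ) := by
      calc g p + ‖p - v‖ ^ 2 / (2 * μ)
          ≤ g (p + t • w) + ‖p + t • w - v‖ ^ 2 / (2 * μ) := hmin
        _ ≤ _ := by rw [hns]; linarith [hcv]
    have htA : 0 ≤ t * (A + t * B) := by
      have hexp : t * (A + t * B)
          = t * (g q - g p) + t * μ⁻¹ * ⟪p - v, w⟫ + t ^ 2 * (‖w‖ ^ 2 / (2 * μ)) := by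
        rw [hA, hB]; ring
      rw [hexp]
      have h2μ : (0:ℝ) < 2 * μ := by linarith
      have e1 : (‖p - v‖ ^ 2 + 2 * (t * ⟪p - v, w⟫) + t ^ 2 * ‖w‖ ^ 2) / (2 * μ)
          = ‖p - v‖ ^ 2 / (2 * μ) + t * μ⁻¹ * ⟪p - v, w⟫ + t ^ 2 * (‖w‖ ^ 2 / (2 * μ)) := by
        field_simp
      rw [e1] at hmain
      linarith [hmain]
    nlinarith [htA, ht0]
  -- pass to the limit t → 0⁺
  have hAnn : 0 ≤ A := by
    by_contra hneg
    push_neg at hneg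
    set t0 : ℝ := min 1 (-A / (B + 1)) with ht0def
    have hB1 : (0:ℝ) < B + 1 := by linarith
    have ht0pos : 0 < t0 := lt_min one_pos (div_pos (by linarith) hB1)
    have ht0le1 : t0 ≤ 1 := min_le_left _ _
    have ht0le : t0 ≤ -A / (B + 1) := min_le_right _ _
    have h2 : t0 * (B + 1) ≤ -A := by
      rw [← le_div_iff₀ hB1]; exact ht0le
    have h1 := key t0 ht0pos ht0le1
    nlinarith [h1, h2, ht0pos, hBnn]
  have : ⟪v - p, q - p⟫ = -⟪p - v, w⟫ := by
    rw [hw, show v - p = -(p - v) by module, inner_neg_left]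
  rw [this]
  have hμinv : 0 ≤ μ⁻¹ := by positivity
  rw [hA] at hAnn
  nlinarith [hAnn]

/-- Lemma 3, inequality (a): upper bound on the
forward–backward envelope in terms of the generalized gradient map for an
`m`-strongly convex `f` with `L`-Lipschitz gradient. -/
theorem FB_envelope_upper_bound {n : ℕ}
    (f g F : EuclideanSpace ℝ (Fin n) → ℝ)
    (m L μ : ℝ)
    (hm : 0 < m) (hL : 0 < L)
    (hfC1 : ContDiff ℝ 1 f)
    (hfsc : ConvexOn ℝ univ (fun x => f x - m / 2 * ‖x‖ ^ 2))
    (hfLip : ∀ x y, ‖gradient f x - gradient f y‖ ≤ L * ‖x - y‖)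
    (hgconv : ConvexOn ℝ univ g) (hglsc : LowerSemicontinuous g)
    (hF : ∀ x, F x = f x + g x)
    (hμ : μ ∈ Ioo 0 (1 / L))
    (proxg : EuclideanSpace ℝ (Fin n) → EuclideanSpace ℝ (Fin n))
    (hproxg : ∀ v, IsMinOn (fun z => g z + ‖z - v‖ ^ 2 / (2 * μ)) univ (proxg v))
    (G : EuclideanSpace ℝ (Fin n) → EuclideanSpace ℝ (Fin n))
    (hG : ∀ x, G x = μ⁻¹ • (x - proxg (x - μ • gradient f x)))
    (M : EuclideanSpace ℝ (Fin n) → ℝ)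
    (hM : ∀ v, M v = ⨅ z : EuclideanSpace ℝ (Fin n), (g z + ‖z - v‖ ^ 2 / (2 * μ)))
    (Fμ : EuclideanSpace ℝ (Fin n) → ℝ)
    (hFμ : ∀ x, Fμ x = f x + M (x - μ • gradient f x) - μ / 2 * ‖gradient f x‖ ^ 2) :
    ∀ x x' : EuclideanSpace ℝ (Fin n),
      Fμ x - F x' ≤ ⟪G x, x - x'⟫ - m / 2 * ‖x - x'‖ ^ 2 - μ / 2 * ‖G x‖ ^ 2 := by
  intro x x'
  have hμ0 : 0 < μ := hμ.1
  have hdiff : Differentiable ℝ f := hfC1.differentiable one_ne_zero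
  set gx := gradient f x with hgx
  set v := x - μ • gx with hvdef
  set p := proxg v with hpdef
  set Gx := G x with hGxdef
  -- relation between p, x, Gx
  have hxp : x - p = μ • Gx := by
    rw [hGxdef, hG x, ← hgx, ← hvdef, ← hpdef, smul_smul, mul_inv_cancel₀ hμ0.ne', one_smul]
  have hp' : p = x - μ • Gx := by rw [← hxp]; module
  -- step 1 : M v ≤ value at p
  have hbdd : BddBelow (range (fun z => g z + ‖z - v‖ ^ 2 / (2 * μ))) := by
    refine ⟨g p + ‖p - v‖ ^ 2 / (2 * μ), ?_⟩
    rintro r ⟨z, rfl⟩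
    exact isMinOn_iff.mp (hproxg v) z (mem_univ z)
  have hMle : M v ≤ g p + ‖p - v‖ ^ 2 / (2 * μ) := by
    rw [hM v]; exact ciInf_le hbdd p
  -- step 2 : strong convexity inequality
  have I1 : f x + ⟪gx, x' - x⟫ + m / 2 * ‖x' - x‖ ^ 2 ≤ f x' :=
    strong_grad_ineq f m hdiff hfsc x x'
  -- step 3 : prox subgradient inequality
  have I2 : g p + μ⁻¹ * ⟪v - p, x' - p⟫ ≤ g x' :=
    prox_subgrad g hgconv μ hμ0 v p (hproxg v) x'
  -- algebraic identities
  have hvp : v - p = μ • (Gx - gx) := by rw [hp', hvdef]; module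
  have hxp' : x' - p = (x' - x) + μ • Gx := by rw [hp']; module
  have I4 : μ⁻¹ * ⟪v - p, x' - p⟫
      = ⟪Gx, x' - x⟫ + μ * ‖Gx‖ ^ 2 - ⟪gx, x' - x⟫ - μ * ⟪gx, Gx⟫ := by
    rw [hvp, hxp', real_inner_smul_left, inner_add_right, inner_sub_left, inner_sub_left,
      real_inner_smul_right, real_inner_smul_right, real_inner_self_eq_norm_sq]
    field_simp
    ring
  have hpv2 : ‖p - v‖ ^ 2 / (2 * μ)
      = μ / 2 * (‖gx‖ ^ 2 - 2 * ⟪gx, Gx⟫ + ‖Gx‖ ^ 2) := by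
    have h1 : p - v = μ • (gx - Gx) := by rw [hp', hvdef]; module
    rw [h1, norm_smul, mul_pow, norm_sub_sq_real, Real.norm_eq_abs, sq_abs]
    field_simp [hμ0.ne']
  have hsym1 : ⟪Gx, x - x'⟫ = -⟪Gx, x' - x⟫ := by
    rw [show x - x' = -(x' - x) by module, inner_neg_right]
  have hsym2 : ‖x - x'‖ = ‖x' - x‖ := norm_sub_rev x x'
  rw [hFμ x, hF x', ← hgx, ← hvdef, hsym1, hsym2]
  rw [I4] at I2
  rw [hpv2] at hMle
  linarith [I1, I2, hMle]
end
end

section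
/- Let f : ℝⁿ → ℝ be continuously differentiable, m-strongly convex with m > 0, and have L-Lipschitz gradient, let g : ℝⁿ → ℝ be convex and lower semicontinuous, and let μ ∈ (0, 1/L). Then for every x ∈ ℝⁿ and every minimizer x⋆ of F = f + g: F_μ(x) − F(x⋆) ≥ (m²(1 − μL)/(2L)) ‖x − x⋆‖². -/
open Set RealInnerProductSpace intervalIntegral

noncomputable section

variable {n : ℕ}

local notation "E" => EuclideanSpace ℝ (Fin n)

lemma my_norm_combo (a b : E) (t : ℝ) :
    ‖(1 - t) • a + t • b‖ ^ 2
      = (1 - t) * ‖a‖ ^ 2 + t * ‖b‖ ^ 2 - t * (1 - t) * ‖a - b‖ ^ 2 := by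
  have h : ∀ x : E, ‖x‖ ^ 2 = ⟪x, x⟫ := fun x => (real_inner_self_eq_norm_sq x).symm
  rw [h, h, h, h]
  simp only [inner_add_left, inner_add_right, inner_sub_left, inner_sub_right,
    real_inner_smul_left, real_inner_smul_right]
  ring_nf

lemma my_young (a c : ℝ) (ha : 0 < a) (hc : 0 < c) (u v : E) :
    a * c / (a + c) * ‖u - v‖ ^ 2 ≤ a * ‖u‖ ^ 2 + c * ‖v‖ ^ 2 := by
  have h0 : 0 ≤ ‖a • u + c • v‖ ^ 2 := sq_nonneg _
  rw [norm_add_sq_real, norm_smul, norm_smul, real_inner_smul_left, real_inner_smul_right,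
    Real.norm_eq_abs, Real.norm_eq_abs, abs_of_pos ha, abs_of_pos hc] at h0
  have h1 : ‖u - v‖ ^ 2 = ‖u‖ ^ 2 - 2 * ⟪u, v⟫ + ‖v‖ ^ 2 := norm_sub_sq_real u v
  rw [div_mul_eq_mul_div, div_le_iff₀ (by positivity), h1]
  nlinarith [h0]

lemma my_expand (μ : ℝ) (hμ : 0 < μ) (gfx w : E) :
    ‖w + μ • gfx‖ ^ 2 / (2 * μ) = ‖w‖ ^ 2 / (2 * μ) + ⟪gfx, w⟫ + μ / 2 * ‖gfx‖ ^ 2 := by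
  have h1 : ‖w + μ • gfx‖ ^ 2 = ‖w‖ ^ 2 + 2 * (μ * ⟪w, gfx⟫) + (μ * ‖gfx‖) ^ 2 := by
    rw [norm_add_sq_real, real_inner_smul_right, norm_smul, Real.norm_eq_abs, abs_of_pos hμ]
  rw [h1, real_inner_comm gfx w]
  field_simp

lemma my_descent (f : E → ℝ) (L : ℝ) (hL : 0 < L) (hfC1 : ContDiff ℝ 1 f)
    (hfLip : ∀ x y, ‖gradient f x - gradient f y‖ ≤ L * ‖x - y‖) (x z : E) :
    f z ≤ f x + ⟪gradient f x, z - x⟫ + L / 2 * ‖z - x‖ ^ 2 := by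
  set w := z - x with hw
  have hdiff : ∀ y : E, HasGradientAt f (gradient f y) y :=
    fun y => (hfC1.differentiable one_ne_zero y).hasGradientAt
  have hc : ∀ t : ℝ, HasDerivAt (fun t : ℝ => x + t • w) w t := by
    intro t
    simpa using ((hasDerivAt_id t).smul_const w).const_add x
  have hφ : ∀ t : ℝ, HasDerivAt (fun t : ℝ => f (x + t • w)) ⟪gradient f (x + t • w), w⟫ t := by
    intro t
    have := ((hdiff (x + t • w)).hasFDerivAt).comp_hasDerivAt t (hc t)
    simpa [InnerProductSpace.toDual_apply_apply, Function.comp_def] using this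
  have hgc : Continuous (gradient f) := by
    have : LipschitzWith L.toNNReal (gradient f) := by
      apply LipschitzWith.of_dist_le_mul
      intro a b
      simp only [dist_eq_norm, Real.coe_toNNReal _ hL.le]
      exact hfLip a b
    exact this.continuous
  have hcont : Continuous fun t : ℝ => ⟪gradient f (x + t • w), w⟫ :=
    (hgc.comp (continuous_const.add (continuous_id.smul continuous_const))).inner continuous_const
  have key : ∫ t in (0:ℝ)..1, ⟪gradient f (x + t • w), w⟫ = f z - f x := by
    have := integral_eq_sub_of_hasDerivAt (f := fun t : ℝ => f (x + t • w))
      (f' := fun t : ℝ => ⟪gradient f (x + t • w), w⟫) (a := 0) (b := 1)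
      (fun t _ => hφ t) (hcont.intervalIntegrable 0 1)
    simpa [hw] using this
  have hb : ∀ t ∈ Icc (0:ℝ) 1,
      ⟪gradient f (x + t • w), w⟫ ≤ ⟪gradient f x, w⟫ + L * t * ‖w‖ ^ 2 := by
    intro t ht
    have h1 := real_inner_le_norm (gradient f (x + t • w) - gradient f x) w
    have h2 := hfLip (x + t • w) x
    have h3 : x + t • w - x = t • w := by abel
    rw [h3, norm_smul, Real.norm_eq_abs, abs_of_nonneg ht.1] at h2
    rw [inner_sub_left] at h1
    nlinarith [norm_nonneg w, norm_nonneg (gradient f (x + t • w) - gradient f x)]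
  have hmono : (∫ t in (0:ℝ)..1, ⟪gradient f (x + t • w), w⟫)
      ≤ ∫ t in (0:ℝ)..1, (⟪gradient f x, w⟫ + L * t * ‖w‖ ^ 2) := by
    have hc2 : Continuous fun t : ℝ => ⟪gradient f x, w⟫ + L * t * ‖w‖ ^ 2 :=
      continuous_const.add ((continuous_const.mul continuous_id).mul continuous_const)
    exact integral_mono_on (by norm_num) (hcont.intervalIntegrable 0 1)
      (hc2.intervalIntegrable 0 1) hb
  have hval : (∫ t in (0:ℝ)..1, (⟪gradient f x, w⟫ + L * t * ‖w‖ ^ 2))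
      = ⟪gradient f x, w⟫ + L / 2 * ‖w‖ ^ 2 := by
    have e : (fun t : ℝ => ⟪gradient f x, w⟫ + L * t * ‖w‖ ^ 2)
        = fun t : ℝ => ⟪gradient f x, w⟫ + (L * ‖w‖ ^ 2) * t := by
      funext t; ring
    have hc3 : Continuous fun t : ℝ => (L * ‖w‖ ^ 2) * t := continuous_const.mul continuous_id
    rw [e, integral_add intervalIntegrable_const (hc3.intervalIntegrable 0 1),
      integral_const, integral_const_mul, integral_id]
    norm_num
    ring
  rw [key] at hmono
  rw [hval] at hmono
  linarith

lemma my_ratio (m L μ : ℝ) (hm : 0 < m) (hL : 0 < L) (hμ0 : 0 < μ)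
    (hs : 0 < 1 - μ * L) (hmL : m ≤ L) :
    m ^ 2 * (1 - μ * L) / (2 * L)
      ≤ m / 2 * ((1 - μ * L) / (2 * μ)) / (m / 2 + (1 - μ * L) / (2 * μ)) := by
  have hden : (0:ℝ) < 2 * (μ * m + 1 - μ * L) := by nlinarith [mul_pos hμ0 hm]
  have h2 : m / 2 * ((1 - μ * L) / (2 * μ)) / (m / 2 + (1 - μ * L) / (2 * μ))
      = m * (1 - μ * L) / (2 * (μ * m + 1 - μ * L)) := by
    rw [div_eq_div_iff (by positivity) hden.ne']
    field_simp
    ring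
  rw [h2, div_le_div_iff₀ (by positivity) hden]
  have hkey : 0 ≤ (m * (1 - μ * L)) * ((L - m) * (1 + μ * m)) := by
    apply mul_nonneg (by positivity)
    exact mul_nonneg (by linarith) (by positivity)
  nlinarith [hkey]

lemma my_quad_growth (F : E → ℝ) (m : ℝ) (hm : 0 < m)
    (hFconv : ConvexOn ℝ univ (fun y => F y - m / 2 * ‖y‖ ^ 2))
    (xs : E) (hmin : ∀ y, F xs ≤ F y) (z : E) :
    F xs + m / 2 * ‖z - xs‖ ^ 2 ≤ F z := by
  have hstep : ∀ t : ℝ, t ∈ Ioo (0:ℝ) 1 →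
      F xs + m / 2 * (1 - t) * ‖xs - z‖ ^ 2 ≤ F z := by
    intro t ht
    have h1 : (0:ℝ) ≤ 1 - t := by linarith [ht.2]
    have hcomb := hFconv.2 (mem_univ xs) (mem_univ z) h1 ht.1.le (by ring)
    simp only [smul_eq_mul] at hcomb
    have hnc := my_norm_combo xs z t
    rw [hnc] at hcomb
    have hmin' : F xs ≤ F ((1 - t) • xs + t • z) := hmin _
    have key : t * (F xs + m / 2 * (1 - t) * ‖xs - z‖ ^ 2) ≤ t * F z := by nlinarith
    exact le_of_mul_le_mul_left key ht.1
  have hlim : Filter.Tendsto (fun t : ℝ => F xs + m / 2 * (1 - t) * ‖xs - z‖ ^ 2)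
      (nhdsWithin 0 (Ioi 0)) (nhds (F xs + m / 2 * (1 - 0) * ‖xs - z‖ ^ 2)) := by
    apply Filter.Tendsto.mono_left _ nhdsWithin_le_nhds
    exact Continuous.tendsto (by continuity) 0
  have hev : ∀ᶠ t in nhdsWithin 0 (Ioi 0),
      F xs + m / 2 * (1 - t) * ‖xs - z‖ ^ 2 ≤ F z := by
    filter_upwards [Ioo_mem_nhdsGT_of_mem (Set.left_mem_Ico.mpr one_pos)] with t ht
    exact hstep t ht
  have := le_of_tendsto hlim hev
  rw [norm_sub_rev z xs]
  linarith

end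

/-- Lemma 3, inequality (b): lower bound on the gap between
the forward–backward envelope and the optimal value for an `m`-strongly convex
`f` with `L`-Lipschitz gradient. -/
theorem FB_envelope_lower_bound {n : ℕ}
    (f g F : EuclideanSpace ℝ (Fin n) → ℝ)
    (m L μ : ℝ)
    (hm : 0 < m) (hL : 0 < L)
    (hfC1 : ContDiff ℝ 1 f)
    (hfsc : ConvexOn ℝ univ (fun x => f x - m / 2 * ‖x‖ ^ 2))
    (hfLip : ∀ x y, ‖gradient f x - gradient f y‖ ≤ L * ‖x - y‖)
    (hgconv : ConvexOn ℝ univ g) (hglsc : LowerSemicontinuous g)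
    (hF : ∀ x, F x = f x + g x)
    (hμ : μ ∈ Ioo 0 (1 / L))
    (M : EuclideanSpace ℝ (Fin n) → ℝ)
    (hM : ∀ v, M v = ⨅ z : EuclideanSpace ℝ (Fin n), (g z + ‖z - v‖ ^ 2 / (2 * μ)))
    (Fμ : EuclideanSpace ℝ (Fin n) → ℝ)
    (hFμ : ∀ x, Fμ x = f x + M (x - μ • gradient f x) - μ / 2 * ‖gradient f x‖ ^ 2) :
    ∀ x : EuclideanSpace ℝ (Fin n), ∀ xs, IsMinOn F univ xs →
      m ^ 2 * (1 - μ * L) / (2 * L) * ‖x - xs‖ ^ 2 ≤ Fμ x - F xs := by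
  intro x xs hmin
  obtain ⟨hμ0, hμ1⟩ := hμ
  have hμL : μ * L < 1 := (lt_div_iff₀ hL).mp hμ1
  have hs : (0:ℝ) < 1 - μ * L := by linarith
  set c := (1 - μ * L) / (2 * μ) with hcdef
  have hc : 0 < c := by rw [hcdef]; exact div_pos hs (by linarith)
  have hFconv : ConvexOn ℝ univ (fun y => F y - m / 2 * ‖y‖ ^ 2) := by
    have h := hfsc.add hgconv
    have he : (fun y => F y - m / 2 * ‖y‖ ^ 2)
        = fun y => (f y - m / 2 * ‖y‖ ^ 2) + g y := by
      funext y; rw [hF]; ring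
    rw [he]; exact h
  have hmin' : ∀ y, F xs ≤ F y := fun y => isMinOn_iff.mp hmin y (mem_univ y)
  have key : ∀ K : ℝ, 0 ≤ K → K ≤ m / 2 * c / (m / 2 + c) →
      K * ‖x - xs‖ ^ 2 ≤ Fμ x - F xs := by
    intro K hK0 hKle
    rw [hFμ, hM]
    have hsuff : F xs + K * ‖x - xs‖ ^ 2 - f x + μ / 2 * ‖gradient f x‖ ^ 2 ≤
        ⨅ z : EuclideanSpace ℝ (Fin n),
          (g z + ‖z - (x - μ • gradient f x)‖ ^ 2 / (2 * μ)) := by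
      refine le_ciInf fun z => ?_
      have e0 : z - (x - μ • gradient f x) = (z - x) + μ • gradient f x := by abel
      rw [e0, my_expand μ hμ0 (gradient f x) (z - x)]
      have e2 := my_descent f L hL hfC1 hfLip x z
      have e3 := my_quad_growth F m hm hFconv xs hmin' z
      have e4 := my_young (m / 2) c (by positivity) hc (z - xs) (z - x)
      rw [show z - xs - (z - x) = x - xs by abel] at e4
      have e5 : K * ‖x - xs‖ ^ 2 ≤ m / 2 * c / (m / 2 + c) * ‖x - xs‖ ^ 2 :=
        mul_le_mul_of_nonneg_right hKle (sq_nonneg _)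
      have e6 : c * ‖z - x‖ ^ 2 = ‖z - x‖ ^ 2 / (2 * μ) - L / 2 * ‖z - x‖ ^ 2 := by
        rw [hcdef]; field_simp
      have hFz := hF z
      linarith
    linarith [hsuff]
  by_cases hxx : x = xs
  · subst hxx
    have h0 := key 0 le_rfl (le_of_lt (div_pos (mul_pos (by linarith : (0:ℝ) < m / 2) hc) (by linarith)))
    simpa using h0
  · have hd : x - xs ≠ 0 := sub_ne_zero.mpr hxx
    have hdpos : (0:ℝ) < ‖x - xs‖ := norm_pos_iff.mpr hd
    set p := (1 / 2 : ℝ) • x + (1 / 2 : ℝ) • xs with hp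
    have hmidc := hfsc.2 (mem_univ x) (mem_univ xs)
      (by norm_num : (0:ℝ) ≤ 1 / 2) (by norm_num : (0:ℝ) ≤ 1 / 2) (by norm_num)
    simp only [smul_eq_mul] at hmidc
    rw [← hp] at hmidc
    have hnc := my_norm_combo x xs (1 / 2 : ℝ)
    have h12 : (1 - (1 / 2 : ℝ)) = 1 / 2 := by norm_num
    rw [h12, ← hp] at hnc
    rw [hnc] at hmidc
    have e1 := my_descent f L hL hfC1 hfLip p x
    have e2 := my_descent f L hL hfC1 hfLip p xs
    have hxp : x - p = (1 / 2 : ℝ) • (x - xs) := by rw [hp]; module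
    have hxsp : xs - p = -((1 / 2 : ℝ) • (x - xs)) := by rw [hp]; module
    have hip : ⟪gradient f p, x - p⟫ + ⟪gradient f p, xs - p⟫ = (0:ℝ) := by
      rw [← inner_add_right, show (x - p) + (xs - p) = (0 : EuclideanSpace ℝ (Fin n)) by
        rw [hp]; module]
      exact inner_zero_right _
    have hnxp : ‖x - p‖ ^ 2 = 1 / 4 * ‖x - xs‖ ^ 2 := by
      rw [hxp, norm_smul, Real.norm_eq_abs]
      rw [abs_of_pos (by norm_num : (0:ℝ) < 1/2)]
      ring
    have hnxsp : ‖xs - p‖ ^ 2 = 1 / 4 * ‖x - xs‖ ^ 2 := by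
      rw [hxsp, norm_neg, norm_smul, Real.norm_eq_abs]
      rw [abs_of_pos (by norm_num : (0:ℝ) < 1/2)]
      ring
    rw [hnxp] at e1
    rw [hnxsp] at e2
    have hmL : m ≤ L := by nlinarith [pow_pos hdpos 2]
    have hratio : m ^ 2 * (1 - μ * L) / (2 * L) ≤ m / 2 * c / (m / 2 + c) := by
      rw [hcdef]
      exact my_ratio m L μ hm hL hμ0 hs hmL
    exact key _ (div_nonneg (mul_nonneg (sq_nonneg m) hs.le) (by linarith)) hratio
end

section
/- Let f(x) = (1/2)⟨x, Qx⟩ + ⟨q, x⟩ with Q symmetric positive semidefinite with smallest eigenvalue m ≥ 0 and largest eigenvalue L > 0, let g : ℝⁿ → ℝ be convex and lower semicontinuous, and let μ ∈ (0, 1/L). Set L̃ = 2(1 − μm)/μ. Then the forward–backward envelope F_μ is convex and differentiable, and its gradient ∇F_μ is Lipschitz continuous with constant L̃. -/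
open Set RealInnerProductSpace Filter

noncomputable section

variable {E : Type*} [NormedAddCommGroup E] [InnerProductSpace ℝ E]

lemma two_inner_le (a b : E) : 2 * ⟪a, b⟫ ≤ ‖a‖ ^ 2 + ‖b‖ ^ 2 := by
  have h := sq_nonneg ‖a - b‖
  rw [norm_sub_sq_real] at h
  linarith

/-- subgradient inequality everywhere implies convexity -/
lemma convexOn_of_subgrad (φ : E → ℝ) (a : E → E)
    (h : ∀ x y : E, φ x + ⟪a x, y - x⟫ ≤ φ y) : ConvexOn ℝ univ φ := by
  refine ⟨convex_univ, fun x _ y _ s t hs ht hst => ?_⟩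
  have ht' : t = 1 - s := by linarith
  subst ht'
  set z := s • x + (1 - s) • y with hz
  have h1 := h z x
  have h2 := h z y
  have key : s • (x - z) + (1 - s) • (y - z) = (0 : E) := by
    rw [hz]; module
  have key2 : s * ⟪a z, x - z⟫ + (1 - s) * ⟪a z, y - z⟫ = 0 := by
    rw [← real_inner_smul_right, ← real_inner_smul_right, ← inner_add_right, key,
      inner_zero_right]
  have hzz : s * φ z + (1 - s) * φ z = φ z := by ring
  simp only [smul_eq_mul]
  nlinarith [mul_le_mul_of_nonneg_left h1 hs, mul_le_mul_of_nonneg_left h2 ht]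

/-- quadratic error bound implies gradient -/
lemma hasGradientAt_of_sq_bound [CompleteSpace E] (φ : E → ℝ) (a x : E) (C : ℝ)
    (h : ∀ y, |φ y - φ x - ⟪a, y - x⟫| ≤ C * ‖y - x‖ ^ 2) : HasGradientAt φ a x := by
  rw [hasGradientAt_iff_isLittleO, Asymptotics.isLittleO_iff]
  intro c hc
  have hC : (0:ℝ) < |C| + 1 := by positivity
  filter_upwards [Metric.ball_mem_nhds x (show (0:ℝ) < c / (|C| + 1) by positivity)] with y hy
  rw [Metric.mem_ball, dist_eq_norm] at hy
  have h1 := h y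
  have h2 : C * ‖y - x‖ ^ 2 ≤ (|C| + 1) * ‖y - x‖ ^ 2 := by
    have := le_abs_self C
    nlinarith [sq_nonneg ‖y - x‖]
  have h3 : (|C| + 1) * ‖y - x‖ ^ 2 ≤ c * ‖y - x‖ := by
    have hn : (0:ℝ) ≤ ‖y - x‖ := norm_nonneg _
    have hy' := (lt_div_iff₀ hC).mp hy
    nlinarith [hy']
  calc ‖φ y - φ x - ⟪a, y - x⟫‖ = |φ y - φ x - ⟪a, y - x⟫| := rfl
    _ ≤ c * ‖y - x‖ := by linarith

/-- norm bound for symmetric operators with bounded quadratic form -/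
lemma norm_le_of_sym_form (A : E →L[ℝ] E) (hsym : ∀ x y : E, ⟪A x, y⟫ = ⟪x, A y⟫)
    (b : ℝ) (hb : 0 ≤ b) (hform : ∀ z : E, |⟪z, A z⟫| ≤ b * ‖z‖ ^ 2) (x : E) :
    ‖A x‖ ≤ b * ‖x‖ := by
  rcases eq_or_ne (A x) 0 with h0 | h0
  · rw [h0, norm_zero]; positivity
  have hx : x ≠ 0 := by rintro rfl; simp at h0
  have hxn : (0:ℝ) < ‖x‖ := norm_pos_iff.mpr hx
  have hAxn : (0:ℝ) < ‖A x‖ := norm_pos_iff.mpr h0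
  set y := (‖x‖ / ‖A x‖) • A x with hy
  have hyn : ‖y‖ = ‖x‖ := by
    rw [hy, norm_smul, Real.norm_eq_abs, abs_of_pos (by positivity), div_mul_cancel₀]
    exact hAxn.ne'
  have hpol : 4 * ⟪A x, y⟫ = ⟪A (x + y), x + y⟫ - ⟪A (x - y), x - y⟫ := by
    rw [map_add, map_sub]
    simp only [inner_add_left, inner_add_right, inner_sub_left, inner_sub_right]
    rw [hsym y x, real_inner_comm y (A x)]
    ring
  have hxy : ⟪A x, y⟫ = ‖x‖ * ‖A x‖ := by
    rw [hy, real_inner_smul_right, real_inner_self_eq_norm_sq]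
    field_simp
  have b1 : ⟪A (x + y), x + y⟫ ≤ b * ‖x + y‖ ^ 2 := by
    rw [real_inner_comm]; exact (abs_le.mp (hform _)).2
  have b2 : -(b * ‖x - y‖ ^ 2) ≤ ⟪A (x - y), x - y⟫ := by
    rw [real_inner_comm]; exact (abs_le.mp (hform _)).1
  have hyn2 : ‖y‖ ^ 2 = ‖x‖ ^ 2 := by rw [hyn]
  have hpar : ‖x + y‖ ^ 2 + ‖x - y‖ ^ 2 = 4 * ‖x‖ ^ 2 := by
    rw [norm_add_sq_real, norm_sub_sq_real]; rw [hyn2]; ring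
  have hb4 : b * (‖x + y‖ ^ 2 + ‖x - y‖ ^ 2) = 4 * b * ‖x‖ ^ 2 := by rw [hpar]; ring
  have key : 4 * (‖x‖ * ‖A x‖) ≤ 4 * b * ‖x‖ ^ 2 := by
    rw [← hxy, hpol]
    nlinarith [b1, b2, hb4]
  nlinarith [key, hxn]

/-- Cauchy–Schwarz for a PSD symmetric form -/
lemma psd_inner_mul_le (A : E →L[ℝ] E) (hsym : ∀ x y : E, ⟪A x, y⟫ = ⟪x, A y⟫)
    (hpsd : ∀ z : E, 0 ≤ ⟪z, A z⟫) (x y : E) :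
    ⟪x, A y⟫ ^ 2 ≤ ⟪x, A x⟫ * ⟪y, A y⟫ := by
  have key : ∀ t : ℝ, 0 ≤ ⟪y, A y⟫ * (t * t) + 2 * ⟪x, A y⟫ * t + ⟪x, A x⟫ := by
    intro t
    have h := hpsd (x + t • y)
    rw [map_add, map_smul] at h
    simp only [inner_add_left, inner_add_right, inner_smul_left, inner_smul_right,
      conj_trivial] at h
    have hc : ⟪y, A x⟫ = ⟪x, A y⟫ := by rw [← hsym y x, real_inner_comm]
    rw [hc] at h
    ring_nf at h ⊢
    linarith [h]
  have hd := discrim_le_zero key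
  rw [discrim] at hd
  nlinarith [hd]

/-- affine lower bound for a convex continuous function -/
lemma exists_affine_lower [ProperSpace E] (g : E → ℝ) (hg : ConvexOn ℝ univ g)
    (hcont : Continuous g) (x₀ : E) (hx₀ : x₀ ≠ 0) :
    ∃ a b : ℝ, 0 ≤ a ∧ ∀ z : E, -(a * ‖z‖ + b) ≤ g z := by
  have hsph : (Metric.sphere (0:E) 1).Nonempty := by
    refine ⟨‖x₀‖⁻¹ • x₀, ?_⟩
    have : ‖x₀‖ ≠ 0 := norm_ne_zero_iff.mpr hx₀
    simp [norm_smul, abs_of_nonneg (inv_nonneg.mpr (norm_nonneg x₀)), inv_mul_cancel₀ this]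
  obtain ⟨u₀, -, hu₀'⟩ := (isCompact_sphere (0:E) 1).exists_isMaxOn hsph hcont.continuousOn
  have hu₀ : ∀ u ∈ Metric.sphere (0:E) 1, g u ≤ g u₀ := fun u hu => hu₀' hu
  set Cm := g u₀ with hCm
  refine ⟨|g 0| + |Cm|, |g 0|, by positivity, fun z => ?_⟩
  rcases eq_or_ne z 0 with rfl | hz
  · simp only [norm_zero]
    have := le_abs_self (g 0)
    have := neg_abs_le (g 0)
    nlinarith [abs_nonneg Cm]
  · have hzn : (0:ℝ) < ‖z‖ := norm_pos_iff.mpr hz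
    set u := -(‖z‖⁻¹ • z) with hu
    have hun : u ∈ Metric.sphere (0:E) 1 := by
      simp only [hu, mem_sphere_iff_norm, sub_zero, norm_neg, norm_smul,
        Real.norm_eq_abs, abs_of_pos (inv_pos.mpr hzn)]
      exact inv_mul_cancel₀ hzn.ne'
    have hgu : g u ≤ Cm := hu₀ u hun
    set θ : ℝ := 1 / (‖z‖ + 1) with hθ
    have hθ0 : 0 < θ := by positivity
    have hθ1 : θ < 1 := by rw [hθ]; rw [div_lt_one (by positivity)]; linarith
    have hcomb : θ • z + (1 - θ) • u = (0:E) := by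
      rw [hu, hθ]
      have h1 : (1:ℝ) - 1 / (‖z‖ + 1) = ‖z‖ / (‖z‖ + 1) := by
        field_simp
        ring
      rw [h1, smul_neg, smul_smul]
      have h2 : ‖z‖ / (‖z‖ + 1) * ‖z‖⁻¹ = 1 / (‖z‖ + 1) := by
        field_simp
      rw [h2]
      abel
    have hconv := hg.2 (mem_univ z) (mem_univ u) hθ0.le (by linarith : (0:ℝ) ≤ 1 - θ)
      (by ring)
    rw [hcomb] at hconv
    simp only [smul_eq_mul] at hconv
    -- g 0 ≤ θ * g z + (1 - θ) * g u
    have h3 : g 0 ≤ θ * g z + (1 - θ) * Cm ∨ True := Or.inr trivial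
    have hθz : θ = 1 / (‖z‖ + 1) := hθ
    have hgz : (‖z‖ + 1) * g 0 - ‖z‖ * g u ≤ g z := by
      have e1 : (1:ℝ) - θ = ‖z‖ / (‖z‖ + 1) := by rw [hθ]; field_simp; ring
      have := hconv
      rw [e1, hθ] at this
      have hpos : (0:ℝ) < ‖z‖ + 1 := by positivity
      rw [div_mul_eq_mul_div, div_mul_eq_mul_div, ← add_div, le_div_iff₀ hpos] at this
      nlinarith [this]
    have hb1 : -|g 0| ≤ g 0 := neg_abs_le _
    have hb2 : g u ≤ |Cm| := hgu.trans (le_abs_self _)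
    nlinarith [hb1, hb2, hzn.le, abs_nonneg (g 0), abs_nonneg Cm]

/-- existence of the proximal point -/
lemma exists_prox [ProperSpace E] (g : E → ℝ) (hg : ConvexOn ℝ univ g)
    (hcont : Continuous g) (x₀ : E) (hx₀ : x₀ ≠ 0) (μ : ℝ) (hμ : 0 < μ) (v : E) :
    ∃ p : E, ∀ z : E, g p + ‖p - v‖ ^ 2 / (2 * μ) ≤ g z + ‖z - v‖ ^ 2 / (2 * μ) := by
  obtain ⟨a, b, ha, hab⟩ := exists_affine_lower g hg hcont x₀ hx₀
  have hφc : Continuous (fun z : E => g z + ‖z - v‖ ^ 2 / (2 * μ)) := by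
    fun_prop
  have hco : Tendsto (fun z : E => g z + ‖z - v‖ ^ 2 / (2 * μ)) (Filter.cocompact E) atTop := by
    have hbase : Tendsto (fun z : E => ‖z‖ - b) (Filter.cocompact E) atTop := by
      have := tendsto_norm_cocompact_atTop (E := E)
      exact tendsto_atTop_add_const_right _ (-b) this
    refine tendsto_atTop_mono' _ ?_ hbase
    have hev : ∀ᶠ z : E in Filter.cocompact E,
        2 * ‖v‖ + 2 * μ * (a + 1) + 1 ≤ ‖z‖ :=
      tendsto_norm_cocompact_atTop.eventually (eventually_ge_atTop _)
    filter_upwards [hev] with z hz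
    have h1 : -(a * ‖z‖ + b) ≤ g z := hab z
    have h2 : ‖z‖ - ‖v‖ ≤ ‖z - v‖ := by
      have := norm_sub_norm_le z v
      linarith [this]
    have hzv : 0 ≤ ‖z - v‖ := norm_nonneg _
    have hz0 : 0 ≤ ‖z‖ := norm_nonneg _
    have hv0 : 0 ≤ ‖v‖ := norm_nonneg _
    have h4 : (‖z‖ - ‖v‖) ^ 2 ≤ ‖z - v‖ ^ 2 := by
      have h5 : 0 ≤ ‖z‖ - ‖v‖ := by nlinarith
      nlinarith
    have key : (a + 1) * ‖z‖ ≤ (‖z‖ - ‖v‖) ^ 2 / (2 * μ) := by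
      rw [le_div_iff₀ (by positivity)]
      nlinarith [hμ, ha]
    have h6 : (‖z‖ - ‖v‖) ^ 2 / (2 * μ) ≤ ‖z - v‖ ^ 2 / (2 * μ) := by
      apply div_le_div_of_nonneg_right h4 (by positivity) |>.trans_eq rfl
    linarith [key, h1, h6]
  obtain ⟨p, hp⟩ := hφc.exists_forall_le hco
  exact ⟨p, hp⟩

abbrev Esp (n : ℕ) := EuclideanSpace ℝ (Fin n)

lemma clear_div' {A B ga gz c : ℝ} (hc : 0 < c) (h : ga + A / c ≤ gz + B / c) :
    c * ga + A ≤ c * gz + B := by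
  have h2 := mul_le_mul_of_nonneg_left h hc.le
  have e1 : A / c * c = A := div_mul_cancel₀ A hc.ne'
  have e2 : B / c * c = B := div_mul_cancel₀ B hc.ne'
  nlinarith [h2, e1, e2]

open Set RealInnerProductSpace

set_option maxHeartbeats 4000000 in
/-- Lemma 2, forward–backward smoothness: for a convex
quadratic `f`, the forward–backward envelope is convex and differentiable with
`L̃ = 2(1 - μm)/μ`-Lipschitz gradient. -/
theorem FB_envelope_smooth_quadratic {n : ℕ}
    (Q : EuclideanSpace ℝ (Fin n) →L[ℝ] EuclideanSpace ℝ (Fin n))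
    (q : EuclideanSpace ℝ (Fin n)) (g : EuclideanSpace ℝ (Fin n) → ℝ)
    (m L μ Lt : ℝ)
    (hQsym : ∀ x y : EuclideanSpace ℝ (Fin n), ⟪Q x, y⟫ = ⟪x, Q y⟫)
    (hm : 0 ≤ m) (hL : 0 < L)
    (hQm : ∀ x : EuclideanSpace ℝ (Fin n), m * ‖x‖ ^ 2 ≤ ⟪x, Q x⟫)
    (hQmmin : ∃ x : EuclideanSpace ℝ (Fin n), x ≠ 0 ∧ ⟪x, Q x⟫ = m * ‖x‖ ^ 2)
    (hQL : ∀ x : EuclideanSpace ℝ (Fin n), ⟪x, Q x⟫ ≤ L * ‖x‖ ^ 2)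
    (hQLmax : ∃ x : EuclideanSpace ℝ (Fin n), x ≠ 0 ∧ ⟪x, Q x⟫ = L * ‖x‖ ^ 2)
    (f : EuclideanSpace ℝ (Fin n) → ℝ)
    (hf : ∀ x, f x = (1 / 2) * ⟪x, Q x⟫ + ⟪q, x⟫)
    (hgconv : ConvexOn ℝ univ g) (hglsc : LowerSemicontinuous g)
    (hμ : μ ∈ Ioo 0 (1 / L))
    (hLt : Lt = 2 * (1 - μ * m) / μ)
    (M : EuclideanSpace ℝ (Fin n) → ℝ)
    (hM : ∀ v, M v = ⨅ z : EuclideanSpace ℝ (Fin n), (g z + ‖z - v‖ ^ 2 / (2 * μ)))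
    (Fμ : EuclideanSpace ℝ (Fin n) → ℝ)
    (hFμ : ∀ x, Fμ x = f x + M (x - μ • gradient f x) - μ / 2 * ‖gradient f x‖ ^ 2) :
    ConvexOn ℝ univ Fμ ∧ Differentiable ℝ Fμ ∧
      ∀ x y, ‖gradient Fμ x - gradient Fμ y‖ ≤ Lt * ‖x - y‖ := by
  obtain ⟨hμ0, hμ1⟩ := hμ
  have hμ' : μ ≠ 0 := hμ0.ne'
  have h2μ : (0:ℝ) < 2 * μ := by linarith
  have hμL : μ * L < 1 := by rw [← lt_div_iff₀ hL]; exact hμ1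
  obtain ⟨x₀, hx₀, hx₀m⟩ := hQmmin
  have hx₀n : (0:ℝ) < ‖x₀‖ := norm_pos_iff.mpr hx₀
  have hmL : m ≤ L := by
    have h1 := hQL x₀
    rw [hx₀m] at h1
    nlinarith [h1, pow_pos hx₀n 2]
  have hμm : μ * m < 1 := by nlinarith
  have h1m : (0:ℝ) < 1 - μ * m := by linarith
  have h1L : (0:ℝ) < 1 - μ * L := by linarith
  -- basic Q facts
  have hQpsd : ∀ z : Esp n, 0 ≤ ⟪z, Q z⟫ := fun z => le_trans (by positivity) (hQm z)
  have hQnorm2 : ∀ d : Esp n, ‖Q d‖ ^ 2 ≤ L * ⟪d, Q d⟫ := by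
    intro d
    have hcs := psd_inner_mul_le Q hQsym hQpsd (Q d) d
    have h1 : ⟪(Q d : Esp n), Q d⟫ = ‖Q d‖ ^ 2 := real_inner_self_eq_norm_sq _
    have h2 : ⟪(Q d : Esp n), Q (Q d)⟫ ≤ L * ‖Q d‖ ^ 2 := hQL (Q d)
    rcases eq_or_lt_of_le (sq_nonneg ‖Q d‖) with h0 | h0
    · rw [← h0]
      exact mul_nonneg hL.le (hQpsd d)
    · have hpsd2 := hQpsd (Q d)
      nlinarith [hcs, h1, h2, h0, hQpsd d]
  have hQop : ∀ d : Esp n, ‖Q d‖ ≤ L * ‖d‖ := by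
    intro d
    have h1 := hQnorm2 d
    have h2 := hQL d
    have h3 : ‖Q d‖ ^ 2 ≤ L ^ 2 * ‖d‖ ^ 2 := by nlinarith
    nlinarith [norm_nonneg (Q d), norm_nonneg d, mul_nonneg hL.le (norm_nonneg d)]
  -- gradient of f
  have inner_exp : ∀ u d : Esp n, ⟪u + d, Q (u + d)⟫ = ⟪u, Q u⟫ + 2 * ⟪Q u, d⟫ + ⟪d, Q d⟫ := by
    intro u d
    rw [map_add]
    simp only [inner_add_left, inner_add_right]
    have e1 : ⟪u, Q d⟫ = ⟪Q u, d⟫ := (hQsym u d).symm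
    have e2 : ⟪d, Q u⟫ = ⟪Q u, d⟫ := real_inner_comm _ _
    rw [e1, e2]; ring
  have hfexp : ∀ x d : Esp n, f (x + d) = f x + ⟪Q x + q, d⟫ + (1/2) * ⟪d, Q d⟫ := by
    intro x d
    rw [hf (x + d), hf x, inner_exp x d, inner_add_right, inner_add_left]
    ring
  have hfgrad : ∀ x : Esp n, HasGradientAt f (Q x + q) x := by
    intro x
    apply hasGradientAt_of_sq_bound f (Q x + q) x (L/2)
    intro y
    have hd : y = x + (y - x) := by abel
    have h1 : f y = f x + ⟪Q x + q, y - x⟫ + (1/2) * ⟪y - x, Q (y - x)⟫ := by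
      conv_lhs => rw [hd]
      exact hfexp x (y - x)
    have e : f y - f x - ⟪Q x + q, y - x⟫ = (1/2) * ⟪y - x, Q (y - x)⟫ := by rw [h1]; ring
    rw [e, abs_of_nonneg (by linarith [hQpsd (y - x)])]
    linarith [hQL (y - x)]
  have hgradf : ∀ x : Esp n, gradient f x = Q x + q := fun x => (hfgrad x).gradient
  -- the operator S = I - μQ
  set S : Esp n →L[ℝ] Esp n := ContinuousLinearMap.id ℝ (Esp n) - μ • Q with hSdef
  have hSapp : ∀ z : Esp n, S z = z - μ • Q z := by
    intro z
    rw [hSdef]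
    simp [ContinuousLinearMap.sub_apply, ContinuousLinearMap.smul_apply,
      ContinuousLinearMap.id_apply]
  have hSsym : ∀ u w : Esp n, ⟪S u, w⟫ = ⟪u, S w⟫ := by
    intro u w
    rw [hSapp, hSapp, inner_sub_left, inner_sub_right, real_inner_smul_left,
      real_inner_smul_right, hQsym]
  have hSform : ∀ z : Esp n, ⟪z, S z⟫ = ‖z‖ ^ 2 - μ * ⟪z, Q z⟫ := by
    intro z
    rw [hSapp, inner_sub_right, real_inner_smul_right, real_inner_self_eq_norm_sq]
  have hSnorm : ∀ z : Esp n, ‖S z‖ ≤ (1 - μ * m) * ‖z‖ := by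
    apply norm_le_of_sym_form S hSsym (1 - μ * m) h1m.le
    intro z
    rw [hSform, abs_le]
    constructor
    · nlinarith [hQL z, sq_nonneg ‖z‖]
    · nlinarith [hQm z]
  -- T
  set T : Esp n → Esp n := fun x => x - μ • (Q x + q) with hTdef
  have hTd : ∀ x y : Esp n, T x - T y = S (x - y) := by
    intro x y
    simp only [hTdef]
    rw [hSapp, map_sub]
    module
  -- continuity of g and prox
  have hgc : Continuous g := by
    rw [← continuousOn_univ]
    exact hgconv.continuousOn isOpen_univ
  choose p hp using fun v => exists_prox g hgconv hgc x₀ hx₀ μ hμ0 v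
  have hbdd : ∀ v : Esp n, BddBelow (range fun z : Esp n => g z + ‖z - v‖ ^ 2 / (2 * μ)) := by
    intro v
    exact ⟨g (p v) + ‖p v - v‖ ^ 2 / (2 * μ), by rintro r ⟨z, rfl⟩; exact hp v z⟩
  have hMv : ∀ v : Esp n, M v = g (p v) + ‖p v - v‖ ^ 2 / (2 * μ) := by
    intro v
    rw [hM v]
    exact le_antisymm (ciInf_le (hbdd v) (p v)) (le_ciInf (hp v))
  have hMle : ∀ v w : Esp n, M w ≤ g (p v) + ‖p v - w‖ ^ 2 / (2 * μ) := by
    intro v w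
    rw [hM w]
    exact ciInf_le (hbdd w) (p v)
  -- quadratic growth
  have growth : ∀ v z : Esp n, g (p v) + ‖p v - v‖ ^ 2 / (2 * μ) + ‖z - p v‖ ^ 2 / (2 * μ)
      ≤ g z + ‖z - v‖ ^ 2 / (2 * μ) := by
    intro v z
    set pv := p v with hpv
    have hA : ∀ u : Esp n, ‖u - v‖ ^ 2 - ‖u - pv‖ ^ 2
        = 2 * ⟪u, pv - v⟫ + (‖v‖ ^ 2 - ‖pv‖ ^ 2) := by
      intro u
      rw [norm_sub_sq_real, norm_sub_sq_real, inner_sub_right]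
      ring
    have step : ∀ t : ℝ, 0 < t → t ≤ 1 →
        g pv + ‖pv - v‖ ^ 2 / (2 * μ) ≤
          g z + (‖z - v‖ ^ 2 - ‖z - pv‖ ^ 2) / (2 * μ) + t * (‖z - pv‖ ^ 2 / (2 * μ)) := by
      intro t ht0 ht1
      set w := pv + t • (z - pv) with hwdef
      have hw : w = (1 - t) • pv + t • z := by rw [hwdef]; module
      have hgw : g w ≤ (1 - t) * g pv + t * g z := by
        have hcv := hgconv.2 (mem_univ pv) (mem_univ z)
          (by linarith : (0:ℝ) ≤ 1 - t) ht0.le (by ring)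
        rw [← hw] at hcv
        simpa using hcv
      have hwpv : ‖w - pv‖ ^ 2 = t ^ 2 * ‖z - pv‖ ^ 2 := by
        have e : w - pv = t • (z - pv) := by rw [hwdef]; abel
        rw [e, norm_smul, Real.norm_eq_abs, mul_pow, sq_abs]
      have hwi : ⟪w, pv - v⟫ = (1 - t) * ⟪pv, pv - v⟫ + t * ⟪z, pv - v⟫ := by
        rw [hw, inner_add_left, real_inner_smul_left, real_inner_smul_left]
      have h2 : ‖pv - v‖ ^ 2 = 2 * ⟪pv, pv - v⟫ + (‖v‖ ^ 2 - ‖pv‖ ^ 2) := by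
        have := hA pv
        simpa using this
      have hwv : ‖w - v‖ ^ 2 = (1 - t) * ‖pv - v‖ ^ 2
          + t * (‖z - v‖ ^ 2 - ‖z - pv‖ ^ 2) + t ^ 2 * ‖z - pv‖ ^ 2 := by
        have h1 := hA w
        have h3 := hA z
        linear_combination h1 + hwpv + 2 * hwi - (1 - t) * h2 - t * h3
      have hmin := hp v w
      rw [hwv] at hmin
      have ediv : ((1 - t) * ‖pv - v‖ ^ 2 + t * (‖z - v‖ ^ 2 - ‖z - pv‖ ^ 2)
          + t ^ 2 * ‖z - pv‖ ^ 2) / (2 * μ)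
          = (1 - t) * (‖pv - v‖ ^ 2 / (2 * μ))
            + t * ((‖z - v‖ ^ 2 - ‖z - pv‖ ^ 2) / (2 * μ))
            + t ^ 2 * (‖z - pv‖ ^ 2 / (2 * μ)) := by ring
      rw [ediv] at hmin
      have tgoal : t * (g pv + ‖pv - v‖ ^ 2 / (2 * μ)) ≤
          t * (g z + (‖z - v‖ ^ 2 - ‖z - pv‖ ^ 2) / (2 * μ)
            + t * (‖z - pv‖ ^ 2 / (2 * μ))) := by
        nlinarith [hmin, hgw]
      exact le_of_mul_le_mul_left tgoal ht0
    have hlim : g pv + ‖pv - v‖ ^ 2 / (2 * μ)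
        ≤ g z + (‖z - v‖ ^ 2 - ‖z - pv‖ ^ 2) / (2 * μ) := by
      apply le_of_forall_pos_le_add
      intro ε hε
      set Zc := ‖z - pv‖ ^ 2 / (2 * μ) with hZc
      have hZc0 : 0 ≤ Zc := by positivity
      set t := min 1 (ε / (Zc + 1)) with htdef
      have ht0 : 0 < t := lt_min one_pos (by positivity)
      have ht1 : t ≤ 1 := min_le_left _ _
      have hst := step t ht0 ht1
      have htZ : t * Zc ≤ ε := by
        have h1 : t ≤ ε / (Zc + 1) := min_le_right _ _
        have h2 : ε / (Zc + 1) * Zc ≤ ε := by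
          rw [div_mul_eq_mul_div, div_le_iff₀ (by positivity)]
          nlinarith
        nlinarith [mul_le_mul_of_nonneg_right h1 hZc0]
      linarith
    have hsplit : (‖z - v‖ ^ 2 - ‖z - pv‖ ^ 2) / (2 * μ)
        = ‖z - v‖ ^ 2 / (2 * μ) - ‖z - pv‖ ^ 2 / (2 * μ) := by ring
    linarith [hlim]
  have growth2 : ∀ v z : Esp n, 2 * μ * g (p v) + (‖p v - v‖ ^ 2 + ‖z - p v‖ ^ 2)
      ≤ 2 * μ * g z + ‖z - v‖ ^ 2 := by
    intro v z
    have h := growth v z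
    have h' : g (p v) + (‖p v - v‖ ^ 2 + ‖z - p v‖ ^ 2) / (2 * μ)
        ≤ g z + ‖z - v‖ ^ 2 / (2 * μ) := by
      have e : (‖p v - v‖ ^ 2 + ‖z - p v‖ ^ 2) / (2 * μ)
          = ‖p v - v‖ ^ 2 / (2 * μ) + ‖z - p v‖ ^ 2 / (2 * μ) := by ring
      linarith [e]
    exact clear_div' h2μ h'
  -- firm nonexpansiveness
  have firm : ∀ v w : Esp n, ‖p w - p v‖ ^ 2 ≤ ⟪p w - p v, w - v⟫ := by
    intro v w
    have h1 := growth2 v (p w)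
    have h2 := growth2 w (p v)
    have e1 : ‖p w - v‖ ^ 2 = ‖p w‖ ^ 2 - 2 * ⟪p w, v⟫ + ‖v‖ ^ 2 := norm_sub_sq_real _ _
    have e2 : ‖p v - v‖ ^ 2 = ‖p v‖ ^ 2 - 2 * ⟪p v, v⟫ + ‖v‖ ^ 2 := norm_sub_sq_real _ _
    have e3 : ‖p v - w‖ ^ 2 = ‖p v‖ ^ 2 - 2 * ⟪p v, w⟫ + ‖w‖ ^ 2 := norm_sub_sq_real _ _
    have e4 : ‖p w - w‖ ^ 2 = ‖p w‖ ^ 2 - 2 * ⟪p w, w⟫ + ‖w‖ ^ 2 := norm_sub_sq_real _ _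
    have e5 : ‖p w - p v‖ ^ 2 = ‖p w‖ ^ 2 - 2 * ⟪p w, p v⟫ + ‖p v‖ ^ 2 := norm_sub_sq_real _ _
    have e6 : ‖p v - p w‖ ^ 2 = ‖p v‖ ^ 2 - 2 * ⟪p v, p w⟫ + ‖p w‖ ^ 2 := norm_sub_sq_real _ _
    have e7 : ⟪(p v : Esp n), p w⟫ = ⟪p w, p v⟫ := real_inner_comm _ _
    have e8 : ⟪p w - p v, w - v⟫ = ⟪p w, w⟫ - ⟪p w, v⟫ - ⟪p v, w⟫ + ⟪p v, v⟫ := by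
      rw [inner_sub_left, inner_sub_right, inner_sub_right]; ring
    linarith
  -- the Moreau gradient G
  set G : Esp n → Esp n := fun v => μ⁻¹ • (v - p v) with hGdef
  have hGsub : ∀ v w : Esp n, G w - G v = μ⁻¹ • ((w - v) - (p w - p v)) := by
    intro v w
    simp only [hGdef]
    module
  have hGinner : ∀ v w : Esp n, ⟪G v, w⟫ = μ⁻¹ * ⟪v - p v, w⟫ := by
    intro v w
    simp only [hGdef]
    exact real_inner_smul_left _ _ _
  have Glip : ∀ v w : Esp n, ‖G w - G v‖ ≤ μ⁻¹ * ‖w - v‖ := by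
    intro v w
    have hsq : ‖G w - G v‖ ^ 2 ≤ (μ⁻¹ * ‖w - v‖) ^ 2 := by
      rw [hGsub, norm_smul, Real.norm_eq_abs, abs_of_pos (inv_pos.mpr hμ0), mul_pow, mul_pow]
      have h1 : ‖(w - v) - (p w - p v)‖ ^ 2 ≤ ‖w - v‖ ^ 2 := by
        have ea : ‖(w - v) - (p w - p v)‖ ^ 2
            = ‖w - v‖ ^ 2 - 2 * ⟪w - v, p w - p v⟫ + ‖p w - p v‖ ^ 2 := norm_sub_sq_real _ _
        have eb : ⟪w - v, p w - p v⟫ = ⟪p w - p v, w - v⟫ := real_inner_comm _ _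
        nlinarith [firm v w]
      nlinarith [sq_nonneg (μ⁻¹ : ℝ)]
    nlinarith [norm_nonneg (G w - G v),
      mul_nonneg (inv_pos.mpr hμ0).le (norm_nonneg (w - v)), hsq]
  -- subgradient inequality and upper quadratic bound for M
  have hMsub : ∀ v w : Esp n, M v + ⟪G v, w - v⟫ ≤ M w := by
    intro v w
    rw [hMv v, hMv w, hGinner]
    refine le_of_mul_le_mul_left ?_ h2μ
    have c1 : 2 * μ * (‖p v - v‖ ^ 2 / (2 * μ)) = ‖p v - v‖ ^ 2 :=
      mul_div_cancel₀ _ h2μ.ne'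
    have c2 : 2 * μ * (μ⁻¹ * ⟪v - p v, w - v⟫) = 2 * ⟪v - p v, w - v⟫ := by
      field_simp
    have c3 : 2 * μ * (‖p w - w‖ ^ 2 / (2 * μ)) = ‖p w - w‖ ^ 2 :=
      mul_div_cancel₀ _ h2μ.ne'
    have h1 := growth2 v (p w)
    have t1 := two_inner_le (p w - p v) (w - v)
    have E1 : ‖p w - v‖ ^ 2 = ‖p w‖ ^ 2 - 2 * ⟪p w, v⟫ + ‖v‖ ^ 2 := norm_sub_sq_real _ _
    have E2 : ‖p w - w‖ ^ 2 = ‖p w‖ ^ 2 - 2 * ⟪p w, w⟫ + ‖w‖ ^ 2 := norm_sub_sq_real _ _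
    have E3 : ‖p w - p v‖ ^ 2 = ‖p w‖ ^ 2 - 2 * ⟪p w, p v⟫ + ‖p v‖ ^ 2 := norm_sub_sq_real _ _
    have E4 : ‖w - v‖ ^ 2 = ‖w‖ ^ 2 - 2 * ⟪w, v⟫ + ‖v‖ ^ 2 := norm_sub_sq_real _ _
    have E5 : ⟪v - p v, w - v⟫ = ⟪v, w⟫ - ⟪v, v⟫ - ⟪p v, w⟫ + ⟪p v, v⟫ := by
      rw [inner_sub_left, inner_sub_right, inner_sub_right]; ring
    have E6 : ⟪p w - p v, w - v⟫ = ⟪p w, w⟫ - ⟪p w, v⟫ - ⟪p v, w⟫ + ⟪p v, v⟫ := by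
      rw [inner_sub_left, inner_sub_right, inner_sub_right]; ring
    have E7 : ⟪(v : Esp n), w⟫ = ⟪w, v⟫ := real_inner_comm _ _
    have E8 : ⟪(v : Esp n), v⟫ = ‖v‖ ^ 2 := real_inner_self_eq_norm_sq _
    nlinarith [h1, t1, c1, c2, c3]
  have hMup : ∀ v w : Esp n, M w ≤ M v + ⟪G v, w - v⟫ + ‖w - v‖ ^ 2 / (2 * μ) := by
    intro v w
    refine (hMle v w).trans ?_
    rw [hMv v, hGinner]
    have Ee : ‖p v - w‖ ^ 2 = ‖p v - v‖ ^ 2 + 2 * ⟪v - p v, w - v⟫ + ‖w - v‖ ^ 2 := by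
      have a1 : ‖p v - w‖ ^ 2 = ‖p v‖ ^ 2 - 2 * ⟪p v, w⟫ + ‖w‖ ^ 2 := norm_sub_sq_real _ _
      have a2 : ‖p v - v‖ ^ 2 = ‖p v‖ ^ 2 - 2 * ⟪p v, v⟫ + ‖v‖ ^ 2 := norm_sub_sq_real _ _
      have a3 : ‖w - v‖ ^ 2 = ‖w‖ ^ 2 - 2 * ⟪w, v⟫ + ‖v‖ ^ 2 := norm_sub_sq_real _ _
      have a4 : ⟪v - p v, w - v⟫ = ⟪v, w⟫ - ⟪v, v⟫ - ⟪p v, w⟫ + ⟪p v, v⟫ := by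
        rw [inner_sub_left, inner_sub_right, inner_sub_right]; ring
      have a5 : ⟪(v : Esp n), w⟫ = ⟪w, v⟫ := real_inner_comm _ _
      have a6 : ⟪(v : Esp n), v⟫ = ‖v‖ ^ 2 := real_inner_self_eq_norm_sq _
      linarith
    rw [Ee]
    have c2 : 2 * ⟪v - p v, w - v⟫ / (2 * μ) = μ⁻¹ * ⟪v - p v, w - v⟫ := by
      field_simp
    have e : (‖p v - v‖ ^ 2 + 2 * ⟪v - p v, w - v⟫ + ‖w - v‖ ^ 2) / (2 * μ)
        = ‖p v - v‖ ^ 2 / (2 * μ) + 2 * ⟪v - p v, w - v⟫ / (2 * μ)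
          + ‖w - v‖ ^ 2 / (2 * μ) := by ring
    rw [e, c2]
    ring_nf
    linarith
  have hMgrad : ∀ v : Esp n, HasGradientAt M (G v) v := by
    intro v
    apply hasGradientAt_of_sq_bound M (G v) v (1/(2*μ))
    intro w
    have h1 := hMsub v w
    have h2 := hMup v w
    rw [abs_le]
    have hpos : 0 ≤ 1/(2*μ) * ‖w - v‖ ^ 2 := by positivity
    have e : ‖w - v‖ ^ 2 / (2 * μ) = 1/(2*μ) * ‖w - v‖ ^ 2 := by ring
    constructor
    · linarith
    · linarith
  -- the smooth quadratic part
  have hhexp : ∀ x d : Esp n, (f (x + d) - μ/2 * ‖Q (x + d) + q‖ ^ 2) =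
      (f x - μ/2 * ‖Q x + q‖ ^ 2) + ⟪S (Q x + q), d⟫
        + ((1/2) * ⟪d, Q d⟫ - μ/2 * ‖Q d‖ ^ 2) := by
    intro x d
    have h1 := hfexp x d
    have h2 : Q (x + d) + q = (Q x + q) + Q d := by rw [map_add]; abel
    have h3 : ‖(Q x + q) + Q d‖ ^ 2
        = ‖Q x + q‖ ^ 2 + 2 * ⟪Q x + q, Q d⟫ + ‖Q d‖ ^ 2 := norm_add_sq_real _ _
    have h4 : ⟪S (Q x + q), d⟫ = ⟪Q x + q, d⟫ - μ * ⟪Q x + q, Q d⟫ := by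
      rw [hSapp, inner_sub_left, real_inner_smul_left, hQsym]
    rw [h1, h2, h3, h4]
    ring
  have hrpos : ∀ d : Esp n, 0 ≤ (1/2) * ⟪d, Q d⟫ - μ/2 * ‖Q d‖ ^ 2 := by
    intro d
    have h1 := hQnorm2 d
    have h2 := hQpsd d
    nlinarith [mul_le_mul_of_nonneg_left h1 hμ0.le]
  have hrbound : ∀ d : Esp n, |(1/2) * ⟪d, Q d⟫ - μ/2 * ‖Q d‖ ^ 2| ≤ (L/2) * ‖d‖ ^ 2 := by
    intro d
    rw [abs_of_nonneg (hrpos d)]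
    have h1 := hQL d
    nlinarith [sq_nonneg ‖Q d‖, hμ0]
  have hhgrad : ∀ x : Esp n, HasGradientAt (fun y => f y - μ/2 * ‖Q y + q‖ ^ 2)
      (S (Q x + q)) x := by
    intro x
    apply hasGradientAt_of_sq_bound _ _ _ (L/2)
    intro y
    have hd : y = x + (y - x) := by abel
    have h1 : f y - μ/2 * ‖Q y + q‖ ^ 2 = (f x - μ/2 * ‖Q x + q‖ ^ 2)
        + ⟪S (Q x + q), y - x⟫ + ((1/2) * ⟪y - x, Q (y - x)⟫ - μ/2 * ‖Q (y - x)‖ ^ 2) := by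
      conv_lhs => rw [hd]
      exact hhexp x (y - x)
    have e2 : (f y - μ/2 * ‖Q y + q‖ ^ 2) - (f x - μ/2 * ‖Q x + q‖ ^ 2)
        - ⟪S (Q x + q), y - x⟫
        = (1/2) * ⟪y - x, Q (y - x)⟫ - μ/2 * ‖Q (y - x)‖ ^ 2 := by rw [h1]; ring
    rw [e2]
    exact hrbound (y - x)
  -- gradient of M ∘ T
  have hTfd : ∀ x : Esp n, HasFDerivAt T S x := by
    intro x
    have hTeq : T = fun y => S y - μ • q := by
      funext y
      simp only [hTdef]
      rw [hSapp, smul_add]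
      abel
    rw [hTeq]
    exact (S.hasFDerivAt).sub_const _
  have hMT : ∀ x : Esp n, HasGradientAt (fun y => M (T y)) (S (G (T x))) x := by
    intro x
    have h2 := (hMgrad (T x)).hasFDerivAt
    have h3 := h2.comp x (hTfd x)
    have heq : (InnerProductSpace.toDual ℝ (Esp n) (G (T x))).comp S
        = InnerProductSpace.toDual ℝ (Esp n) (S (G (T x))) := by
      ext z
      simp only [ContinuousLinearMap.comp_apply, InnerProductSpace.toDual_apply_apply]
      exact (hSsym (G (T x)) z).symm
    rw [hasGradientAt_iff_hasFDerivAt, ← heq]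
    exact h3
  have hFeq : ∀ z : Esp n, Fμ z = (f z - μ/2 * ‖Q z + q‖ ^ 2) + M (T z) := by
    intro z
    rw [hFμ z, hgradf z]
    simp only [hTdef]
    ring
  have hFgrad : ∀ x : Esp n, HasGradientAt Fμ (S (Q x + q) + S (G (T x))) x := by
    intro x
    have hFeq2 : Fμ = fun z => (f z - μ/2 * ‖Q z + q‖ ^ 2) + M (T z) := funext hFeq
    rw [hFeq2, hasGradientAt_iff_hasFDerivAt, map_add]
    exact ((hhgrad x).hasFDerivAt).add ((hMT x).hasFDerivAt)
  have hgradFμ : ∀ x : Esp n, gradient Fμ x = S (Q x + q) + S (G (T x)) :=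
    fun x => (hFgrad x).gradient
  refine ⟨?_, fun x => (hFgrad x).differentiableAt, ?_⟩
  · -- convexity
    apply convexOn_of_subgrad Fμ (fun x => S (Q x + q) + S (G (T x)))
    intro x y
    rw [hFeq x, hFeq y, inner_add_left]
    have hA : (f x - μ/2 * ‖Q x + q‖ ^ 2) + ⟪S (Q x + q), y - x⟫
        ≤ f y - μ/2 * ‖Q y + q‖ ^ 2 := by
      have hd : y = x + (y - x) := by abel
      have h1 : f y - μ/2 * ‖Q y + q‖ ^ 2 = (f x - μ/2 * ‖Q x + q‖ ^ 2)
          + ⟪S (Q x + q), y - x⟫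
          + ((1/2) * ⟪y - x, Q (y - x)⟫ - μ/2 * ‖Q (y - x)‖ ^ 2) := by
        conv_lhs => rw [hd]
        exact hhexp x (y - x)
      have h2 := hrpos (y - x)
      linarith [h1]
    have hB : M (T x) + ⟪S (G (T x)), y - x⟫ ≤ M (T y) := by
      have h2 : ⟪S (G (T x)), y - x⟫ = ⟪G (T x), T y - T x⟫ := by
        rw [hSsym, ← hTd y x]
      rw [h2]
      exact hMsub (T x) (T y)
    linarith
  · -- gradient Lipschitz
    intro x y
    rw [hgradFμ x, hgradFμ y, hLt]
    have e1 : Q x + q - (Q y + q) = Q (x - y) := by rw [map_sub]; abel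
    have e0 : (S (Q x + q) + S (G (T x))) - (S (Q y + q) + S (G (T y)))
        = S (Q (x - y)) + S (G (T x) - G (T y)) := by
      calc (S (Q x + q) + S (G (T x))) - (S (Q y + q) + S (G (T y)))
          = (S (Q x + q) - S (Q y + q)) + (S (G (T x)) - S (G (T y))) := by abel
        _ = S (Q (x - y)) + S (G (T x) - G (T y)) := by rw [← map_sub S, ← map_sub S, e1]
    rw [e0]
    have hd0 : (0:ℝ) ≤ ‖x - y‖ := norm_nonneg _
    have hinvpos : (0:ℝ) < μ⁻¹ := inv_pos.mpr hμ0
    have b1 : ‖S (Q (x - y))‖ ≤ (1 - μ * m) * (L * ‖x - y‖) := by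
      refine (hSnorm _).trans ?_
      exact mul_le_mul_of_nonneg_left (hQop (x - y)) h1m.le
    have b2 : ‖S (G (T x) - G (T y))‖ ≤ (1 - μ * m) * (μ⁻¹ * ((1 - μ * m) * ‖x - y‖)) := by
      refine (hSnorm _).trans ?_
      have h1 := Glip (T y) (T x)
      have h3 : ‖T x - T y‖ ≤ (1 - μ * m) * ‖x - y‖ := by rw [hTd x y]; exact hSnorm _
      have h4 : ‖G (T x) - G (T y)‖ ≤ μ⁻¹ * ((1 - μ * m) * ‖x - y‖) := by
        refine h1.trans ?_
        exact mul_le_mul_of_nonneg_left h3 hinvpos.le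
      exact mul_le_mul_of_nonneg_left h4 h1m.le
    have tri := norm_add_le (S (Q (x - y))) (S (G (T x) - G (T y)))
    have hinv : μ⁻¹ * μ = 1 := inv_mul_cancel₀ hμ'
    have hLb : L ≤ μ⁻¹ * (1 + μ * m) := by
      have hb : μ * L ≤ 1 + μ * m := by nlinarith [mul_nonneg hμ0.le hm]
      have h := mul_le_mul_of_nonneg_left hb hinvpos.le
      calc L = μ⁻¹ * (μ * L) := by rw [← mul_assoc, hinv, one_mul]
        _ ≤ μ⁻¹ * (1 + μ * m) := h
    have hnum : ∀ nd : ℝ, 0 ≤ nd → (1 - μ * m) * (L * nd)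
        + (1 - μ * m) * (μ⁻¹ * ((1 - μ * m) * nd))
        ≤ 2 * (1 - μ * m) / μ * nd := by
      intro nd hnd
      have hdiv : 2 * (1 - μ * m) / μ = 2 * (1 - μ * m) * μ⁻¹ := by rw [div_eq_mul_inv]
      rw [hdiv]
      have hc : (0:ℝ) ≤ (1 - μ * m) * nd := mul_nonneg h1m.le hnd
      nlinarith [mul_le_mul_of_nonneg_left hLb hc, hc, hnd, h1m]
    linarith [tri, b1, b2, hnum ‖x - y‖ hd0]
end
end

section
/- Let f(x) = (1/2)⟨x, Qx⟩ + ⟨q, x⟩ with Q symmetric positive semidefinite with smallest eigenvalue m ≥ 0 and largest eigenvalue L > 0, let g : ℝⁿ → ℝ be convex and lower semicontinuous, and let μ ∈ (0, 1/L). Set m̃ = min{(1 − μm)m, (1 − μL)L}. Then the forward–backward envelope F_μ is m̃-strongly convex, i.e., F_μ − (m̃/2)‖·‖² is convex. -/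
open Set RealInnerProductSpace

noncomputable section

lemma moreau_convexOn {E : Type*} [NormedAddCommGroup E] [InnerProductSpace ℝ E]
    (g : E → ℝ) (μ : ℝ) (hμ : 0 < μ) (hg : ConvexOn ℝ univ g)
    (hbdd : ∀ v : E, BddBelow (Set.range fun z => g z + ‖z - v‖ ^ 2 / (2 * μ))) :
    ConvexOn ℝ univ (fun v => ⨅ z : E, (g z + ‖z - v‖ ^ 2 / (2 * μ))) := by
  refine ⟨convex_univ, ?_⟩
  intro v _ w _ a b ha hb hab
  have hb1 : b = 1 - a := by linarith
  subst hb1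
  simp only [smul_eq_mul]
  refine le_of_forall_gt_imp_ge_of_dense fun c hc => ?_
  set Iv := (⨅ z : E, (g z + ‖z - v‖ ^ 2 / (2 * μ))) with hIv
  set Iw := (⨅ z : E, (g z + ‖z - w‖ ^ 2 / (2 * μ))) with hIw
  set ε : ℝ := c - (a * Iv + (1 - a) * Iw) with hε
  have hε0 : 0 < ε := by simp only [hε]; linarith
  obtain ⟨z₁, hz₁⟩ := exists_lt_of_ciInf_lt
    (lt_add_of_pos_right Iv (by linarith : (0:ℝ) < ε/2))
  obtain ⟨z₂, hz₂⟩ := exists_lt_of_ciInf_lt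
    (lt_add_of_pos_right Iw (by linarith : (0:ℝ) < ε/2))
  have key : (⨅ z : E, (g z + ‖z - (a•v+(1-a)•w)‖ ^ 2 / (2 * μ)))
      ≤ a*(g z₁ + ‖z₁ - v‖ ^ 2 / (2*μ)) + (1-a)*(g z₂ + ‖z₂ - w‖ ^ 2 / (2*μ)) := by
    refine le_trans (ciInf_le (hbdd _) (a•z₁+(1-a)•z₂)) ?_
    have hgz : g (a•z₁+(1-a)•z₂) ≤ a * g z₁ + (1-a) * g z₂ :=
      hg.2 trivial trivial ha hb hab
    have hnorm : ‖(a•z₁+(1-a)•z₂) - (a•v+(1-a)•w)‖ ≤ a*‖z₁ - v‖ + (1-a)*‖z₂ - w‖ := by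
      have hid : (a•z₁+(1-a)•z₂) - (a•v+(1-a)•w) = a•(z₁-v) + (1-a)•(z₂-w) := by module
      rw [hid]
      refine (norm_add_le _ _).trans ?_
      rw [norm_smul, norm_smul]
      simp [abs_of_nonneg ha, abs_of_nonneg hb, Real.norm_eq_abs]
    have hsq : ‖(a•z₁+(1-a)•z₂) - (a•v+(1-a)•w)‖ ^ 2 ≤ a*‖z₁-v‖^2 + (1-a)*‖z₂-w‖^2 := by
      have h1 : (a*‖z₁-v‖ + (1-a)*‖z₂-w‖)^2 ≤ a*‖z₁-v‖^2 + (1-a)*‖z₂-w‖^2 := by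
        nlinarith [mul_nonneg (mul_nonneg ha hb) (sq_nonneg (‖z₁-v‖ - ‖z₂-w‖))]
      calc ‖(a•z₁+(1-a)•z₂) - (a•v+(1-a)•w)‖ ^ 2
          ≤ (a*‖z₁ - v‖ + (1-a)*‖z₂ - w‖)^2 := by
            apply pow_le_pow_left₀ (norm_nonneg _) hnorm
        _ ≤ _ := h1
    have hdiv : ‖(a•z₁+(1-a)•z₂) - (a•v+(1-a)•w)‖ ^ 2 / (2*μ)
        ≤ (a*‖z₁-v‖^2 + (1-a)*‖z₂-w‖^2) / (2*μ) := by gcongr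
    have h2μ : (0:ℝ) < 2*μ := by linarith
    have hsplit : (a*‖z₁-v‖^2 + (1-a)*‖z₂-w‖^2) / (2*μ)
        = a*(‖z₁-v‖^2/(2*μ)) + (1-a)*(‖z₂-w‖^2/(2*μ)) := by ring
    linarith
  have hmono : a * (g z₁ + ‖z₁ - v‖ ^ 2 / (2*μ)) + (1-a) * (g z₂ + ‖z₂ - w‖ ^ 2 / (2*μ))
      ≤ a * (Iv + ε/2) + (1-a) * (Iw + ε/2) := by
    have := mul_le_mul_of_nonneg_left hz₁.le ha
    have := mul_le_mul_of_nonneg_left hz₂.le hb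
    linarith
  have heq : a * (Iv + ε/2) + (1-a) * (Iw + ε/2) = a * Iv + (1-a) * Iw + ε/2 := by ring
  calc (⨅ z : E, (g z + ‖z - (a•v+(1-a)•w)‖ ^ 2 / (2 * μ))) ≤ _ := key
    _ ≤ a * (Iv + ε/2) + (1-a) * (Iw + ε/2) := hmono
    _ ≤ c := by rw [heq]; simp only [hε]; linarith

lemma convex_linear_minorant {E : Type*} [NormedAddCommGroup E] [InnerProductSpace ℝ E]
    [FiniteDimensional ℝ E] (g : E → ℝ) (hg : ConvexOn ℝ univ g) :
    ∃ K : ℝ, 0 ≤ K ∧ ∀ z : E, -K - K * ‖z‖ ≤ g z := by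
  have hcont : Continuous g := by
    have := hg.continuousOn isOpen_univ
    rwa [continuousOn_univ] at this
  obtain ⟨C, hC⟩ := (isCompact_closedBall (0:E) 1).exists_bound_of_continuousOn
    hcont.continuousOn
  have hC0 : 0 ≤ C := le_trans (norm_nonneg _) (hC 0 (by simp))
  refine ⟨2*C, by linarith, fun z => ?_⟩
  rcases le_total ‖z‖ 1 with hz | hz
  · have := hC z (by simpa [Metric.mem_closedBall] using hz)
    have : -C ≤ g z := neg_le_of_abs_le (by simpa [Real.norm_eq_abs] using this)
    nlinarith [norm_nonneg z]
  · have hz0 : 0 < ‖z‖ := by linarith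
    set t : ℝ := ‖z‖⁻¹ with ht
    have ht0 : 0 < t := by positivity
    have ht1 : t ≤ 1 := by
      rw [ht, inv_le_one_iff₀]; right; exact hz
    have htz : t * ‖z‖ = 1 := inv_mul_cancel₀ hz0.ne'
    have hcv := hg.2 (mem_univ z) (mem_univ (0:E)) ht0.le (by linarith : (0:ℝ) ≤ 1 - t)
      (by ring)
    have hu : t • z + (1-t) • (0:E) = t • z := by simp
    rw [hu] at hcv
    simp only [smul_eq_mul] at hcv
    have huball : t • z ∈ Metric.closedBall (0:E) 1 := by
      simp [norm_smul, Real.norm_eq_abs, abs_of_pos ht0, htz]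
    have hgu := hC _ huball
    have hgu' : -C ≤ g (t • z) := neg_le_of_abs_le (by simpa [Real.norm_eq_abs] using hgu)
    have hg0 := hC 0 (by simp)
    have hg0' : g 0 ≤ C := le_of_abs_le (by simpa [Real.norm_eq_abs] using hg0)
    have h1 : -2*C ≤ t * g z := by nlinarith
    have := mul_le_mul_of_nonneg_left h1 hz0.le
    have h2 : ‖z‖ * (t * g z) = g z := by
      rw [← mul_assoc, mul_comm ‖z‖ t, htz, one_mul]
    nlinarith

lemma moreau_bddBelow {E : Type*} [NormedAddCommGroup E] [InnerProductSpace ℝ E]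
    (g : E → ℝ) (μ K : ℝ) (hμ : 0 < μ) (hK : 0 ≤ K) (hKg : ∀ z : E, -K - K * ‖z‖ ≤ g z)
    (v : E) : BddBelow (Set.range fun z => g z + ‖z - v‖ ^ 2 / (2 * μ)) := by
  refine ⟨-K - K*‖v‖ - μ*K^2/2, ?_⟩
  rintro r ⟨z, rfl⟩
  simp only
  have h1 : ‖z‖ ≤ ‖v‖ + ‖z - v‖ := by
    have := norm_sub_norm_le z v; linarith
  have h2 : K*‖z-v‖ - μ*K^2/2 ≤ ‖z-v‖^2/(2*μ) := by
    rw [le_div_iff₀ (by positivity)]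
    nlinarith [sq_nonneg (‖z-v‖ - μ*K)]
  have h3 := hKg z
  have h4 := mul_le_mul_of_nonneg_left h1 hK
  linarith

lemma quad_gradient {E : Type*} [NormedAddCommGroup E] [InnerProductSpace ℝ E]
    [CompleteSpace E] (Q : E →L[ℝ] E) (q : E)
    (hQsym : ∀ x y : E, ⟪Q x, y⟫ = ⟪x, Q y⟫)
    (f : E → ℝ) (hf : ∀ x, f x = (1 / 2) * ⟪x, Q x⟫ + ⟪q, x⟫) (x : E) :
    gradient f x = Q x + q := by
  have h1 : HasFDerivAt (fun y : E => ⟪y, Q y⟫)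
      ((fderivInnerCLM ℝ (x, Q x)).comp ((ContinuousLinearMap.id ℝ E).prod Q)) x :=
    (hasFDerivAt_id x).inner ℝ (Q.hasFDerivAt)
  have h2 : HasFDerivAt f ((1/2 : ℝ) • ((fderivInnerCLM ℝ (x, Q x)).comp
      ((ContinuousLinearMap.id ℝ E).prod Q)) + innerSL ℝ q) x := by
    have hf' : f = fun y => (1/2 : ℝ) * ⟪y, Q y⟫ + ⟪q, y⟫ := funext hf
    rw [hf']
    exact (h1.const_mul (1/2)).add ((innerSL ℝ q).hasFDerivAt)
  have h3 : ((1/2 : ℝ) • ((fderivInnerCLM ℝ (x, Q x)).comp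
      ((ContinuousLinearMap.id ℝ E).prod Q)) + innerSL ℝ q)
      = (InnerProductSpace.toDual ℝ E) (Q x + q) := by
    apply ContinuousLinearMap.ext; intro v
    simp only [ContinuousLinearMap.add_apply, ContinuousLinearMap.smul_apply,
      ContinuousLinearMap.comp_apply, ContinuousLinearMap.prod_apply,
      ContinuousLinearMap.coe_id', id_eq, fderivInnerCLM_apply,
      InnerProductSpace.toDual_apply_apply, innerSL_apply_apply, inner_add_left, smul_eq_mul]
    rw [← hQsym x v, real_inner_comm (Q x) v]
    ring
  rw [h3] at h2
  exact (hasGradientAt_iff_hasFDerivAt.mpr h2).gradient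

lemma spectral_key {E : Type*} [NormedAddCommGroup E] [InnerProductSpace ℝ E]
    (Q : E →L[ℝ] E) (m L μ mt : ℝ)
    (hQsym : ∀ x y : E, ⟪Q x, y⟫ = ⟪x, Q y⟫)
    (hQm : ∀ x : E, m * ‖x‖ ^ 2 ≤ ⟪x, Q x⟫)
    (hQL : ∀ x : E, ⟪x, Q x⟫ ≤ L * ‖x‖ ^ 2)
    (hμ0 : 0 < μ)
    (hmt : mt = min ((1 - μ * m) * m) ((1 - μ * L) * L)) (hmL : m ≤ L)
    (d : E) : mt * ‖d‖ ^ 2 ≤ ⟪d, Q d⟫ - μ * ‖Q d‖ ^ 2 := by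
  have hpolar : ∀ x y : E,
      4 * ⟪x, Q y⟫ ≤ (L - m) * (‖x‖^2 + ‖y‖^2) + 2*(L+m)*⟪x, y⟫ := by
    intro x y
    have c2 : ⟪y, Q x⟫ = ⟪x, Q y⟫ := by rw [real_inner_comm, hQsym]
    have p1 := hQL (x+y)
    have p2 := hQm (x-y)
    have e1 : ⟪x+y, Q (x+y)⟫ = ⟪x, Q x⟫ + ⟪y, Q y⟫ + 2*⟪x, Q y⟫ := by
      simp only [map_add, inner_add_left, inner_add_right, c2]; ring
    have e2 : ⟪x-y, Q (x-y)⟫ = ⟪x, Q x⟫ + ⟪y, Q y⟫ - 2*⟪x, Q y⟫ := by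
      simp only [map_sub, inner_sub_left, inner_sub_right, c2]; ring
    have n1 : ‖x+y‖^2 = ‖x‖^2 + 2*⟪x,y⟫ + ‖y‖^2 := norm_add_sq_real x y
    have n2 : ‖x-y‖^2 = ‖x‖^2 - 2*⟪x,y⟫ + ‖y‖^2 := norm_sub_sq_real x y
    rw [e1, n1] at p1
    rw [e2, n2] at p2
    linarith
  have hQnorm : ‖Q d‖^2 ≤ (m+L)*⟪d, Q d⟫ - m*L*‖d‖^2 := by
    obtain ⟨c, hc⟩ : ∃ c : ℝ, c = (m+L)/2 := ⟨_, rfl⟩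
    obtain ⟨w, hw⟩ : ∃ w : E, w = Q d - c • d := ⟨_, rfl⟩
    have hwd : ⟪w, d⟫ = ⟪d, Q d⟫ - c*‖d‖^2 := by
      rw [hw, inner_sub_left, hQsym, real_inner_smul_left, real_inner_self_eq_norm_sq]
    have hwQd : ⟪w, Q d⟫ = ‖Q d‖^2 - c*⟪d, Q d⟫ := by
      rw [hw, inner_sub_left, real_inner_self_eq_norm_sq, real_inner_smul_left]
    have hQdw : ‖Q d‖^2 = ‖w‖^2 + 2*c*⟪w, d⟫ + c^2*‖d‖^2 := by
      have hqd : Q d = w + c • d := by rw [hw]; abel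
      calc ‖Q d‖^2 = ‖w + c • d‖^2 := by rw [← hqd]
        _ = ‖w‖^2 + 2*⟪w, c • d⟫ + ‖c • d‖^2 := norm_add_sq_real w (c • d)
        _ = ‖w‖^2 + 2*c*⟪w, d⟫ + c^2*‖d‖^2 := by
            rw [real_inner_smul_right, norm_smul, mul_pow, Real.norm_eq_abs, sq_abs]
            ring
    have hwle : ‖w‖^2 ≤ ((L-m)/2)^2 * ‖d‖^2 := by
      by_cases hw0 : w = 0
      · simp [hw0]; positivity
      · have hwn : 0 < ‖w‖ := norm_pos_iff.mpr hw0
        have hd0 : d ≠ 0 := by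
          rintro rfl; apply hw0; rw [hw]; simp
        have hdn : 0 < ‖d‖ := norm_pos_iff.mpr hd0
        obtain ⟨t, htd⟩ : ∃ t : ℝ, t = ‖d‖/‖w‖ := ⟨_, rfl⟩
        have ht0 : 0 < t := by rw [htd]; positivity
        have htw : t * ‖w‖ = ‖d‖ := by rw [htd]; exact div_mul_cancel₀ _ hwn.ne'
        have hp := hpolar (t • w) d
        rw [real_inner_smul_left, real_inner_smul_left] at hp
        have hnt : ‖t • w‖^2 = ‖d‖^2 := by
          rw [norm_smul, mul_pow, Real.norm_eq_abs, sq_abs]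
          nlinarith
        rw [hnt] at hp
        have hcy : c*⟪w, d⟫ = c*⟪d, Q d⟫ - c*(c*‖d‖^2) := by rw [hwd]; ring
        have hinner : ⟪w, Q d⟫ - c*⟪w, d⟫ = ‖w‖^2 := by
          linarith [hwQd, hcy, hQdw]
        have h5 : t * (⟪w, Q d⟫ - c*⟪w, d⟫) = t * ‖w‖^2 := by rw [hinner]
        have key : 4 * (t * ‖w‖^2) ≤ 2*(L-m)*‖d‖^2 := by
          simp only [hc] at hp h5 ⊢
          nlinarith [hp, h5]
        have htww : t * ‖w‖^2 = ‖d‖ * ‖w‖ := by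
          rw [htd]; field_simp
        have hwd2 : ‖w‖ * ‖d‖ ≤ ((L-m)/2) * ‖d‖^2 := by
          rw [htww] at key; linarith
        have h6 : ‖w‖ ≤ (L-m)/2 * ‖d‖ := by
          have h7 : ‖w‖ * ‖d‖ ≤ ((L-m)/2 * ‖d‖) * ‖d‖ := by linarith [hwd2]
          exact le_of_mul_le_mul_right h7 hdn
        nlinarith [h6, norm_nonneg w]
    have hcy2 : (m+L)*⟪w, d⟫ = (m+L)*⟪d, Q d⟫ - (m+L)*(c*‖d‖^2) := by rw [hwd]; ring
    simp only [hc] at hQdw hcy2 hwle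
    linarith [hQdw, hcy2, hwle]
  have h3 := hQm d
  have h4 := hQL d
  have hP : (0:ℝ) ≤ ‖d‖^2 := sq_nonneg _
  rcases le_total (1 - μ*(m+L)) 0 with hcs | hcs
  · have hmt2 : mt ≤ (1-μ*L)*L := by rw [hmt]; exact min_le_right _ _
    linarith [mul_le_mul_of_nonneg_left hQnorm hμ0.le,
      mul_le_mul_of_nonpos_left h4 hcs,
      mul_le_mul_of_nonneg_right hmt2 hP]
  · have hmt1 : mt ≤ (1-μ*m)*m := by rw [hmt]; exact min_le_left _ _
    linarith [mul_le_mul_of_nonneg_left hQnorm hμ0.le,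
      mul_le_mul_of_nonneg_left h3 hcs,
      mul_le_mul_of_nonneg_right hmt1 hP]

/-- Lemma 2, forward–backward strong convexity: for a convex
quadratic `f`, the forward–backward envelope is
`m̃ = min{(1 - μm)m, (1 - μL)L}`-strongly convex. -/
theorem FB_envelope_strongly_convex_quadratic {n : ℕ}
    (Q : EuclideanSpace ℝ (Fin n) →L[ℝ] EuclideanSpace ℝ (Fin n))
    (q : EuclideanSpace ℝ (Fin n)) (g : EuclideanSpace ℝ (Fin n) → ℝ)
    (m L μ mt : ℝ)
    (hQsym : ∀ x y : EuclideanSpace ℝ (Fin n), ⟪Q x, y⟫ = ⟪x, Q y⟫)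
    (hm : 0 ≤ m) (hL : 0 < L)
    (hQm : ∀ x : EuclideanSpace ℝ (Fin n), m * ‖x‖ ^ 2 ≤ ⟪x, Q x⟫)
    (hQmmin : ∃ x : EuclideanSpace ℝ (Fin n), x ≠ 0 ∧ ⟪x, Q x⟫ = m * ‖x‖ ^ 2)
    (hQL : ∀ x : EuclideanSpace ℝ (Fin n), ⟪x, Q x⟫ ≤ L * ‖x‖ ^ 2)
    (hQLmax : ∃ x : EuclideanSpace ℝ (Fin n), x ≠ 0 ∧ ⟪x, Q x⟫ = L * ‖x‖ ^ 2)
    (f : EuclideanSpace ℝ (Fin n) → ℝ)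
    (hf : ∀ x, f x = (1 / 2) * ⟪x, Q x⟫ + ⟪q, x⟫)
    (hgconv : ConvexOn ℝ univ g) (hglsc : LowerSemicontinuous g)
    (hμ : μ ∈ Ioo 0 (1 / L))
    (hmt : mt = min ((1 - μ * m) * m) ((1 - μ * L) * L))
    (M : EuclideanSpace ℝ (Fin n) → ℝ)
    (hM : ∀ v, M v = ⨅ z : EuclideanSpace ℝ (Fin n), (g z + ‖z - v‖ ^ 2 / (2 * μ)))
    (Fμ : EuclideanSpace ℝ (Fin n) → ℝ)
    (hFμ : ∀ x, Fμ x = f x + M (x - μ • gradient f x) - μ / 2 * ‖gradient f x‖ ^ 2) :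
    ConvexOn ℝ univ (fun x => Fμ x - mt / 2 * ‖x‖ ^ 2) := by
  have hμ0 : 0 < μ := hμ.1
  have hmL : m ≤ L := by
    obtain ⟨x0, hx0, hx0e⟩ := hQLmax
    have h := hQm x0
    rw [hx0e] at h
    have hx0n : 0 < ‖x0‖ := norm_pos_iff.mpr hx0
    nlinarith [pow_pos hx0n 2]
  have hgrad : ∀ x, gradient f x = Q x + q := quad_gradient Q q hQsym f hf
  have hkey := spectral_key Q m L μ mt hQsym hQm hQL hμ0 hmt hmL
  obtain ⟨K, hK0, hKg⟩ := convex_linear_minorant g hgconv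
  have hbdd := moreau_bddBelow g μ K hμ0 hK0 hKg
  have hMconv : ConvexOn ℝ univ M := by
    have hMe : M = fun v => ⨅ z : EuclideanSpace ℝ (Fin n), (g z + ‖z - v‖ ^ 2 / (2 * μ)) :=
      funext hM
    rw [hMe]
    exact moreau_convexOn g μ hμ0 hgconv hbdd
  refine ⟨convex_univ, ?_⟩
  intro x _ y _ a b ha hb hab
  have hb1 : b = 1 - a := by linarith
  subst hb1
  simp only [smul_eq_mul, hFμ, hgrad, hf]
  have hT : a•x+(1-a)•y - μ • (Q (a•x+(1-a)•y) + q)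
      = a•(x - μ•(Q x + q)) + (1-a)•(y - μ•(Q y + q)) := by
    have hQe : Q (a•x+(1-a)•y) = a•Q x + (1-a)•Q y := by
      simp [map_add, map_smul]
    rw [hQe]; module
  rw [hT]
  have hMle := hMconv.2 (mem_univ (x - μ•(Q x + q))) (mem_univ (y - μ•(Q y + q))) ha hb hab
  simp only [smul_eq_mul] at hMle
  have hkd := hkey (x - y)
  have hkd2 := mul_le_mul_of_nonneg_left hkd (mul_nonneg ha hb)
  have c1 : ⟪y, x⟫ = ⟪x, y⟫ := real_inner_comm x y
  have c2 : ⟪y, Q x⟫ = ⟪x, Q y⟫ := by rw [real_inner_comm, hQsym]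
  have c4 : ⟪Q y, Q x⟫ = ⟪Q x, Q y⟫ := real_inner_comm (Q x) (Q y)
  have c5 : ⟪Q x, q⟫ = ⟪q, Q x⟫ := real_inner_comm q (Q x)
  have c6 : ⟪Q y, q⟫ = ⟪q, Q y⟫ := real_inner_comm q (Q y)
  simp only [← real_inner_self_eq_norm_sq] at hkd2 ⊢
  simp only [map_add, map_smul, map_sub, inner_add_left, inner_add_right,
    inner_sub_left, inner_sub_right, real_inner_smul_left, real_inner_smul_right,
    c1, c2, c4, c5, c6] at hkd2 ⊢
  linarith [hkd2, hMle]
end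
end

section
/- Let f(x) = (1/2)⟨x, Qx⟩ + ⟨q, x⟩ with Q symmetric positive semidefinite with smallest eigenvalue m ≥ 0 and largest eigenvalue L > 0, let g : ℝⁿ → ℝ be convex and lower semicontinuous, and let μ ∈ (0, 1/L). Set L̃ = (1 − μm)/(μ(1 + μm)²). Then the Douglas–Rachford envelope D_μ(z) = F_μ(prox_{μf}(z)) is convex and differentiable, and its gradient ∇D_μ is Lipschitz continuous with constant L̃. -/
open Set RealInnerProductSpace
noncomputable section

lemma discrim_aux {a b c : ℝ} (h : ∀ t : ℝ, 0 ≤ a + 2 * t * b + t ^ 2 * c) (hc : 0 ≤ c) :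
    b ^ 2 ≤ a * c := by
  rcases eq_or_lt_of_le hc with h0 | h0
  · by_cases hb : b = 0
    · have := h 0; simp at this; nlinarith
    · have ht := h (-(a + 1) / (2 * b))
      rw [← h0] at ht
      have e : a + 2 * (-(a + 1) / (2 * b)) * b + (-(a + 1) / (2 * b)) ^ 2 * 0 = -1 := by
        field_simp; ring
      rw [e] at ht; norm_num at ht
  · have ht := h (-b / c)
    have hc' : c ≠ 0 := ne_of_gt h0
    have e : a + 2 * (-b / c) * b + (-b / c) ^ 2 * c = (a * c - b ^ 2) / c := by
      field_simp; ring
    rw [e] at ht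
    have := (div_nonneg_iff.mp ht)
    rcases this with ⟨h1, _⟩ | ⟨_, h2⟩
    · linarith
    · linarith

variable {n : ℕ}
local notation "E" => EuclideanSpace ℝ (Fin n)

/-- Cauchy-Schwarz for a PSD symmetric operator. -/
lemma psd_cs (S : E →L[ℝ] E) (hsym : ∀ x y : E, ⟪S x, y⟫ = ⟪x, S y⟫)
    (hpsd : ∀ x : E, 0 ≤ ⟪x, S x⟫) (x y : E) :
    ⟪x, S y⟫ ^ 2 ≤ ⟪x, S x⟫ * ⟪y, S y⟫ := by
  have key : ∀ t : ℝ, 0 ≤ ⟪x, S x⟫ + 2 * t * ⟪x, S y⟫ + t ^ 2 * ⟪y, S y⟫ := by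
    intro t
    have h := hpsd (x + t • y)
    have e1 : ⟪y, S x⟫ = ⟪x, S y⟫ := by rw [← hsym x y, real_inner_comm]
    simp only [map_add, map_smul, inner_add_left, inner_add_right, real_inner_smul_left,
      real_inner_smul_right] at h
    rw [e1] at h
    nlinarith [h]
  exact discrim_aux key (hpsd y)

lemma psd_cocoercive (S : E →L[ℝ] E) (hsym : ∀ x y : E, ⟪S x, y⟫ = ⟪x, S y⟫)
    (hpsd : ∀ x : E, 0 ≤ ⟪x, S x⟫) (β : ℝ) (hβ0 : 0 ≤ β)
    (hβ : ∀ x : E, ⟪x, S x⟫ ≤ β * ‖x‖ ^ 2)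
    (x : E) : ‖S x‖ ^ 2 ≤ β * ⟪x, S x⟫ := by
  have h1 := psd_cs S hsym hpsd x (S x)
  have e1 : ⟪x, S (S x)⟫ = ‖S x‖ ^ 2 := by
    rw [← hsym x (S x), real_inner_comm, real_inner_self_eq_norm_sq]
  have h2 : ⟪S x, S (S x)⟫ ≤ β * ‖S x‖ ^ 2 := hβ (S x)
  rw [e1] at h1
  rcases eq_or_lt_of_le (sq_nonneg ‖S x‖) with h0 | h0
  · nlinarith [hpsd x]
  · nlinarith [mul_le_mul_of_nonneg_left h2 (hpsd x), h1, h0]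

lemma quad_hasGradient {φ : E → ℝ} {G : E → E} {C : ℝ} (hC : 0 < C)
    (h : ∀ z y : E, |φ y - φ z - ⟪G z, y - z⟫| ≤ C * ‖y - z‖ ^ 2) (z : E) :
    HasGradientAt φ (G z) z := by
  rw [hasGradientAt_iff_hasFDerivAt, hasFDerivAt_iff_isLittleO_nhds_zero]
  rw [Asymptotics.isLittleO_iff]
  intro c hc
  filter_upwards [Metric.ball_mem_nhds (0 : E) (div_pos hc hC)] with v hv
  have h1 := h z (z + v)
  simp only [add_sub_cancel_left] at h1
  have hv' : ‖v‖ < c / C := by simpa [Metric.mem_ball] using hv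
  have : C * ‖v‖ ^ 2 ≤ c * ‖v‖ := by
    rcases le_or_gt ‖v‖ 0 with h0 | h0
    · have : ‖v‖ = 0 := le_antisymm h0 (norm_nonneg v)
      rw [this]; ring_nf; simp
    · have h2 : ‖v‖ * C < c := (lt_div_iff₀ hC).mp hv'
      nlinarith [h2, norm_nonneg v]
  have e : (InnerProductSpace.toDual ℝ (EuclideanSpace ℝ (Fin n)) (G z)) v = ⟪G z, v⟫ :=
    InnerProductSpace.toDual_apply_apply
  rw [Real.norm_eq_abs]
  calc |φ (z + v) - φ z - (InnerProductSpace.toDual ℝ (EuclideanSpace ℝ (Fin n)) (G z)) v|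
      = |φ (z + v) - φ z - ⟪G z, v⟫| := by rw [e]
    _ ≤ C * ‖v‖ ^ 2 := h1
    _ ≤ c * ‖v‖ := this

lemma quad_twoside {φ : E → ℝ} {G : E → E} {C : ℝ} (hconv : ConvexOn ℝ univ φ)
    (h : ∀ z y : E, φ y - φ z - ⟪G z, y - z⟫ ≤ C * ‖y - z‖ ^ 2) (z y : E) :
    |φ y - φ z - ⟪G z, y - z⟫| ≤ C * ‖y - z‖ ^ 2 := by
  rw [abs_le]
  refine ⟨?_, h z y⟩
  -- midpoint trick : φ z ≤ ½ φ y + ½ φ (2z - y)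
  have hmid : φ z ≤ (1/2 : ℝ) * φ y + (1/2 : ℝ) * φ (z + (z - y)) := by
    have h2 := hconv.2 (mem_univ y) (mem_univ (z + (z - y)))
      (by norm_num : (0:ℝ) ≤ 1/2) (by norm_num : (0:ℝ) ≤ 1/2) (by norm_num)
    have e : (1/2 : ℝ) • y + (1/2 : ℝ) • (z + (z - y)) = z := by module
    rwa [e] at h2
  have h3 := h z (z + (z - y))
  have e1 : (z + (z - y)) - z = z - y := by abel
  rw [e1] at h3
  have e2 : ⟪G z, z - y⟫ = -⟪G z, y - z⟫ := by
    rw [← inner_neg_right]; congr 1; abel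
  have e3 : ‖z - y‖ = ‖y - z‖ := norm_sub_rev _ _
  rw [e2, e3] at h3
  linarith

lemma subgrad_of_quad {φ : E → ℝ} {G : E → E} {C : ℝ} (hconv : ConvexOn ℝ univ φ) (hC : 0 < C)
    (h : ∀ z y : E, φ y - φ z - ⟪G z, y - z⟫ ≤ C * ‖y - z‖ ^ 2) (z y : E) :
    ⟪G z, y - z⟫ ≤ φ y - φ z := by
  have key : ∀ t : ℝ, 0 < t → t ≤ 1 → ⟪G z, y - z⟫ - C * t * ‖y - z‖ ^ 2 ≤ φ y - φ z := by
    intro t ht0 ht1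
    have h2s := quad_twoside hconv h z (z + t • (y - z))
    rw [abs_le] at h2s
    have hlow := h2s.1
    have e1 : (z + t • (y - z)) - z = t • (y - z) := by abel
    rw [e1] at h2s hlow
    have e2 : ⟪G z, t • (y - z)⟫ = t * ⟪G z, y - z⟫ := real_inner_smul_right _ _ _
    have e3 : ‖t • (y - z)‖ ^ 2 = t ^ 2 * ‖y - z‖ ^ 2 := by
      rw [norm_smul, Real.norm_eq_abs, mul_pow, sq_abs]
    rw [e2, e3] at hlow
    -- hlow : -(C * (t^2 * ‖y-z‖^2)) ≤ φ (z + t•(y-z)) - φ z - t * ⟪G z, y-z⟫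
    have hconvt : φ (z + t • (y - z)) ≤ (1 - t) * φ z + t * φ y := by
      have h2 := hconv.2 (mem_univ z) (mem_univ y) (by linarith : (0:ℝ) ≤ 1 - t)
        (le_of_lt ht0) (by ring)
      have e : (1 - t) • z + t • y = z + t • (y - z) := by module
      rwa [e] at h2
    have := hlow
    nlinarith [hlow, hconvt, ht0]
  rcases eq_or_lt_of_le (sq_nonneg ‖y - z‖) with h0 | h0
  · have := key 1 one_pos le_rfl
    rw [← h0] at this; linarith
  · by_contra hcon
    push_neg at hcon
    set d := ⟪G z, y - z⟫ - (φ y - φ z) with hd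
    have hd0 : 0 < d := sub_pos.mpr hcon
    set B := C * ‖y - z‖ ^ 2 with hB
    have hB0 : 0 < B := mul_pos hC h0
    have ht := key (min 1 (d / (2 * B))) (lt_min one_pos (by positivity)) (min_le_left _ _)
    have : C * (min 1 (d / (2 * B))) * ‖y - z‖ ^ 2 ≤ B * (d / (2 * B)) := by
      have h1 : min 1 (d / (2 * B)) ≤ d / (2 * B) := min_le_right _ _
      calc C * (min 1 (d / (2 * B))) * ‖y - z‖ ^ 2 = B * (min 1 (d / (2 * B))) := by ring
        _ ≤ B * (d / (2 * B)) := by exact mul_le_mul_of_nonneg_left h1 (le_of_lt hB0)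
    have hBd : B * (d / (2 * B)) = d / 2 := by field_simp
    rw [hBd] at this
    linarith

lemma convex_affine_minorant {g : E → ℝ} (hgconv : ConvexOn ℝ univ g)
    (hglsc : LowerSemicontinuous g) :
    ∃ (a : E) (b : ℝ), ∀ x : E, ⟪a, x⟫ + b ≤ g x := by
  set epi : Set ((EuclideanSpace ℝ (Fin n)) × ℝ) := {p | g p.1 ≤ p.2} with hepi
  have hconv : Convex ℝ epi := by
    have h := hgconv.convex_epigraph
    have e : {p : (EuclideanSpace ℝ (Fin n)) × ℝ | p.1 ∈ univ ∧ g p.1 ≤ p.2} = epi := by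
      ext p; simp [hepi]
    rwa [e] at h
  have hclosed : IsClosed epi := by
    rw [← isOpen_compl_iff]
    have e : epiᶜ = ⋃ r : ℚ, (g ⁻¹' Ioi (r : ℝ)) ×ˢ Iio (r : ℝ) := by
      ext p
      simp only [hepi, mem_compl_iff, mem_setOf_eq, not_le, mem_iUnion, mem_prod, mem_preimage,
        mem_Ioi, mem_Iio]
      constructor
      · intro h
        obtain ⟨r, hr1, hr2⟩ := exists_rat_btwn h
        exact ⟨r, hr2, hr1⟩
      · rintro ⟨r, h1, h2⟩; linarith
    rw [e]
    exact isOpen_iUnion fun r =>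
      (lowerSemicontinuous_iff_isOpen_preimage.mp hglsc _).prod isOpen_Iio
  have hpt : ((0 : EuclideanSpace ℝ (Fin n)), g 0 - 1) ∉ epi := by
    simp [hepi]
  obtain ⟨F, u, hFu, hFepi⟩ := geometric_hahn_banach_point_closed hconv hclosed hpt
  set β := F (0, 1) with hβ
  have hdecomp : ∀ (x : EuclideanSpace ℝ (Fin n)) (t : ℝ), F (x, t) = F (x, 0) + t * β := by
    intro x t
    have e1 : (x, t) = (x, (0:ℝ)) + ((0 : EuclideanSpace ℝ (Fin n)), t) := by simp
    have e2 : ((0 : EuclideanSpace ℝ (Fin n)), t) = t • ((0 : EuclideanSpace ℝ (Fin n)), (1:ℝ)) := by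
      simp [Prod.smul_mk]
    rw [e1, map_add, e2, map_smul, smul_eq_mul, hβ]
  have h1 : u < F (0, g 0) := hFepi _ (by simp [hepi])
  have hβpos : 0 < β := by
    have h2 := hFu
    rw [hdecomp 0 (g 0 - 1)] at h2
    rw [hdecomp 0 (g 0)] at h1
    nlinarith
  set ℓ : (EuclideanSpace ℝ (Fin n)) →L[ℝ] ℝ :=
    F.comp (ContinuousLinearMap.inl ℝ (EuclideanSpace ℝ (Fin n)) ℝ) with hℓ
  have hℓa : ∀ x, ℓ x = F (x, 0) := fun x => rfl
  refine ⟨(InnerProductSpace.toDual ℝ (EuclideanSpace ℝ (Fin n))).symm ((-β⁻¹) • ℓ), u / β,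
    fun x => ?_⟩
  have ha : ⟪(InnerProductSpace.toDual ℝ (EuclideanSpace ℝ (Fin n))).symm ((-β⁻¹) • ℓ), x⟫
      = -β⁻¹ * F (x, 0) := by
    rw [InnerProductSpace.toDual_symm_apply]
    simp [hℓa]
  rw [ha]
  have h3 : u < F (x, 0) + g x * β := by
    have := hFepi (x, g x) (by simp [hepi])
    rwa [hdecomp] at this
  rw [div_eq_mul_inv]
  have hβinv : 0 < β⁻¹ := inv_pos.mpr hβpos
  have h4 : u * β⁻¹ < (F (x, 0) + g x * β) * β⁻¹ := by
    exact mul_lt_mul_of_pos_right h3 hβinv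
  have h5 : (F (x, 0) + g x * β) * β⁻¹ = F (x, 0) * β⁻¹ + g x := by
    field_simp
  nlinarith [h4, h5]

lemma lsc_prox_exists {g : E → ℝ} (hglsc : LowerSemicontinuous g)
    {a : E} {b : ℝ} (hab : ∀ x : E, ⟪a, x⟫ + b ≤ g x) {μ : ℝ} (hμ : 0 < μ) (v : E) :
    ∃ p : E, ∀ z : E, g p + ‖p - v‖ ^ 2 / (2 * μ) ≤ g z + ‖z - v‖ ^ 2 / (2 * μ) := by
  set φ : E → ℝ := fun z => g z + ‖z - v‖ ^ 2 / (2 * μ) with hφ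
  have h2μ : (0:ℝ) < 2 * μ := by linarith
  have hlow : ∀ z : E, b + ⟪a, v⟫ - ‖a‖ * ‖z - v‖ + ‖z - v‖ ^ 2 / (2 * μ) ≤ φ z := by
    intro z
    have h1 := hab z
    have h2 : ⟪a, z⟫ = ⟪a, z - v⟫ + ⟪a, v⟫ := by
      rw [← inner_add_right]; congr 1; abel
    have h3 : -(‖a‖ * ‖z - v‖) ≤ ⟪a, z - v⟫ := by
      have := abs_real_inner_le_norm a (z - v)
      linarith [neg_abs_le (⟪a, z - v⟫ : ℝ)]
    simp only [hφ]
    nlinarith [h1, h2, h3]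
  have hφlsc : LowerSemicontinuous φ := by
    rw [hφ]
    apply hglsc.add
    exact (((continuous_id.sub continuous_const).norm.pow 2).div_const _).lowerSemicontinuous
  have hgoal : ∃ p : E, ∀ z : E, φ p ≤ φ z := by
    clear_value φ
    have hlb : ∀ z : E, b + ⟪a, v⟫ - μ * ‖a‖ ^ 2 / 2 ≤ φ z := by
      intro z
      have h1 := hlow z
      have h2 : ‖a‖ * ‖z - v‖ - μ * ‖a‖ ^ 2 / 2 ≤ ‖z - v‖ ^ 2 / (2 * μ) := by
        rw [le_div_iff₀ h2μ]
        nlinarith [sq_nonneg (‖z - v‖ - μ * ‖a‖)]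
      linarith
    have hbdd : BddBelow (range φ) := by
      refine ⟨b + ⟪a, v⟫ - μ * ‖a‖ ^ 2 / 2, ?_⟩
      rintro y ⟨z, rfl⟩
      exact hlb z
    obtain ⟨c, hc⟩ : ∃ c, c = ⨅ z : E, φ z := ⟨_, rfl⟩
    have hseq : ∀ k : ℕ, ∃ z, φ z < c + 1 / (k + 1) := by
      intro k
      rw [hc]
      apply exists_lt_of_ciInf_lt
      rw [← hc]
      have : (0:ℝ) < 1 / (k + 1) := by positivity
      linarith
    choose zs hzs using hseq
    have hφbound : ∀ k, φ (zs k) ≤ c + 1 := by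
      intro k
      have h1 := hzs k
      have h2 : (1:ℝ) / (k + 1) ≤ 1 := by
        rw [div_le_one (by positivity)]
        have : (0:ℝ) ≤ (k:ℝ) := Nat.cast_nonneg k
        linarith
      linarith
    obtain ⟨C1, hC1⟩ : ∃ C1 : ℝ, C1 = c + 1 - b - ⟪a, v⟫ := ⟨_, rfl⟩
    obtain ⟨R2, hR2⟩ : ∃ R2 : ℝ, R2 = 4 * μ * (C1 + μ * ‖a‖ ^ 2) := ⟨_, rfl⟩
    have hrad : ∀ k, ‖zs k - v‖ ^ 2 ≤ R2 := by
      intro k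
      have h1 := hlow (zs k)
      have h2 := hφbound k
      have hr0 : 0 ≤ ‖zs k - v‖ := norm_nonneg _
      have h3 : ‖zs k - v‖ ^ 2 / (2 * μ) ≤ C1 + ‖a‖ * ‖zs k - v‖ := by
        rw [hC1]; linarith
      have h4 : ‖a‖ * ‖zs k - v‖ - μ * ‖a‖ ^ 2 ≤ ‖zs k - v‖ ^ 2 / (4 * μ) := by
        rw [le_div_iff₀ (by positivity : (0:ℝ) < 4 * μ)]
        nlinarith [sq_nonneg (‖zs k - v‖ - 2 * μ * ‖a‖)]
      have h5 : ‖zs k - v‖ ^ 2 / (2 * μ) - ‖zs k - v‖ ^ 2 / (4 * μ)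
          = ‖zs k - v‖ ^ 2 / (4 * μ) := by
        field_simp; ring
      have h6 : ‖zs k - v‖ ^ 2 / (4 * μ) ≤ C1 + μ * ‖a‖ ^ 2 := by linarith
      rw [div_le_iff₀ (by positivity : (0:ℝ) < 4 * μ)] at h6
      rw [hR2]; linarith
    obtain ⟨R, hR⟩ : ∃ R : ℝ, R = Real.sqrt (max R2 0) := ⟨_, rfl⟩
    have hmem : ∀ k, zs k ∈ Metric.closedBall v R := by
      intro k
      rw [Metric.mem_closedBall, dist_eq_norm, hR]
      have h1 : ‖zs k - v‖ ^ 2 ≤ max R2 0 := le_trans (hrad k) (le_max_left _ _)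
      have := Real.sqrt_le_sqrt h1
      rwa [Real.sqrt_sq (norm_nonneg _)] at this
    obtain ⟨p, hpmem, ψ, hψmono, hψtend⟩ :=
      (isCompact_closedBall v R).tendsto_subseq hmem
    refine ⟨p, fun z => ?_⟩
    have hple : φ p ≤ c := by
      by_contra hlt
      push_neg at hlt
      obtain ⟨y, hy⟩ : ∃ y : ℝ, y = (c + φ p) / 2 := ⟨_, rfl⟩
      have hy1 : y < φ p := by rw [hy]; linarith
      have hy2 : c < y := by rw [hy]; linarith
      have hev : ∀ᶠ x in nhds p, y < φ x := hφlsc p y hy1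
      have hev2 : ∀ᶠ k in Filter.atTop, y < φ (zs (ψ k)) := hψtend.eventually hev
      obtain ⟨K, hK⟩ := exists_nat_gt (1 / (y - c))
      have hev3 : ∀ᶠ k in Filter.atTop, K ≤ k := Filter.eventually_ge_atTop K
      obtain ⟨k, hk1, hk2⟩ := (hev2.and hev3).exists
      have hψk : (K:ℝ) ≤ (ψ k : ℝ) := by
        exact_mod_cast le_trans hk2 (hψmono.le_apply)
      have h7 : (1:ℝ) / (ψ k + 1) ≤ 1 / (K + 1) := by
        apply div_le_div_of_nonneg_left (by norm_num) (by positivity)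
        linarith
      have h8 : (1:ℝ) / (K + 1) < y - c := by
        rw [div_lt_iff₀ (by positivity)]
        have hyc : 0 < y - c := by linarith
        rw [div_lt_iff₀ hyc] at hK
        nlinarith [hK, hyc]
      have h9 := hzs (ψ k)
      linarith
    have h10 : c ≤ φ z := by rw [hc]; exact ciInf_le hbdd z
    linarith
  obtain ⟨p, hp⟩ := hgoal
  exact ⟨p, fun z => by simpa [hφ] using hp z⟩

lemma norm_combo_identity (p z v : E) (t : ℝ) :
    ‖((1-t) • p + t • z) - v‖ ^ 2
      = (1-t) * ‖p - v‖ ^ 2 + t * ‖z - v‖ ^ 2 - t * (1-t) * ‖p - z‖ ^ 2 := by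
  have e : ((1-t) • p + t • z) - v = (1-t) • (p - v) + t • (z - v) := by module
  rw [e, norm_add_sq_real, real_inner_smul_left, real_inner_smul_right]
  rw [norm_smul, norm_smul, mul_pow, mul_pow, Real.norm_eq_abs, Real.norm_eq_abs, sq_abs, sq_abs]
  have e2 : ‖(p - v) - (z - v)‖ ^ 2 = ‖p - v‖ ^ 2 - 2 * ⟪p - v, z - v⟫ + ‖z - v‖ ^ 2 :=
    norm_sub_sq_real _ _
  have e3 : (p - v) - (z - v) = p - z := by abel
  rw [e3] at e2
  nlinarith [e2]

lemma prox_strong_min {g : E → ℝ} (hgconv : ConvexOn ℝ univ g) {μ : ℝ} (hμ : 0 < μ) {v p : E}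
    (hp : ∀ z : E, g p + ‖p - v‖ ^ 2 / (2 * μ) ≤ g z + ‖z - v‖ ^ 2 / (2 * μ)) (z : E) :
    g p + ‖p - v‖ ^ 2 / (2 * μ) + ‖z - p‖ ^ 2 / (2 * μ) ≤ g z + ‖z - v‖ ^ 2 / (2 * μ) := by
  have h2μ : (0:ℝ) < 2 * μ := by linarith
  have key : ∀ t : ℝ, 0 < t → t < 1 →
      g p + ‖p - v‖ ^ 2 / (2 * μ) + (1 - t) * (‖p - z‖ ^ 2 / (2 * μ))
        ≤ g z + ‖z - v‖ ^ 2 / (2 * μ) := by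
    intro t ht0 ht1
    have hcv := hgconv.2 (mem_univ p) (mem_univ z) (by linarith : (0:ℝ) ≤ 1 - t)
      (le_of_lt ht0) (by ring)
    simp only [smul_eq_mul] at hcv
    have hmin := hp ((1-t) • p + t • z)
    have hid := norm_combo_identity p z v t
    have hid2 : ‖((1-t) • p + t • z) - v‖ ^ 2 / (2*μ)
        = (1-t) * (‖p - v‖ ^ 2 / (2*μ)) + t * (‖z - v‖ ^ 2 / (2*μ))
          - t * (1-t) * (‖p - z‖ ^ 2 / (2*μ)) := by
      rw [hid]; field_simp; try ring
    rw [hid2] at hmin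
    have hdiv : t * (g p + ‖p - v‖ ^ 2 / (2*μ) + (1-t) * (‖p - z‖ ^ 2 / (2*μ)))
        ≤ t * (g z + ‖z - v‖ ^ 2 / (2*μ)) := by nlinarith [hmin, hcv]
    exact le_of_mul_le_mul_left hdiv ht0
  have e : ‖z - p‖ ^ 2 = ‖p - z‖ ^ 2 := by rw [norm_sub_rev]
  rw [e]
  by_contra hcon
  push_neg at hcon
  obtain ⟨d, hd⟩ : ∃ d : ℝ, d = g p + ‖p - v‖ ^ 2 / (2 * μ) + ‖p - z‖ ^ 2 / (2 * μ)
      - (g z + ‖z - v‖ ^ 2 / (2 * μ)) := ⟨_, rfl⟩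
  obtain ⟨B, hB⟩ : ∃ B : ℝ, B = ‖p - z‖ ^ 2 / (2 * μ) := ⟨_, rfl⟩
  have hd0 : 0 < d := by rw [hd]; linarith
  have hD : 0 ≤ B := by rw [hB]; positivity
  rcases eq_or_lt_of_le hD with h0 | h0
  · have hk := key (1/2) (by norm_num) (by norm_num)
    rw [← hB] at hk
    rw [← h0] at hk
    rw [hB] at h0
    linarith [hk, hcon]
  · have ht := key (min (1/2) (d / (2 * B))) (lt_min (by norm_num) (by positivity))
      (lt_of_le_of_lt (min_le_left _ _) (by norm_num))
    rw [← hB] at ht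
    have h1 : min (1/2) (d / (2 * B)) * B ≤ d / 2 := by
      have h2 : min (1/2) (d / (2 * B)) ≤ d / (2 * B) := min_le_right _ _
      have h3 := mul_le_mul_of_nonneg_right h2 (le_of_lt h0)
      calc min (1/2) (d / (2 * B)) * B ≤ (d / (2 * B)) * B := h3
        _ = d / 2 := by field_simp
    have expand : g p + ‖p - v‖ ^ 2 / (2 * μ) + B - min (1/2) (d / (2 * B)) * B
        ≤ g z + ‖z - v‖ ^ 2 / (2 * μ) := by nlinarith [ht]
    rw [hB] at expand h1
    linarith [hd0, hd.symm.le, expand, h1]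

lemma prox_firm {g : E → ℝ} (hgconv : ConvexOn ℝ univ g) {μ : ℝ} (hμ : 0 < μ)
    {v₁ v₂ z₁ z₂ : E}
    (hp₁ : ∀ z : E, g z₁ + ‖z₁ - v₁‖ ^ 2 / (2 * μ) ≤ g z + ‖z - v₁‖ ^ 2 / (2 * μ))
    (hp₂ : ∀ z : E, g z₂ + ‖z₂ - v₂‖ ^ 2 / (2 * μ) ≤ g z + ‖z - v₂‖ ^ 2 / (2 * μ)) :
    ‖z₁ - z₂‖ ^ 2 ≤ ⟪z₁ - z₂, v₁ - v₂⟫ := by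
  have h2μ : (0:ℝ) < 2 * μ := by linarith
  have h1 := prox_strong_min hgconv hμ hp₁ z₂
  have h2 := prox_strong_min hgconv hμ hp₂ z₁
  -- sum of the div-inequalities (g terms cancel)
  have h3 : ‖z₁ - v₁‖ ^ 2 / (2*μ) + ‖z₂ - v₂‖ ^ 2 / (2*μ) + ‖z₂ - z₁‖ ^ 2 / (2*μ)
      + ‖z₁ - z₂‖ ^ 2 / (2*μ) ≤ ‖z₂ - v₁‖ ^ 2 / (2*μ) + ‖z₁ - v₂‖ ^ 2 / (2*μ) := by
    linarith
  have h4 : ‖z₁ - v₁‖ ^ 2 + ‖z₂ - v₂‖ ^ 2 + ‖z₂ - z₁‖ ^ 2 + ‖z₁ - z₂‖ ^ 2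
      ≤ ‖z₂ - v₁‖ ^ 2 + ‖z₁ - v₂‖ ^ 2 := by
    have h5 := mul_le_mul_of_nonneg_right h3 (le_of_lt h2μ)
    have hne : (2*μ) ≠ 0 := ne_of_gt h2μ
    field_simp at h5
    linarith [h5]
  have e1 : ‖z₁ - v₁‖ ^ 2 = ‖z₁‖ ^ 2 - 2 * ⟪z₁, v₁⟫ + ‖v₁‖ ^ 2 := norm_sub_sq_real _ _
  have e2 : ‖z₂ - v₂‖ ^ 2 = ‖z₂‖ ^ 2 - 2 * ⟪z₂, v₂⟫ + ‖v₂‖ ^ 2 := norm_sub_sq_real _ _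
  have e3 : ‖z₂ - v₁‖ ^ 2 = ‖z₂‖ ^ 2 - 2 * ⟪z₂, v₁⟫ + ‖v₁‖ ^ 2 := norm_sub_sq_real _ _
  have e4 : ‖z₁ - v₂‖ ^ 2 = ‖z₁‖ ^ 2 - 2 * ⟪z₁, v₂⟫ + ‖v₂‖ ^ 2 := norm_sub_sq_real _ _
  have e5 : ‖z₂ - z₁‖ ^ 2 = ‖z₁ - z₂‖ ^ 2 := by rw [norm_sub_rev]
  have e6 : ⟪z₁ - z₂, v₁ - v₂⟫ = ⟪z₁, v₁⟫ - ⟪z₁, v₂⟫ - ⟪z₂, v₁⟫ + ⟪z₂, v₂⟫ := by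
    rw [inner_sub_left, inner_sub_right, inner_sub_right]; ring
  rw [e6]
  nlinarith [h4, e1, e2, e3, e4, e5]

lemma inv_op_exists (Q : E →L[ℝ] E) {μ : ℝ} (hμ : 0 < μ)
    (hpsd : ∀ x : E, 0 ≤ ⟪x, Q x⟫) :
    ∃ P : E →L[ℝ] E, (∀ x : E, P (x + μ • Q x) = x) ∧ (∀ v : E, P v + μ • Q (P v) = v) := by
  set T : E →L[ℝ] E := ContinuousLinearMap.id ℝ _ + μ • Q with hT
  have hTapp : ∀ x : E, T x = x + μ • Q x := by
    intro x; simp [hT]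
  have hinj : Function.Injective T := by
    intro x y hxy
    have h0 : T (x - y) = 0 := by rw [map_sub, hxy, sub_self]
    have h1 : ‖x - y‖ ^ 2 ≤ ⟪x - y, T (x - y)⟫ := by
      rw [hTapp]
      rw [inner_add_right, real_inner_smul_right, real_inner_self_eq_norm_sq]
      nlinarith [hpsd (x - y), hμ]
    rw [h0, inner_zero_right] at h1
    have : ‖x - y‖ = 0 := by nlinarith [norm_nonneg (x - y), sq_nonneg ‖x - y‖]
    exact sub_eq_zero.mp (norm_eq_zero.mp this)
  have hinj' : Function.Injective T.toLinearMap := hinj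
  have hsurj : Function.Surjective T.toLinearMap :=
    LinearMap.injective_iff_surjective.mp hinj'
  set eqv := LinearEquiv.ofBijective T.toLinearMap ⟨hinj', hsurj⟩ with heqv
  refine ⟨LinearMap.toContinuousLinearMap (eqv.symm : _ →ₗ[ℝ] _), fun x => ?_, fun v => ?_⟩
  · have e : x + μ • Q x = eqv x := by
      rw [heqv]; exact (hTapp x).symm
    simp only [LinearMap.coe_toContinuousLinearMap', e]
    exact eqv.symm_apply_apply x
  · have e : ∀ y : E, T y = eqv y := fun y => rfl
    have h1 : T (eqv.symm v) = v := by rw [e, eqv.apply_symm_apply]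
    rw [hTapp] at h1
    simpa using h1

lemma key_contraction (Q : E →L[ℝ] E) {m L μ : ℝ}
    (hQsym : ∀ x y : E, ⟪Q x, y⟫ = ⟪x, Q y⟫) (hm : 0 ≤ m) (hmL : m ≤ L)
    (hQm : ∀ x : E, m * ‖x‖ ^ 2 ≤ ⟪x, Q x⟫) (hQL : ∀ x : E, ⟪x, Q x⟫ ≤ L * ‖x‖ ^ 2)
    (hμ0 : 0 < μ) (hμL : μ * L < 1) (x : E) :
    ‖x - μ • Q x‖ ≤ (1 - μ * m) / (1 + μ * m) * ‖x + μ • Q x‖ := by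
  have hpsd : ∀ y : E, 0 ≤ ⟪y, Q y⟫ := fun y =>
    le_trans (by positivity) (hQm y)
  set S : E →L[ℝ] E := Q - m • ContinuousLinearMap.id ℝ _ with hS
  have hSapp : ∀ y : E, S y = Q y - m • y := by intro y; simp [hS]
  have hSinner : ∀ y : E, ⟪y, S y⟫ = ⟪y, Q y⟫ - m * ‖y‖ ^ 2 := by
    intro y
    rw [hSapp, inner_sub_right, real_inner_smul_right, real_inner_self_eq_norm_sq]
  have hSsym : ∀ y z : E, ⟪S y, z⟫ = ⟪y, S z⟫ := by
    intro y z
    rw [hSapp, hSapp, inner_sub_left, inner_sub_right, real_inner_smul_left,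
      real_inner_smul_right, hQsym]
  have hSpsd : ∀ y : E, 0 ≤ ⟪y, S y⟫ := by
    intro y; rw [hSinner]; linarith [hQm y]
  have hSβ : ∀ y : E, ⟪y, S y⟫ ≤ (L - m) * ‖y‖ ^ 2 := by
    intro y; rw [hSinner]; linarith [hQL y]
  have hco := psd_cocoercive S hSsym hSpsd (L - m) (by linarith) hSβ x
  rw [hSinner] at hco
  have hexp : ‖S x‖ ^ 2 = ‖Q x‖ ^ 2 - 2 * m * ⟪x, Q x⟫ + m ^ 2 * ‖x‖ ^ 2 := by
    rw [hSapp, norm_sub_sq_real, real_inner_smul_right, norm_smul, Real.norm_eq_abs,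
      mul_pow, sq_abs]
    have : ⟪Q x, x⟫ = ⟪x, Q x⟫ := real_inner_comm _ _
    rw [this]; ring
  rw [hexp] at hco
  have hQQ : ‖Q x‖ ^ 2 ≤ (L + m) * ⟪x, Q x⟫ - m * L * ‖x‖ ^ 2 := by nlinarith [hco]
  have ha2 : ‖x - μ • Q x‖ ^ 2 = ‖x‖ ^ 2 - 2 * μ * ⟪x, Q x⟫ + μ ^ 2 * ‖Q x‖ ^ 2 := by
    rw [norm_sub_sq_real, real_inner_smul_right, norm_smul, Real.norm_eq_abs, mul_pow, sq_abs]
    ring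
  have hb2 : ‖x + μ • Q x‖ ^ 2 = ‖x‖ ^ 2 + 2 * μ * ⟪x, Q x⟫ + μ ^ 2 * ‖Q x‖ ^ 2 := by
    rw [norm_add_sq_real, real_inner_smul_right, norm_smul, Real.norm_eq_abs, mul_pow, sq_abs]
    ring
  have hμm1 : μ * m < 1 :=
    lt_of_le_of_lt (mul_le_mul_of_nonneg_left hmL (le_of_lt hμ0)) hμL
  have hμm0 : 0 ≤ μ * m := mul_nonneg (le_of_lt hμ0) hm
  have h1 : 0 ≤ μ ^ 2 * m * ((L + m) * ⟪x, Q x⟫ - m * L * ‖x‖ ^ 2 - ‖Q x‖ ^ 2) :=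
    mul_nonneg (by positivity) (by linarith [hQQ])
  have hmul1 : 0 ≤ 1 - μ ^ 2 * m * L := by nlinarith [hμm1, hμL, hμm0, mul_pos hμ0 hμ0]
  have h2 : 0 ≤ (1 - μ ^ 2 * m * L) * (⟪x, Q x⟫ - m * ‖x‖ ^ 2) :=
    mul_nonneg hmul1 (by linarith [hQm x])
  have hsq : ((1 + μ * m) * ‖x - μ • Q x‖) ^ 2 ≤ ((1 - μ * m) * ‖x + μ • Q x‖) ^ 2 := by
    rw [mul_pow, mul_pow, ha2, hb2]
    nlinarith [h1, h2, hμ0]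
  have hsqrt := Real.sqrt_le_sqrt hsq
  rw [Real.sqrt_sq (by positivity), Real.sqrt_sq (mul_nonneg (by linarith) (norm_nonneg _))]
    at hsqrt
  rw [div_mul_eq_mul_div, le_div_iff₀ (by linarith : (0:ℝ) < 1 + μ * m)]
  nlinarith [hsqrt]

set_option maxHeartbeats 2000000 in
/-- Lemma 2, Douglas–Rachford smoothness: for a convex
quadratic `f`, the Douglas–Rachford envelope is convex and differentiable with
`L̃ = (1 - μm)/(μ(1 + μm)²)`-Lipschitz gradient. -/
theorem DR_envelope_smooth_quadratic {n : ℕ}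
    (Q : EuclideanSpace ℝ (Fin n) →L[ℝ] EuclideanSpace ℝ (Fin n))
    (q : EuclideanSpace ℝ (Fin n)) (g : EuclideanSpace ℝ (Fin n) → ℝ)
    (m L μ Lt : ℝ)
    (hQsym : ∀ x y : EuclideanSpace ℝ (Fin n), ⟪Q x, y⟫ = ⟪x, Q y⟫)
    (hm : 0 ≤ m) (hL : 0 < L)
    (hQm : ∀ x : EuclideanSpace ℝ (Fin n), m * ‖x‖ ^ 2 ≤ ⟪x, Q x⟫)
    (hQmmin : ∃ x : EuclideanSpace ℝ (Fin n), x ≠ 0 ∧ ⟪x, Q x⟫ = m * ‖x‖ ^ 2)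
    (hQL : ∀ x : EuclideanSpace ℝ (Fin n), ⟪x, Q x⟫ ≤ L * ‖x‖ ^ 2)
    (hQLmax : ∃ x : EuclideanSpace ℝ (Fin n), x ≠ 0 ∧ ⟪x, Q x⟫ = L * ‖x‖ ^ 2)
    (f : EuclideanSpace ℝ (Fin n) → ℝ)
    (hf : ∀ x, f x = (1 / 2) * ⟪x, Q x⟫ + ⟪q, x⟫)
    (hgconv : ConvexOn ℝ univ g) (hglsc : LowerSemicontinuous g)
    (hμ : μ ∈ Ioo 0 (1 / L))
    (hLt : Lt = (1 - μ * m) / (μ * (1 + μ * m) ^ 2))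
    (M : EuclideanSpace ℝ (Fin n) → ℝ)
    (hM : ∀ v, M v = ⨅ z : EuclideanSpace ℝ (Fin n), (g z + ‖z - v‖ ^ 2 / (2 * μ)))
    (Fμ : EuclideanSpace ℝ (Fin n) → ℝ)
    (hFμ : ∀ x, Fμ x = f x + M (x - μ • gradient f x) - μ / 2 * ‖gradient f x‖ ^ 2)
    (proxf : EuclideanSpace ℝ (Fin n) → EuclideanSpace ℝ (Fin n))
    (hproxf : ∀ v, IsMinOn (fun z => f z + ‖z - v‖ ^ 2 / (2 * μ)) univ (proxf v))
    (Dμ : EuclideanSpace ℝ (Fin n) → ℝ)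
    (hDμ : ∀ z, Dμ z = Fμ (proxf z)) :
    ConvexOn ℝ univ Dμ ∧ Differentiable ℝ Dμ ∧
      ∀ x y, ‖gradient Dμ x - gradient Dμ y‖ ≤ Lt * ‖x - y‖ := by
  obtain ⟨hμ0, hμ2⟩ := hμ
  have hμL : μ * L < 1 := (lt_div_iff₀ hL).mp hμ2
  have hmL : m ≤ L := by
    obtain ⟨x₀, hx₀, hx₀e⟩ := hQmmin
    have h1 : 0 < ‖x₀‖ := norm_pos_iff.mpr hx₀
    nlinarith [hQL x₀, hx₀e, pow_pos h1 2]
  have hμm1 : μ * m < 1 := lt_of_le_of_lt (by nlinarith : μ * m ≤ μ * L) hμL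
  have hμm0 : 0 ≤ μ * m := by positivity
  have h2μ : (0:ℝ) < 2 * μ := by linarith
  have hpsd : ∀ x : EuclideanSpace ℝ (Fin n), 0 ≤ ⟪x, Q x⟫ := fun x =>
    le_trans (by positivity) (hQm x)
  obtain ⟨P, hP1, hP2⟩ := inv_op_exists Q hμ0 hpsd
  -- basic properties of P
  have hPcontr : ∀ w, ‖P w‖ ≤ ‖w‖ := by
    intro w
    have h1' : ‖P w‖ ^ 2 ≤ ⟪P w, P w + μ • Q (P w)⟫ := by
      rw [inner_add_right, real_inner_smul_right, real_inner_self_eq_norm_sq]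
      nlinarith [hpsd (P w)]
    have h1 : ‖P w‖ ^ 2 ≤ ⟪P w, w⟫ := by rwa [hP2 w] at h1'
    have h2 : ⟪P w, w⟫ ≤ ‖P w‖ * ‖w‖ := real_inner_le_norm _ _
    rcases eq_or_lt_of_le (norm_nonneg (P w)) with h0 | h0
    · rw [← h0]; exact norm_nonneg w
    · nlinarith [h1, h2, h0]
  have hPsym : ∀ u v, ⟪P u, v⟫ = ⟪u, P v⟫ := by
    intro u v
    have l : ⟪P u, v⟫ = ⟪P u, P v⟫ + μ * ⟪P u, Q (P v)⟫ := by
      conv_lhs => rw [← hP2 v]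
      rw [inner_add_right, real_inner_smul_right]
    have r : ⟪u, P v⟫ = ⟪P u, P v⟫ + μ * ⟪Q (P u), P v⟫ := by
      conv_lhs => rw [← hP2 u]
      rw [inner_add_left, real_inner_smul_left]
    rw [l, r, hQsym]
  have hPQcomm : ∀ v, Q (P v) = P (Q v) := by
    intro v
    have h1 := hP1 (Q (P v))
    have h2 : Q (P v) + μ • Q (Q (P v)) = Q v := by
      conv_rhs => rw [← hP2 v]
      rw [map_add, map_smul]
    rw [h2] at h1
    exact h1.symm
  -- the reflection-type operator A w = P w - μ Q P w
  have hAcontr : ∀ w, ‖P w - μ • Q (P w)‖ ≤ (1 - μ*m)/(1 + μ*m) * ‖w‖ := by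
    intro w
    have h1 := key_contraction Q hQsym hm hmL hQm hQL hμ0 hμL (P w)
    rwa [hP2 w] at h1
  have hα0 : 0 ≤ (1 - μ*m)/(1+μ*m) := div_nonneg (by linarith) (by linarith)
  have hα1 : (1 - μ*m)/(1+μ*m) ≤ 1 := by
    rw [div_le_one (by linarith)]; linarith
  have hAsym : ∀ u v, ⟪P u - μ • Q (P u), v⟫ = ⟪u, P v - μ • Q (P v)⟫ := by
    intro u v
    rw [inner_sub_left, inner_sub_right, real_inner_smul_left, real_inner_smul_right]
    have e1 : ⟪Q (P u), v⟫ = ⟪u, Q (P v)⟫ := by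
      rw [hQsym, hPsym, ← hPQcomm]
    rw [hPsym u v, e1]
  have hAdecomp : ∀ w, P w = (1/2 : ℝ) • w + (1/2 : ℝ) • (P w - μ • Q (P w)) := by
    intro w
    have h := hP2 w
    have goal' : P w - ((1/2:ℝ) • w + (1/2:ℝ) • (P w - μ • Q (P w)))
        = (1/2:ℝ) • ((P w + μ • Q (P w)) - w) := by module
    rw [h, sub_self, smul_zero] at goal'
    exact eq_of_sub_eq_zero goal'
  -- gradient of f
  have hfgrad_ineq : ∀ x y : EuclideanSpace ℝ (Fin n),
      |f y - f x - ⟪Q x + q, y - x⟫| ≤ (L/2 + 1) * ‖y - x‖ ^ 2 := by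
    intro x y
    have hid : f y - f x - ⟪Q x + q, y - x⟫ = 1/2 * ⟪y - x, Q (y - x)⟫ := by
      rw [hf, hf]
      have e1 : ⟪y - x, Q (y - x)⟫ = ⟪y, Q y⟫ - ⟪y, Q x⟫ - ⟪x, Q y⟫ + ⟪x, Q x⟫ := by
        rw [map_sub, inner_sub_left, inner_sub_right, inner_sub_right]; ring
      have e2 : ⟪Q x + q, y - x⟫ = ⟪Q x, y⟫ - ⟪Q x, x⟫ + (⟪q, y⟫ - ⟪q, x⟫) := by
        rw [inner_add_left, inner_sub_right, inner_sub_right]; try ring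
      have e3 : ⟪y, Q x⟫ = ⟪x, Q y⟫ := by rw [real_inner_comm, hQsym]
      have e4 : ⟪Q x, y⟫ = ⟪x, Q y⟫ := hQsym x y
      have e5 : ⟪Q x, x⟫ = ⟪x, Q x⟫ := real_inner_comm _ _
      rw [e1, e2, e3, e4, e5]; ring
    rw [hid, abs_le]
    constructor
    · nlinarith [hpsd (y - x), sq_nonneg ‖y - x‖]
    · nlinarith [hQL (y - x), hL, sq_nonneg ‖y - x‖]
  have hfgrad : ∀ x, HasGradientAt f (Q x + q) x :=
    quad_hasGradient (by linarith : (0:ℝ) < L/2 + 1) (fun z y => hfgrad_ineq z y)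
  have hgradf_eq : ∀ x, gradient f x = Q x + q := fun x => (hfgrad x).gradient
  -- stationarity and the explicit formula for proxf
  have hstat : ∀ v, μ • (Q (P (v - μ • q)) + q) + (P (v - μ • q) - v) = 0 := by
    intro v
    have h := hP2 (v - μ • q)
    have goal' : μ • (Q (P (v - μ • q)) + q) + (P (v - μ • q) - v)
        = (P (v - μ • q) + μ • Q (P (v - μ • q))) - (v - μ • q) := by module
    rw [h, sub_self] at goal'
    exact goal'
  have hproxeq : ∀ v, proxf v = P (v - μ • q) := by
    intro v
    obtain ⟨w, hw⟩ : ∃ w, w = P (v - μ • q) := ⟨_, rfl⟩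
    have hstatw : μ • (Q w + q) + (w - v) = 0 := by rw [hw]; exact hstat v
    have hkey : ∀ d, (f (w + d) + ‖(w + d) - v‖^2/(2*μ)) - (f w + ‖w - v‖^2/(2*μ))
        = 1/2*⟪d, Q d⟫ + ‖d‖^2/(2*μ) + (1/μ) * ⟪μ • (Q w + q) + (w - v), d⟫ := by
      intro d
      rw [hf, hf]
      have e0 : (w + d) - v = (w - v) + d := by abel
      rw [e0, norm_add_sq_real]
      have e1 : ⟪w + d, Q (w + d)⟫ = ⟪w, Q w⟫ + 2*⟪Q w, d⟫ + ⟪d, Q d⟫ := by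
        rw [map_add, inner_add_left, inner_add_right, inner_add_right]
        have c1 : ⟪d, Q w⟫ = ⟪Q w, d⟫ := real_inner_comm _ _
        have c2 : ⟪w, Q d⟫ = ⟪Q w, d⟫ := (hQsym w d).symm
        rw [c1, c2]; ring
      have e2 : ⟪q, w + d⟫ = ⟪q, w⟫ + ⟪q, d⟫ := inner_add_right _ _ _
      have e3 : ⟪μ • (Q w + q) + (w - v), d⟫ = μ * ⟪Q w, d⟫ + μ * ⟪q, d⟫ + ⟪w - v, d⟫ := by
        rw [inner_add_left, real_inner_smul_left, inner_add_left]; ring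
      rw [e1, e2, e3]
      field_simp
      try ring
    have hmin := isMinOn_iff.mp (hproxf v) w (mem_univ w)
    have hd := hkey (proxf v - w)
    rw [hstatw] at hd
    simp only [inner_zero_left, mul_zero, add_zero] at hd
    have e4 : w + (proxf v - w) = proxf v := by abel
    rw [e4] at hd
    have h5 : 1/2*⟪proxf v - w, Q (proxf v - w)⟫ + ‖proxf v - w‖^2/(2*μ) ≤ 0 := by
      linarith [hmin, hd]
    have h6 : ‖proxf v - w‖^2/(2*μ) = 0 := by
      have hb : (0:ℝ) ≤ ‖proxf v - w‖^2/(2*μ) := by positivity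
      nlinarith [hpsd (proxf v - w)]
    have h8 : ‖proxf v - w‖^2 = 0 := by
      by_contra hne
      have hpos : 0 < ‖proxf v - w‖^2 := lt_of_le_of_ne (sq_nonneg _) (Ne.symm hne)
      have := div_pos hpos h2μ
      linarith
    have h7 : proxf v = w :=
      sub_eq_zero.mp (norm_eq_zero.mp (pow_eq_zero_iff two_ne_zero |>.mp h8))
    rw [← hw]
    exact h7
  -- Moreau machinery for g
  obtain ⟨ag, bg, hab⟩ := convex_affine_minorant hgconv hglsc
  have hproxg_ex := fun v => lsc_prox_exists hglsc hab hμ0 v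
  choose pg hpg using hproxg_ex
  have hbddM : ∀ v, BddBelow (range fun z => g z + ‖z - v‖ ^ 2 / (2 * μ)) := by
    intro v
    refine ⟨g (pg v) + ‖pg v - v‖ ^ 2 / (2 * μ), ?_⟩
    rintro y ⟨z, rfl⟩
    exact hpg v z
  have hMeq : ∀ v, M v = g (pg v) + ‖pg v - v‖ ^ 2 / (2 * μ) := by
    intro v
    rw [hM]
    exact le_antisymm (ciInf_le (hbddM v) (pg v)) (le_ciInf (hpg v))
  have hMle : ∀ v z, M v ≤ g z + ‖z - v‖ ^ 2 / (2 * μ) := by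
    intro v z
    rw [hM]
    exact ciInf_le (hbddM v) z
  have hMconv : ConvexOn ℝ univ M := by
    refine ⟨convex_univ, ?_⟩
    intro v₁ _ v₂ _ a' b' ha' hb' hab'
    have h1 := hMle (a' • v₁ + b' • v₂) (a' • pg v₁ + b' • pg v₂)
    have hcv := hgconv.2 (mem_univ (pg v₁)) (mem_univ (pg v₂)) ha' hb' hab'
    simp only [smul_eq_mul] at hcv
    have ha'' : a' = 1 - b' := by linarith
    have hid : ‖(a' • pg v₁ + b' • pg v₂) - (a' • v₁ + b' • v₂)‖^2
        = a' * ‖pg v₁ - v₁‖^2 + b' * ‖pg v₂ - v₂‖^2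
          - b' * a' * ‖(pg v₁ - v₁) - (pg v₂ - v₂)‖^2 := by
      have e : (a' • pg v₁ + b' • pg v₂) - (a' • v₁ + b' • v₂)
          = ((1 - b') • (pg v₁ - v₁) + b' • (pg v₂ - v₂)) - 0 := by
        rw [← ha'']; module
      rw [e, sub_zero]
      have := norm_combo_identity (pg v₁ - v₁) (pg v₂ - v₂) 0 b'
      simp only [sub_zero] at this
      rw [this, ← ha'']
      try ring
    have hsqle : ‖(a' • pg v₁ + b' • pg v₂) - (a' • v₁ + b' • v₂)‖^2
        ≤ a' * ‖pg v₁ - v₁‖^2 + b' * ‖pg v₂ - v₂‖^2 := by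
      rw [hid]
      nlinarith [mul_nonneg (mul_nonneg hb' ha') (sq_nonneg ‖(pg v₁ - v₁) - (pg v₂ - v₂)‖)]
    have hdivle : ‖(a' • pg v₁ + b' • pg v₂) - (a' • v₁ + b' • v₂)‖^2 / (2*μ)
        ≤ a' * (‖pg v₁ - v₁‖^2 / (2*μ)) + b' * (‖pg v₂ - v₂‖^2 / (2*μ)) := by
      rw [div_le_iff₀ h2μ]
      have e : (a' * (‖pg v₁ - v₁‖^2 / (2*μ)) + b' * (‖pg v₂ - v₂‖^2 / (2*μ))) * (2*μ)
          = a' * ‖pg v₁ - v₁‖^2 + b' * ‖pg v₂ - v₂‖^2 := by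
        field_simp
      rw [e]
      exact hsqle
    rw [hMeq v₁, hMeq v₂]
    simp only [smul_eq_mul]
    calc M (a' • v₁ + b' • v₂)
        ≤ g (a' • pg v₁ + b' • pg v₂)
            + ‖(a' • pg v₁ + b' • pg v₂) - (a' • v₁ + b' • v₂)‖^2 / (2*μ) := h1
      _ ≤ a' * g (pg v₁) + b' * g (pg v₂)
            + (a' * (‖pg v₁ - v₁‖^2 / (2*μ)) + b' * (‖pg v₂ - v₂‖^2 / (2*μ))) := by
          linarith [hcv, hdivle]
      _ = a' * (g (pg v₁) + ‖pg v₁ - v₁‖^2 / (2*μ)) + b' * (g (pg v₂) + ‖pg v₂ - v₂‖^2 / (2*μ)) := by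
          ring
  -- quadratic upper bound for M
  have hMquad : ∀ v w, M w - M v - ⟪μ⁻¹ • (v - pg v), w - v⟫ ≤ (1/(2*μ)) * ‖w - v‖^2 := by
    intro v w
    have h1 := hMle w (pg v)
    have h2 := hMeq v
    have e1 : ‖pg v - w‖^2 = ‖pg v - v‖^2 - 2*⟪pg v - v, w - v⟫ + ‖w - v‖^2 := by
      have e : pg v - w = (pg v - v) - (w - v) := by abel
      rw [e, norm_sub_sq_real]
    have e2 : ⟪μ⁻¹ • (v - pg v), w - v⟫ = -(⟪pg v - v, w - v⟫ / μ) := by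
      rw [real_inner_smul_left]
      have e3 : ⟪v - pg v, w - v⟫ = -⟪pg v - v, w - v⟫ := by
        rw [← inner_neg_left]; congr 1; abel
      rw [e3]; field_simp
    rw [e2, sub_neg_eq_add]
    rw [e1] at h1
    have e4 : (‖pg v - v‖^2 - 2*⟪pg v - v, w - v⟫ + ‖w - v‖^2) / (2*μ)
        = ‖pg v - v‖^2/(2*μ) - ⟪pg v - v, w - v⟫/μ + ‖w - v‖^2/(2*μ) := by
      field_simp
    rw [e4] at h1
    have e5 : (1/(2*μ)) * ‖w - v‖^2 = ‖w - v‖^2/(2*μ) := by ring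
    rw [e5]
    linarith [h1, h2.le, h2.ge]
  have hC2 : (0:ℝ) < 1/(2*μ) := by positivity
  have hMsub : ∀ v w, ⟪μ⁻¹ • (v - pg v), w - v⟫ ≤ M w - M v := fun v w =>
    subgrad_of_quad hMconv hC2 hMquad v w
  -- firm nonexpansiveness of pg
  have hfirm : ∀ v₁ v₂, ‖pg v₁ - pg v₂‖^2 ≤ ⟪pg v₁ - pg v₂, v₁ - v₂⟫ := fun v₁ v₂ =>
    prox_firm hgconv hμ0 (hpg v₁) (hpg v₂)
  -- now assemble Dμ
  have hDform : ∀ z, Dμ z = (f (P (z - μ • q)) - μ/2 * ‖Q (P (z - μ • q)) + q‖^2)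
      + M (P (z - μ • q) - μ • (Q (P (z - μ • q)) + q)) := by
    intro z
    rw [hDμ, hFμ, hproxeq, hgradf_eq]
    ring
  -- the candidate gradient
  obtain ⟨Gd, hGd⟩ : ∃ Gd : EuclideanSpace ℝ (Fin n) → EuclideanSpace ℝ (Fin n),
      Gd = fun z => P ((Q (P (z - μ • q)) + q) - μ • Q (Q (P (z - μ • q)) + q))
        + (P (μ⁻¹ • ((P (z - μ • q) - μ • (Q (P (z - μ • q)) + q))
              - pg (P (z - μ • q) - μ • (Q (P (z - μ • q)) + q))))
           - μ • Q (P (μ⁻¹ • ((P (z - μ • q) - μ • (Q (P (z - μ • q)) + q))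
              - pg (P (z - μ • q) - μ • (Q (P (z - μ • q)) + q)))))) := ⟨_, rfl⟩
  have hQco : ∀ d : EuclideanSpace ℝ (Fin n), ‖Q d‖^2 ≤ L * ⟪d, Q d⟫ :=
    psd_cocoercive Q hQsym hpsd L (le_of_lt hL) hQL
  have hxdiff : ∀ z z' : EuclideanSpace ℝ (Fin n),
      P (z - μ • q) - P (z' - μ • q) = P (z - z') := by
    intro z z'
    rw [← map_sub]; congr 1; abel
  have hudiff : ∀ z z' : EuclideanSpace ℝ (Fin n),
      (P (z - μ•q) - μ•(Q (P (z - μ•q)) + q)) - (P (z' - μ•q) - μ•(Q (P (z' - μ•q)) + q))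
        = P (z - z') - μ • Q (P (z - z')) := by
    intro z z'
    have e2 : (P (z - μ•q) - μ•(Q (P (z - μ•q)) + q)) - (P (z' - μ•q) - μ•(Q (P (z' - μ•q)) + q))
        = (P (z - μ•q) - P (z' - μ•q)) - μ • (Q (P (z - μ•q)) - Q (P (z' - μ•q))) := by
      module
    have e3 : Q (P (z - μ•q)) - Q (P (z' - μ•q)) = Q (P (z - μ•q) - P (z' - μ•q)) :=
      (map_sub Q _ _).symm
    rw [e2, e3, hxdiff]
  have hχkey : ∀ x' d : EuclideanSpace ℝ (Fin n),
      ((f (x' + d) - μ/2 * ‖Q (x' + d) + q‖^2) - (f x' - μ/2 * ‖Q x' + q‖^2))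
        - ⟪(Q x' + q) - μ • Q (Q x' + q), d⟫ = 1/2 * (⟪d, Q d⟫ - μ * ‖Q d‖^2) := by
    intro x' d
    rw [hf, hf]
    have e1 : Q (x' + d) + q = (Q x' + q) + Q d := by rw [map_add]; abel
    rw [e1, norm_add_sq_real]
    have e2 : ⟪x' + d, Q (x' + d)⟫ = ⟪x', Q x'⟫ + 2*⟪Q x', d⟫ + ⟪d, Q d⟫ := by
      rw [map_add, inner_add_left, inner_add_right, inner_add_right]
      have c1 : ⟪d, Q x'⟫ = ⟪Q x', d⟫ := real_inner_comm _ _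
      have c2 : ⟪x', Q d⟫ = ⟪Q x', d⟫ := (hQsym x' d).symm
      rw [c1, c2]; ring
    have e3 : ⟪q, x' + d⟫ = ⟪q, x'⟫ + ⟪q, d⟫ := inner_add_right _ _ _
    have e4 : ⟪(Q x' + q) - μ • Q (Q x' + q), d⟫
        = ⟪Q x', d⟫ + ⟪q, d⟫ - μ * ⟪Q x' + q, Q d⟫ := by
      have c3 : ⟪Q (Q x' + q), d⟫ = ⟪Q x' + q, Q d⟫ := hQsym _ _
      rw [inner_sub_left, inner_add_left, real_inner_smul_left, c3]
      try ring
    rw [e2, e3, e4]; ring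
  have hPc2 : ∀ d : EuclideanSpace ℝ (Fin n), ‖P d‖^2 ≤ ‖d‖^2 := by
    intro d
    have := hPcontr d
    nlinarith [norm_nonneg (P d), norm_nonneg d]
  have hDdecomp : ∀ z y : EuclideanSpace ℝ (Fin n), ∃ χerr Merr : ℝ,
      Dμ y - Dμ z - ⟪Gd z, y - z⟫ = χerr + Merr
      ∧ 0 ≤ χerr ∧ χerr ≤ (L/2) * ‖y - z‖^2
      ∧ 0 ≤ Merr ∧ Merr ≤ (1/(2*μ)) * ‖y - z‖^2 := by
    intro z y
    obtain ⟨xz, hxz⟩ : ∃ w, w = P (z - μ • q) := ⟨_, rfl⟩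
    obtain ⟨xy, hxy⟩ : ∃ w, w = P (y - μ • q) := ⟨_, rfl⟩
    obtain ⟨uz, huz⟩ : ∃ w, w = xz - μ • (Q xz + q) := ⟨_, rfl⟩
    obtain ⟨uy, huy⟩ : ∃ w, w = xy - μ • (Q xy + q) := ⟨_, rfl⟩
    have hxd : xy - xz = P (y - z) := by rw [hxz, hxy]; exact hxdiff y z
    have hxyeq : xy = xz + P (y - z) := by rw [← hxd]; abel
    have hud : uy - uz = P (y - z) - μ • Q (P (y - z)) := by
      rw [huz, huy, hxz, hxy]; exact hudiff y z
    refine ⟨1/2 * (⟪P (y-z), Q (P (y-z))⟫ - μ * ‖Q (P (y-z))‖^2),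
            M uy - M uz - ⟪μ⁻¹ • (uz - pg uz), uy - uz⟫, ?_, ?_, ?_, ?_, ?_⟩
    · have hχ := hχkey xz (P (y - z))
      rw [← hxyeq] at hχ
      have hGdz : ⟪Gd z, y - z⟫ = ⟪(Q xz + q) - μ • Q (Q xz + q), P (y - z)⟫
          + ⟪μ⁻¹ • (uz - pg uz), P (y - z) - μ • Q (P (y - z))⟫ := by
        simp only [hGd]
        rw [← hxz, ← huz, inner_add_left, hPsym, hAsym]
      rw [hDform y, hDform z, ← hxz, ← hxy, ← huz, ← huy, hGdz, ← hud]
      linarith [hχ]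
    · nlinarith [hQco (P (y-z)), hpsd (P (y-z)), hμL, hμ0]
    · have h1 : ⟪P (y-z), Q (P (y-z))⟫ ≤ L * ‖P (y-z)‖^2 := hQL _
      have h2 := hPc2 (y - z)
      nlinarith [sq_nonneg ‖Q (P (y-z))‖, hμ0, hL]
    · have := hMsub uz uy
      linarith
    · have h1 := hMquad uz uy
      have h2 : ‖uy - uz‖ ≤ ‖y - z‖ := by
        rw [hud]
        exact le_trans (hAcontr (y - z))
          (by nlinarith [hα1, norm_nonneg (y - z), hα0])
      have h3 : ‖uy - uz‖^2 ≤ ‖y - z‖^2 := by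
        nlinarith [norm_nonneg (uy - uz), norm_nonneg (y - z)]
      have h4 : (1/(2*μ)) * ‖uy - uz‖^2 ≤ (1/(2*μ)) * ‖y - z‖^2 :=
        mul_le_mul_of_nonneg_left h3 (by positivity)
      linarith
  have hDlow : ∀ z y : EuclideanSpace ℝ (Fin n), ⟪Gd z, y - z⟫ ≤ Dμ y - Dμ z := by
    intro z y
    obtain ⟨c, mr, heq, hc0, _, hm0, _⟩ := hDdecomp z y
    linarith
  have hconvD : ConvexOn ℝ univ Dμ := by
    refine ⟨convex_univ, ?_⟩
    intro y₁ _ y₂ _ a' b' ha' hb' hab'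
    have h1 := hDlow (a' • y₁ + b' • y₂) y₁
    have h2 := hDlow (a' • y₁ + b' • y₂) y₂
    have e : a' • (y₁ - (a' • y₁ + b' • y₂)) + b' • (y₂ - (a' • y₁ + b' • y₂)) = 0 := by
      have e' : a' • (y₁ - (a' • y₁ + b' • y₂)) + b' • (y₂ - (a' • y₁ + b' • y₂))
          = (a' • y₁ + b' • y₂) - (a' + b') • (a' • y₁ + b' • y₂) := by module
      rw [e', hab', one_smul, sub_self]
    have hinner : a' * ⟪Gd (a' • y₁ + b' • y₂), y₁ - (a' • y₁ + b' • y₂)⟫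
        + b' * ⟪Gd (a' • y₁ + b' • y₂), y₂ - (a' • y₁ + b' • y₂)⟫ = 0 := by
      rw [← real_inner_smul_right, ← real_inner_smul_right, ← inner_add_right, e,
        inner_zero_right]
    have h3 := mul_le_mul_of_nonneg_left h1 ha'
    have h4 := mul_le_mul_of_nonneg_left h2 hb'
    simp only [smul_eq_mul]
    have h5 : a' * Dμ (a' • y₁ + b' • y₂) + b' * Dμ (a' • y₁ + b' • y₂)
        = Dμ (a' • y₁ + b' • y₂) := by rw [← add_mul, hab', one_mul]
    nlinarith [h3, h4, hinner, h5]
  have hDtwoside : ∀ z y : EuclideanSpace ℝ (Fin n),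
      |Dμ y - Dμ z - ⟪Gd z, y - z⟫| ≤ (L/2 + 1/(2*μ)) * ‖y - z‖^2 := by
    intro z y
    obtain ⟨c, mr, heq, hc0, hc1, hm0, hm1⟩ := hDdecomp z y
    rw [heq, abs_le]
    constructor
    · nlinarith [sq_nonneg ‖y - z‖, hμ0, hL]
    · nlinarith [sq_nonneg ‖y - z‖]
  have hC3 : (0:ℝ) < L/2 + 1/(2*μ) := by positivity
  have hDgrad : ∀ z, HasGradientAt Dμ (Gd z) z :=
    quad_hasGradient hC3 (fun z y => hDtwoside z y)
  have hDdiff : Differentiable ℝ Dμ := fun z => (hDgrad z).hasFDerivAt.differentiableAt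
  have hgradD : ∀ z, gradient Dμ z = Gd z := fun z => (hDgrad z).gradient
  -- Lipschitz estimate for Gd
  have hLip : ∀ z z' : EuclideanSpace ℝ (Fin n), ‖Gd z - Gd z'‖ ≤ Lt * ‖z - z'‖ := by
    intro z z'
    obtain ⟨xz, hxz⟩ : ∃ w, w = P (z - μ • q) := ⟨_, rfl⟩
    obtain ⟨xz', hxz'⟩ : ∃ w, w = P (z' - μ • q) := ⟨_, rfl⟩
    obtain ⟨uz, huz⟩ : ∃ w, w = xz - μ • (Q xz + q) := ⟨_, rfl⟩
    obtain ⟨uz', huz'⟩ : ∃ w, w = xz' - μ • (Q xz' + q) := ⟨_, rfl⟩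
    obtain ⟨Δ, hΔ⟩ : ∃ w, w = pg uz - pg uz' := ⟨_, rfl⟩
    have hxd : xz - xz' = P (z - z') := by rw [hxz, hxz']; exact hxdiff z z'
    have hud : uz - uz' = P (z - z') - μ • Q (P (z - z')) := by
      rw [huz, huz', hxz, hxz']; exact hudiff z z'
    -- the operator identity
    have hT1 : P ((Q xz + q) - μ • Q (Q xz + q)) - P ((Q xz' + q) - μ • Q (Q xz' + q))
        = P (Q (P (z - z')) - μ • Q (Q (P (z - z')))) := by
      rw [← map_sub]
      congr 1
      have a1 : ((Q xz + q) - μ • Q (Q xz + q)) - ((Q xz' + q) - μ • Q (Q xz' + q))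
          = (Q xz - Q xz') - μ • (Q (Q xz) - Q (Q xz')) := by
        simp only [map_add]; module
      have a2 : Q xz - Q xz' = Q (P (z - z')) := by rw [← map_sub, hxd]
      have a3 : Q (Q xz) - Q (Q xz') = Q (Q (P (z - z'))) := by
        rw [← map_sub, ← map_sub, hxd]
      rw [a1, a2, a3]
    have hT2 : (P (μ⁻¹ • (uz - pg uz)) - μ • Q (P (μ⁻¹ • (uz - pg uz))))
          - (P (μ⁻¹ • (uz' - pg uz')) - μ • Q (P (μ⁻¹ • (uz' - pg uz'))))
        = P (μ⁻¹ • ((P (z - z') - μ • Q (P (z - z'))) - Δ))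
          - μ • Q (P (μ⁻¹ • ((P (z - z') - μ • Q (P (z - z'))) - Δ))) := by
      have b1 : μ⁻¹ • (uz - pg uz) - μ⁻¹ • (uz' - pg uz')
          = μ⁻¹ • ((uz - uz') - Δ) := by rw [hΔ]; module
      have b2 : ∀ V W : EuclideanSpace ℝ (Fin n),
          (P V - μ • Q (P V)) - (P W - μ • Q (P W))
            = P (V - W) - μ • Q (P (V - W)) := by
        intro V W
        rw [map_sub P, map_sub Q]
        module
      rw [b2, b1, hud]
    have hGdd : Gd z - Gd z'
        = μ⁻¹ • (P (P (z - z') - Δ) - μ • Q (P (P (z - z') - Δ))) := by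
      have hsplit : Gd z - Gd z'
          = (P ((Q xz + q) - μ • Q (Q xz + q)) - P ((Q xz' + q) - μ • Q (Q xz' + q)))
            + ((P (μ⁻¹ • (uz - pg uz)) - μ • Q (P (μ⁻¹ • (uz - pg uz))))
              - (P (μ⁻¹ • (uz' - pg uz')) - μ • Q (P (μ⁻¹ • (uz' - pg uz'))))) := by
        simp only [hGd]
        rw [← hxz, ← hxz', ← huz, ← huz']
        module
      rw [hsplit, hT1, hT2]
      simp only [map_sub, map_smul, hPQcomm, smul_sub, smul_smul]
      match_scalars <;> field_simp <;> ring
    -- norm estimates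
    have hfirmA : ‖Δ‖^2 ≤ ⟪Δ, P (z - z') - μ • Q (P (z - z'))⟫ := by
      rw [hΔ, ← hud]
      have := hfirm uz uz'
      have e : uz - uz' = uz - uz' := rfl
      exact this
    have hr : ‖(1/2 : ℝ) • (P (z - z') - μ • Q (P (z - z'))) - Δ‖
        ≤ (1/2) * ‖P (z - z') - μ • Q (P (z - z'))‖ := by
      have hsq : ‖(1/2 : ℝ) • (P (z - z') - μ • Q (P (z - z'))) - Δ‖^2
          ≤ ((1/2) * ‖P (z - z') - μ • Q (P (z - z'))‖)^2 := by
        rw [norm_sub_sq_real, real_inner_smul_left, norm_smul, Real.norm_eq_abs]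
        have c1 : ⟪P (z - z') - μ • Q (P (z - z')), Δ⟫ = ⟪Δ, P (z - z') - μ • Q (P (z - z'))⟫ :=
          real_inner_comm _ _
        rw [c1, show |(1/2 : ℝ)| = 1/2 from by norm_num]
        nlinarith [hfirmA, sq_nonneg ‖Δ‖]
      have h1 := Real.sqrt_le_sqrt hsq
      rwa [Real.sqrt_sq (norm_nonneg _),
        Real.sqrt_sq (by positivity)] at h1
    have hdec : P (z - z') - Δ = (1/2 : ℝ) • (z - z')
        + ((1/2 : ℝ) • (P (z - z') - μ • Q (P (z - z'))) - Δ) := by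
      have h := hP2 (z - z')
      have goal' : (P (z - z') - Δ) - ((1/2:ℝ) • (z - z')
          + ((1/2:ℝ) • (P (z - z') - μ • Q (P (z - z'))) - Δ))
          = (1/2:ℝ) • ((P (z - z') + μ • Q (P (z - z'))) - (z - z')) := by module
      rw [h, sub_self, smul_zero] at goal'
      exact eq_of_sub_eq_zero goal'
    have hnormPD : ‖P (z - z') - Δ‖
        ≤ (1/2) * ‖z - z'‖ + (1/2) * ((1 - μ*m)/(1+μ*m) * ‖z - z'‖) := by
      rw [hdec]
      refine le_trans (norm_add_le _ _) ?_
      have e1 : ‖(1/2 : ℝ) • (z - z')‖ = (1/2) * ‖z - z'‖ := by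
        rw [norm_smul, Real.norm_eq_abs, abs_of_pos (by norm_num : (0:ℝ) < 1/2)]
      have e2' : (1/2) * ‖P (z - z') - μ • Q (P (z - z'))‖
          ≤ (1/2) * ((1 - μ*m)/(1+μ*m) * ‖z - z'‖) := by
        have := hAcontr (z - z'); linarith
      have e2 := le_trans hr e2'
      linarith [e1.le, e1.ge, e2]
    have hAPD := hAcontr (P (z - z') - Δ)
    rw [hGdd, norm_smul, Real.norm_eq_abs, abs_of_pos (inv_pos.mpr hμ0)]
    have hchain : μ⁻¹ * ‖P (P (z - z') - Δ) - μ • Q (P (P (z - z') - Δ))‖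
        ≤ μ⁻¹ * ((1 - μ*m)/(1+μ*m) * ((1/2) * ‖z - z'‖
            + (1/2) * ((1 - μ*m)/(1+μ*m) * ‖z - z'‖))) := by
      apply mul_le_mul_of_nonneg_left _ (le_of_lt (inv_pos.mpr hμ0))
      refine le_trans hAPD ?_
      exact mul_le_mul_of_nonneg_left hnormPD hα0
    refine le_trans hchain ?_
    rw [hLt]
    rw [show μ⁻¹ * ((1 - μ*m)/(1+μ*m) * ((1/2) * ‖z - z'‖
            + (1/2) * ((1 - μ*m)/(1+μ*m) * ‖z - z'‖)))
        = (μ⁻¹ * ((1 - μ*m)/(1+μ*m) * ((1/2) + (1/2) * ((1 - μ*m)/(1+μ*m))))) * ‖z - z'‖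
      from by ring]
    apply mul_le_mul_of_nonneg_right _ (norm_nonneg _)
    rw [show (1 - μ * m) / (μ * (1 + μ * m) ^ 2)
        = μ⁻¹ * ((1-μ*m) * (1+μ*m)⁻¹ * (1+μ*m)⁻¹) from by
      rw [pow_two]; field_simp; try ring]
    have e3 : (1 - μ*m)/(1+μ*m) * ((1/2) + (1/2) * ((1 - μ*m)/(1+μ*m)))
        = (1-μ*m) * (1+μ*m)⁻¹ * (1+μ*m)⁻¹ := by
      have hne : (1 + μ*m) ≠ 0 := by linarith
      field_simp
      ring
    rw [e3]
  refine ⟨hconvD, hDdiff, fun x y => ?_⟩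
  rw [hgradD, hgradD]
  exact hLip x y
end
end

section
/- Let f(x) = (1/2)⟨x, Qx⟩ + ⟨q, x⟩ with Q symmetric positive semidefinite with smallest eigenvalue m ≥ 0 and largest eigenvalue L > 0, let g : ℝⁿ → ℝ be convex and lower semicontinuous, and let μ ∈ (0, 1/L). Set m̃ = min{ (1 − μm)m/(1 + μm)², (1 − μL)L/(1 + μL)² }. Then the Douglas–Rachford envelope D_μ(z) = F_μ(prox_{μf}(z)) is m̃-strongly convex, i.e., D_μ − (m̃/2)‖·‖² is convex. -/
open Set RealInnerProductSpace

noncomputable section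




/-- If `a*t + c*t^2 ≥ 0` for all real `t`, then `a = 0`. -/
theorem aux_lin_zero (a c : ℝ) (h : ∀ t : ℝ, 0 ≤ a * t + c * t ^ 2) : a = 0 := by
  have hc : 0 ≤ c := by have h1 := h 1; have h2 := h (-1); nlinarith
  have hpos : (0:ℝ) < 2 * c + 1 := by linarith
  have ht := h (-(a / (2 * c + 1)))
  have hne : (2 * c + 1) ≠ 0 := ne_of_gt hpos
  rw [div_eq_mul_inv] at ht
  have hinv : (2 * c + 1) * (2 * c + 1)⁻¹ = 1 := mul_inv_cancel₀ hne
  have key : 0 ≤ (a * -(a * (2 * c + 1)⁻¹) + c * (-(a * (2 * c + 1)⁻¹)) ^ 2)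
      * ((2 * c + 1) * (2 * c + 1)) := mul_nonneg ht (by positivity)
  have expand : (a * -(a * (2 * c + 1)⁻¹) + c * (-(a * (2 * c + 1)⁻¹)) ^ 2)
      * ((2 * c + 1) * (2 * c + 1))
      = -(a ^ 2) * ((2 * c + 1) * (2 * c + 1)⁻¹) * (2 * c + 1)
        + c * a ^ 2 * (((2 * c + 1) * (2 * c + 1)⁻¹) * ((2 * c + 1) * (2 * c + 1)⁻¹)) := by
    ring
  rw [expand, hinv] at key
  nlinarith [sq_nonneg a]

/-- Discriminant inequality for a nonnegative quadratic. -/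
theorem aux_disc (A B C : ℝ) (hA : 0 ≤ A) (hC : 0 ≤ C)
    (h : ∀ t : ℝ, 0 ≤ A + 2 * B * t + C * t ^ 2) : B ^ 2 ≤ A * C := by
  rcases eq_or_lt_of_le hC with hC0 | hCpos
  · rcases eq_or_ne B 0 with rfl | hB
    · simpa using mul_nonneg hA hC
    · exfalso
      have ht := h (-(A + 1) / (2 * B))
      rw [← hC0] at ht
      have he : 2 * B * (-(A + 1) / (2 * B)) = -(A + 1) := by
        field_simp
      rw [he] at ht
      nlinarith
  · have ht := h (-(B / C))
    have hC' : C ≠ 0 := ne_of_gt hCpos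
    rw [div_eq_mul_inv] at ht
    have hinv : C * C⁻¹ = 1 := mul_inv_cancel₀ hC'
    have key : 0 ≤ (A + 2 * B * -(B * C⁻¹) + C * (-(B * C⁻¹)) ^ 2) * C :=
      mul_nonneg ht hCpos.le
    have expand : (A + 2 * B * -(B * C⁻¹) + C * (-(B * C⁻¹)) ^ 2) * C
        = A * C - 2 * B ^ 2 * (C * C⁻¹) + B ^ 2 * (C * C⁻¹) * (C * C⁻¹) := by ring
    rw [expand, hinv] at key
    nlinarith

/-- Key scalar inequality. -/
theorem scalar_key (m L μ mt α β γ : ℝ) (hm : 0 ≤ m) (hL : 0 < L) (hmL : m ≤ L)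
    (hμ : 0 < μ) (hμL : μ * L < 1) (hmt0 : 0 ≤ mt)
    (hem : mt * (1 + μ * m) ^ 2 ≤ (1 - μ * m) * m)
    (heL : mt * (1 + μ * L) ^ 2 ≤ (1 - μ * L) * L)
    (hα : 0 ≤ α) (hβm : m * α ≤ β) (hβL : β ≤ L * α) (hγ0 : 0 ≤ γ)
    (hγ : γ ≤ (m + L) * β - m * L * α) :
    mt * (α + 2 * μ * β + μ ^ 2 * γ) ≤ β - μ * γ := by
  rcases eq_or_lt_of_le hα with hα0 | hαpos
  · have hαz : α = 0 := hα0.symm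
    have hβ0 : β = 0 := le_antisymm (by nlinarith) (by nlinarith)
    have hγz : γ = 0 := le_antisymm (by nlinarith) hγ0
    rw [hβ0, hγz, hαz]; norm_num
  · rcases eq_or_lt_of_le hmL with hmLeq | hmLlt
    · subst hmLeq
      have hβ : β = m * α := le_antisymm hβL hβm
      subst hβ
      nlinarith [mul_nonneg hα (sub_nonneg.2 hem), mul_nonneg hmt0 hμ.le,
        mul_nonneg (mul_nonneg hmt0 hμ.le) hμ.le]
    · by_contra hcon
      push_neg at hcon
      have hGγ : 0 ≤ (m + L) * β - m * L * α - γ := by linarith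
      nlinarith [mul_nonneg (mul_nonneg (sub_nonneg.2 hβL) hα) (sub_nonneg.2 hem),
        mul_nonneg (mul_nonneg (sub_nonneg.2 hβm) hα) (sub_nonneg.2 heL),
        mul_nonneg (mul_nonneg (mul_nonneg (sub_nonneg.2 hmLlt.le) hα) hμ.le) hGγ,
        mul_nonneg (mul_nonneg (mul_nonneg (sub_nonneg.2 hmLlt.le) hα)
          (mul_nonneg hmt0 (mul_nonneg hμ.le hμ.le))) hGγ,
        mul_pos (sub_pos.2 hmLlt) hαpos]

variable {E : Type*} [NormedAddCommGroup E] [InnerProductSpace ℝ E]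

/-- The joint quadratic appearing in the DR envelope. -/
def PsiF (Q : E →L[ℝ] E) (q : E) (μ mt : ℝ) (x u : E) : ℝ :=
  (1/2) * ⟪x, Q x⟫ + ⟪q, x⟫
    + ⟪u - x + μ • (Q x + q), u - x + μ • (Q x + q)⟫ / (2*μ)
    - μ/2 * ⟪Q x + q, Q x + q⟫
    - mt/2 * ⟪x + μ • (Q x + q), x + μ • (Q x + q)⟫

/-- Pure quadratic part of `PsiF` along a direction. -/
def PsiC (Q : E →L[ℝ] E) (μ mt : ℝ) (d w : E) : ℝ :=
  (1/2) * ⟪d, Q d⟫ + ⟪w - d + μ • Q d, w - d + μ • Q d⟫ / (2*μ)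
    - μ/2 * ⟪Q d, Q d⟫ - mt/2 * ⟪d + μ • Q d, d + μ • Q d⟫

/-- Linear part of `PsiF` along a direction. -/
def PsiB (Q : E →L[ℝ] E) (q : E) (μ mt : ℝ) (x u d w : E) : ℝ :=
  (1/2) * (⟪x, Q d⟫ + ⟪d, Q x⟫) + ⟪q, d⟫
    + (⟪u - x + μ • (Q x + q), w - d + μ • Q d⟫
        + ⟪w - d + μ • Q d, u - x + μ • (Q x + q)⟫) / (2*μ)
    - μ/2 * (⟪Q x + q, Q d⟫ + ⟪Q d, Q x + q⟫)
    - mt/2 * (⟪x + μ • (Q x + q), d + μ • Q d⟫ + ⟪d + μ • Q d, x + μ • (Q x + q)⟫)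

theorem Psi_eval (Q : E →L[ℝ] E) (q : E) (μ mt : ℝ) (x u d w : E) (t : ℝ) :
    PsiF Q q μ mt (x + t • d) (u + t • w)
      = PsiF Q q μ mt x u + t * PsiB Q q μ mt x u d w + t^2 * PsiC Q μ mt d w := by
  have hQx : Q (x + t • d) = Q x + t • Q d := by simp [map_add, map_smul]
  have hA : (u + t • w) - (x + t • d) + μ • (Q (x + t • d) + q)
      = (u - x + μ • (Q x + q)) + t • (w - d + μ • Q d) := by
    rw [hQx]; module
  have hP : Q (x + t • d) + q = (Q x + q) + t • Q d := by rw [hQx]; module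
  have hZ : (x + t • d) + μ • (Q (x + t • d) + q)
      = (x + μ • (Q x + q)) + t • (d + μ • Q d) := by
    rw [hQx]; module
  rw [PsiF, PsiF, PsiB, PsiC, hA, hZ, hP, hQx]
  simp only [inner_add_left, inner_add_right, real_inner_smul_left, real_inner_smul_right]
  ring

theorem Psi_combo (Q : E →L[ℝ] E) (q : E) (μ mt : ℝ)
    (hC : ∀ d w : E, 0 ≤ PsiC Q μ mt d w)
    (x₁ x₂ u₁ u₂ : E) (a b : ℝ) (ha : 0 ≤ a) (hb : 0 ≤ b) (hab : a + b = 1) :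
    PsiF Q q μ mt (a • x₁ + b • x₂) (a • u₁ + b • u₂)
      ≤ a * PsiF Q q μ mt x₁ u₁ + b * PsiF Q q μ mt x₂ u₂ := by
  have hb' : b = 1 - a := by linarith
  subst hb'
  have hx : a • x₁ + (1 - a) • x₂ = x₂ + a • (x₁ - x₂) := by module
  have hu : a • u₁ + (1 - a) • u₂ = u₂ + a • (u₁ - u₂) := by module
  have hx1 : x₁ = x₂ + (1:ℝ) • (x₁ - x₂) := by module
  have hu1 : u₁ = u₂ + (1:ℝ) • (u₁ - u₂) := by module
  have e1 := Psi_eval Q q μ mt x₂ u₂ (x₁ - x₂) (u₁ - u₂) a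
  have e2 := Psi_eval Q q μ mt x₂ u₂ (x₁ - x₂) (u₁ - u₂) 1
  rw [hx, hu, e1]
  rw [show PsiF Q q μ mt x₁ u₁ = PsiF Q q μ mt (x₂ + (1:ℝ) • (x₁ - x₂)) (u₂ + (1:ℝ) • (u₁ - u₂))
      from by rw [← hx1, ← hu1], e2]
  have hCC := hC (x₁ - x₂) (u₁ - u₂)
  nlinarith [mul_nonneg (mul_nonneg ha (by linarith : (0:ℝ) ≤ 1 - a)) hCC]

/-- `‖Q d‖² ≤ (m+L)⟪d,Qd⟫ - mL‖d‖²` for a symmetric operator with spectrum in `[m, L]`. -/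
theorem op_sq (Q : E →L[ℝ] E) (m L : ℝ) (hmL : m ≤ L)
    (hQsym : ∀ x y : E, ⟪Q x, y⟫ = ⟪x, Q y⟫)
    (hQm' : ∀ x : E, m * ⟪x, x⟫ ≤ ⟪x, Q x⟫)
    (hQL' : ∀ x : E, ⟪x, Q x⟫ ≤ L * ⟪x, x⟫) (d : E) :
    ⟪Q d, Q d⟫ ≤ (m + L) * ⟪d, Q d⟫ - m * L * ⟪d, d⟫ := by
  set B : E → E := fun v => Q v - m • v with hB
  have hBsym : ∀ x y : E, ⟪B x, y⟫ = ⟪x, B y⟫ := by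
    intro x y
    simp only [hB, inner_sub_left, inner_sub_right, real_inner_smul_left,
      real_inner_smul_right, hQsym]
  have hBpos : ∀ x : E, 0 ≤ ⟪x, B x⟫ := by
    intro x
    simp only [hB, inner_sub_right, real_inner_smul_right]
    linarith [hQm' x]
  have hBbd : ∀ x : E, ⟪x, B x⟫ ≤ (L - m) * ⟪x, x⟫ := by
    intro x
    simp only [hB, inner_sub_right, real_inner_smul_right]
    linarith [hQL' x]
  have hBlin : ∀ (x y : E) (t : ℝ), B (x + t • y) = B x + t • B y := by
    intro x y t
    simp only [hB, map_add, map_smul, smul_sub, smul_smul, mul_comm]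
    module
  have hCS : ∀ x y : E, ⟪x, B y⟫ ^ 2 ≤ ⟪x, B x⟫ * ⟪y, B y⟫ := by
    intro x y
    refine aux_disc _ _ _ (hBpos x) (hBpos y) fun t => ?_
    have h0 := hBpos (x + t • y)
    rw [hBlin] at h0
    simp only [inner_add_left, inner_add_right, real_inner_smul_left,
      real_inner_smul_right] at h0
    have hyx : ⟪y, B x⟫ = ⟪x, B y⟫ := by rw [real_inner_comm, hBsym]
    rw [hyx] at h0
    nlinarith [h0]
  have hN : (0:ℝ) ≤ ⟪B d, B d⟫ := real_inner_self_nonneg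
  have hNkey : ⟪B d, B d⟫ ≤ (L - m) * ⟪d, B d⟫ := by
    have h1 := hCS d (B d)
    have h2 : ⟪d, B (B d)⟫ = ⟪B d, B d⟫ := (hBsym d (B d)).symm
    have h3 := hBbd (B d)
    rcases eq_or_lt_of_le hN with h0 | hpos
    · rw [← h0]
      exact mul_nonneg (by linarith) (hBpos d)
    · nlinarith [hBpos d]
  have hexp : ⟪B d, B d⟫ = ⟪Q d, Q d⟫ - 2 * m * ⟪d, Q d⟫ + m ^ 2 * ⟪d, d⟫ := by
    simp only [hB, inner_sub_left, inner_sub_right, real_inner_smul_left,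
      real_inner_smul_right, hQsym d d]
    ring
  have hexp2 : ⟪d, B d⟫ = ⟪d, Q d⟫ - m * ⟪d, d⟫ := by
    simp only [hB, inner_sub_right, real_inner_smul_right]
  rw [hexp, hexp2] at hNkey
  nlinarith [hNkey]

theorem PsiC_nonneg (Q : E →L[ℝ] E) (m L μ mt : ℝ)
    (hm : 0 ≤ m) (hL : 0 < L) (hmL : m ≤ L) (hμ : 0 < μ) (hμL : μ * L < 1) (hmt0 : 0 ≤ mt)
    (hem : mt * (1 + μ * m) ^ 2 ≤ (1 - μ * m) * m)
    (heL : mt * (1 + μ * L) ^ 2 ≤ (1 - μ * L) * L)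
    (hQsym : ∀ x y : E, ⟪Q x, y⟫ = ⟪x, Q y⟫)
    (hQm' : ∀ x : E, m * ⟪x, x⟫ ≤ ⟪x, Q x⟫)
    (hQL' : ∀ x : E, ⟪x, Q x⟫ ≤ L * ⟪x, x⟫)
    (d w : E) : 0 ≤ PsiC Q μ mt d w := by
  have hγ := op_sq Q m L hmL hQsym hQm' hQL' d
  have key := scalar_key m L μ mt ⟪d, d⟫ ⟪d, Q d⟫ ⟪Q d, Q d⟫ hm hL hmL hμ hμL hmt0 hem heL
    real_inner_self_nonneg (hQm' d) (hQL' d) real_inner_self_nonneg hγ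
  have h1 : (0:ℝ) ≤ ⟪w - d + μ • Q d, w - d + μ • Q d⟫ / (2 * μ) :=
    div_nonneg real_inner_self_nonneg (by linarith)
  have hz : ⟪d + μ • Q d, d + μ • Q d⟫
      = ⟪d, d⟫ + 2 * μ * ⟪d, Q d⟫ + μ ^ 2 * ⟪Q d, Q d⟫ := by
    simp only [inner_add_left, inner_add_right, real_inner_smul_left, real_inner_smul_right,
      hQsym d d]
    ring
  rw [PsiC, hz]
  nlinarith [key, h1]

/-- First-order characterization of the proximal point of a convex quadratic. -/
theorem prox_char (Q : E →L[ℝ] E) (q : E) (μ : ℝ) (hμ : 0 < μ)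
    (f : E → ℝ) (hf : ∀ y, f y = (1/2) * ⟪y, Q y⟫ + ⟪q, y⟫)
    (hQsym : ∀ x y : E, ⟪Q x, y⟫ = ⟪x, Q y⟫)
    (hQpos : ∀ x : E, 0 ≤ ⟪x, Q x⟫)
    (v x : E)
    (hmin : IsMinOn (fun z => f z + ‖z - v‖ ^ 2 / (2 * μ)) univ x) :
    x + μ • Q x + μ • q = v := by
  have key : ∀ w : E, ⟪Q x + q + μ⁻¹ • (x - v), w⟫ = 0 := by
    intro w
    have hq : ∀ t : ℝ, 0 ≤ ((1/2) * (⟪x, Q w⟫ + ⟪w, Q x⟫) + ⟪q, w⟫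
        + (⟪x - v, w⟫ + ⟪w, x - v⟫) / (2 * μ)) * t
        + ((1/2) * ⟪w, Q w⟫ + ⟪w, w⟫ / (2 * μ)) * t ^ 2 := by
      intro t
      have h0 := isMinOn_iff.mp hmin (x + t • w) (mem_univ _)
      have hQx : Q (x + t • w) = Q x + t • Q w := by simp [map_add, map_smul]
      have hvec : x + t • w - v = (x - v) + t • w := by module
      have hexp : (f (x + t • w) + ‖x + t • w - v‖ ^ 2 / (2 * μ))
          - (f x + ‖x - v‖ ^ 2 / (2 * μ))
          = ((1/2) * (⟪x, Q w⟫ + ⟪w, Q x⟫) + ⟪q, w⟫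
              + (⟪x - v, w⟫ + ⟪w, x - v⟫) / (2 * μ)) * t
            + ((1/2) * ⟪w, Q w⟫ + ⟪w, w⟫ / (2 * μ)) * t ^ 2 := by
        rw [hf, hf, ← real_inner_self_eq_norm_sq, ← real_inner_self_eq_norm_sq,
          hQx, hvec]
        simp only [inner_add_left, inner_add_right, real_inner_smul_left,
          real_inner_smul_right]
        ring
      linarith [hexp, h0]
    have hlin := aux_lin_zero _ _ hq
    have hAin : (1/2) * (⟪x, Q w⟫ + ⟪w, Q x⟫) + ⟪q, w⟫
        + (⟪x - v, w⟫ + ⟪w, x - v⟫) / (2 * μ) = ⟪Q x + q + μ⁻¹ • (x - v), w⟫ := by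
      simp only [inner_add_left, real_inner_smul_left]
      rw [real_inner_comm w (Q x), real_inner_comm w (x - v), ← hQsym x w]
      field_simp
      linear_combination (-μ : ℝ) * real_inner_comm (Q x) w
    rw [← hAin, hlin]
  have hr : Q x + q + μ⁻¹ • (x - v) = 0 := by
    have := key (Q x + q + μ⁻¹ • (x - v))
    exact inner_self_eq_zero.mp this
  have hsc : μ • (Q x + q + μ⁻¹ • (x - v)) = μ • Q x + μ • q + (x - v) := by
    rw [smul_add, smul_add, smul_smul, mul_inv_cancel₀ hμ.ne', one_smul]
  have h0 : μ • Q x + μ • q + (x - v) = 0 := by rw [← hsc, hr, smul_zero]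
  have e : x + μ • Q x + μ • q - v = μ • Q x + μ • q + (x - v) := by module
  have : x + μ • Q x + μ • q - v = 0 := by rw [e, h0]
  exact sub_eq_zero.mp this

/-- Injectivity of `x ↦ x + μ Q x + μ q` for `Q ⪰ 0`, `μ > 0`. -/
theorem prox_inj (Q : E →L[ℝ] E) (q : E) (μ : ℝ) (hμ : 0 < μ)
    (hQpos : ∀ x : E, 0 ≤ ⟪x, Q x⟫) (x y : E)
    (h : x + μ • Q x + μ • q = y + μ • Q y + μ • q) : x = y := by
  set d := x - y with hd
  have hQd : Q d = Q x - Q y := by simp [hd, map_sub]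
  have hdd : d + μ • Q d = 0 := by
    rw [hQd, hd]
    have : x - y + μ • (Q x - Q y) = (x + μ • Q x + μ • q) - (y + μ • Q y + μ • q) := by
      module
    rw [this, h, sub_self]
  have h1 : ⟪d, d + μ • Q d⟫ = 0 := by rw [hdd, inner_zero_right]
  have h2 : ⟪d, d⟫ + μ * ⟪d, Q d⟫ = 0 := by
    rw [← h1]; simp [inner_add_right, real_inner_smul_right]
  have h3 : ⟪d, d⟫ ≤ 0 := by nlinarith [hQpos d, real_inner_self_nonneg (x := d)]
  have h4 : d = 0 := by
    have := le_antisymm h3 (real_inner_self_nonneg (x := d))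
    exact inner_self_eq_zero.mp this
  have := sub_eq_zero.mp (hd ▸ h4)
  exact this

variable {E : Type*} [NormedAddCommGroup E] [InnerProductSpace ℝ E]

theorem grad_quad [CompleteSpace E] (Q : E →L[ℝ] E) (q : E)
    (hQsym : ∀ x y : E, ⟪Q x, y⟫ = ⟪x, Q y⟫)
    (f : E → ℝ) (hf : ∀ y, f y = (1/2) * ⟪y, Q y⟫ + ⟪q, y⟫) (x : E) :
    gradient f x = Q x + q := by
  have hfe : f = fun y => (1/2) * ⟪y, Q y⟫ + ⟪q, y⟫ := funext hf
  have h1 : HasFDerivAt (fun y : E => ⟪y, Q y⟫)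
      ((fderivInnerCLM ℝ (x, Q x)).comp
        ((ContinuousLinearMap.id ℝ E).prod Q)) x :=
    (hasFDerivAt_id x).inner ℝ Q.hasFDerivAt
  have h2 : HasFDerivAt (fun y : E => ⟪q, y⟫) (innerSL ℝ q) x :=
    (innerSL ℝ q).hasFDerivAt
  have h3 := (h1.const_mul (1/2 : ℝ)).add h2
  have heq : (1/2 : ℝ) • ((fderivInnerCLM ℝ (x, Q x)).comp
        ((ContinuousLinearMap.id ℝ E).prod Q)) + innerSL ℝ q
      = (InnerProductSpace.toDual ℝ E) (Q x + q) := by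
    ext y
    simp only [ContinuousLinearMap.add_apply, ContinuousLinearMap.smul_apply,
      ContinuousLinearMap.comp_apply, ContinuousLinearMap.prod_apply,
      ContinuousLinearMap.coe_id', id_eq, fderivInnerCLM_apply,
      InnerProductSpace.toDual_apply_apply, innerSL_apply_apply, inner_add_left, smul_eq_mul]
    linear_combination (-(1:ℝ)/2) * (hQsym x y) + (-(1:ℝ)/2) * (real_inner_comm y (Q x))
  have hgr : HasGradientAt f (Q x + q) x := by
    rw [hasGradientAt_iff_hasFDerivAt, ← heq, hfe]
    exact h3
  exact hgr.gradient

theorem g_linear_lb [FiniteDimensional ℝ E] (g : E → ℝ) (hg : ConvexOn ℝ univ g) :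
    ∃ K : ℝ, 0 ≤ K ∧ ∀ u : E, -(K * (1 + ‖u‖)) ≤ g u := by
  have hgc : ContinuousOn g (Metric.closedBall (0:E) 1) :=
    (hg.continuousOn isOpen_univ).mono (subset_univ _)
  obtain ⟨y₀, hy₀K, hy₀min⟩ := (isCompact_closedBall (0:E) 1).exists_isMinOn
    ⟨0, by simp⟩ hgc
  set c₀ := g y₀ with hc₀
  refine ⟨|c₀| + |g 0| + 1, by positivity, fun u => ?_⟩
  rcases le_or_gt ‖u‖ 1 with hu | hu
  · have h1 : c₀ ≤ g u := hy₀min (by simpa [Metric.mem_closedBall, dist_eq_norm] using hu)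
    have h2 : (0:ℝ) ≤ ‖u‖ := norm_nonneg u
    nlinarith [abs_nonneg c₀, abs_nonneg (g 0), neg_abs_le c₀]
  · set s := ‖u‖ with hs
    have hs1 : 1 < s := hu
    have hspos : 0 < s := by linarith
    have ht : (0:ℝ) < s⁻¹ := inv_pos.mpr hspos
    have hts : s⁻¹ * s = 1 := inv_mul_cancel₀ hspos.ne'
    have ht1 : s⁻¹ ≤ 1 := by
      rw [← hts]; nlinarith
    have hconv := hg.2 (mem_univ u) (mem_univ (0:E)) ht.le (by linarith : (0:ℝ) ≤ 1 - s⁻¹)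
      (by ring)
    simp only [smul_zero, add_zero] at hconv
    have hball : s⁻¹ • u ∈ Metric.closedBall (0:E) 1 := by
      simp only [Metric.mem_closedBall, dist_eq_norm, sub_zero, norm_smul,
        Real.norm_eq_abs, abs_inv, abs_of_pos hspos]
      rw [← hs, hts]
    have h1 : c₀ ≤ g (s⁻¹ • u) := hy₀min hball
    -- g u ≥ s * (c₀ - (1 - s⁻¹) * g 0)
    simp only [smul_eq_mul] at hconv
    have h2 : s⁻¹ * g u ≥ c₀ - (1 - s⁻¹) * g 0 := by linarith
    have h3 : g u ≥ s * (c₀ - (1 - s⁻¹) * g 0) := by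
      have := mul_le_mul_of_nonneg_left h2 hspos.le
      calc g u = s * (s⁻¹ * g u) := by rw [← mul_assoc, mul_inv_cancel₀ hspos.ne', one_mul]
        _ ≥ s * (c₀ - (1 - s⁻¹) * g 0) := by nlinarith
    have hexp : s * (c₀ - (1 - s⁻¹) * g 0) = s * c₀ - s * g 0 + (s * s⁻¹) * g 0 := by ring
    rw [mul_inv_cancel₀ hspos.ne', one_mul] at hexp
    nlinarith [abs_nonneg c₀, abs_nonneg (g 0), neg_abs_le c₀, le_abs_self c₀,
      neg_abs_le (g 0), le_abs_self (g 0), hs1]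

theorem moreau_bddBelow_s10 [FiniteDimensional ℝ E] (g : E → ℝ) (hg : ConvexOn ℝ univ g)
    (μ : ℝ) (hμ : 0 < μ) (v : E) :
    BddBelow (range fun u : E => g u + ‖u - v‖ ^ 2 / (2 * μ)) := by
  obtain ⟨K, hK0, hK⟩ := g_linear_lb g hg
  refine ⟨-K - K * ‖v‖ - μ * K ^ 2 / 2, ?_⟩
  rintro t ⟨u, rfl⟩
  have h2μ : (0:ℝ) < 2 * μ := by linarith
  have hX : (‖u‖ - ‖v‖) ^ 2 ≤ ‖u - v‖ ^ 2 := by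
    have h1 : |‖u‖ - ‖v‖| ≤ ‖u - v‖ := abs_norm_sub_norm_le u v
    calc (‖u‖ - ‖v‖) ^ 2 = |‖u‖ - ‖v‖| ^ 2 := (sq_abs _).symm
      _ ≤ ‖u - v‖ ^ 2 := by nlinarith [abs_nonneg (‖u‖ - ‖v‖), norm_nonneg (u - v)]
  have hq : 2 * μ * (K * ‖u‖ - K * ‖v‖ - μ * K ^ 2 / 2) ≤ (‖u‖ - ‖v‖) ^ 2 := by
    nlinarith [sq_nonneg (‖u‖ - ‖v‖ - μ * K)]
  have h4 : K * ‖u‖ - K * ‖v‖ - μ * K ^ 2 / 2 ≤ (‖u‖ - ‖v‖) ^ 2 / (2 * μ) := by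
    rw [le_div_iff₀ h2μ]; nlinarith [hq]
  have h5 : (‖u‖ - ‖v‖) ^ 2 / (2 * μ) ≤ ‖u - v‖ ^ 2 / (2 * μ) := by gcongr
  have h6 := hK u
  simp only
  linarith [h4, h5, h6]



set_option maxHeartbeats 2000000 in
/-- Lemma 2, Douglas–Rachford strong convexity: for a convex
quadratic `f`, the Douglas–Rachford envelope is
`m̃ = min{(1 - μm)m/(1 + μm)², (1 - μL)L/(1 + μL)²}`-strongly convex. -/
theorem DR_envelope_strongly_convex_quadratic {n : ℕ}
    (Q : EuclideanSpace ℝ (Fin n) →L[ℝ] EuclideanSpace ℝ (Fin n))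
    (q : EuclideanSpace ℝ (Fin n)) (g : EuclideanSpace ℝ (Fin n) → ℝ)
    (m L μ mt : ℝ)
    (hQsym : ∀ x y : EuclideanSpace ℝ (Fin n), ⟪Q x, y⟫ = ⟪x, Q y⟫)
    (hm : 0 ≤ m) (hL : 0 < L)
    (hQm : ∀ x : EuclideanSpace ℝ (Fin n), m * ‖x‖ ^ 2 ≤ ⟪x, Q x⟫)
    (hQmmin : ∃ x : EuclideanSpace ℝ (Fin n), x ≠ 0 ∧ ⟪x, Q x⟫ = m * ‖x‖ ^ 2)
    (hQL : ∀ x : EuclideanSpace ℝ (Fin n), ⟪x, Q x⟫ ≤ L * ‖x‖ ^ 2)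
    (hQLmax : ∃ x : EuclideanSpace ℝ (Fin n), x ≠ 0 ∧ ⟪x, Q x⟫ = L * ‖x‖ ^ 2)
    (f : EuclideanSpace ℝ (Fin n) → ℝ)
    (hf : ∀ x, f x = (1 / 2) * ⟪x, Q x⟫ + ⟪q, x⟫)
    (hgconv : ConvexOn ℝ univ g) (hglsc : LowerSemicontinuous g)
    (hμ : μ ∈ Ioo 0 (1 / L))
    (hmt : mt = min ((1 - μ * m) * m / (1 + μ * m) ^ 2)
                    ((1 - μ * L) * L / (1 + μ * L) ^ 2))
    (M : EuclideanSpace ℝ (Fin n) → ℝ)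
    (hM : ∀ v, M v = ⨅ z : EuclideanSpace ℝ (Fin n), (g z + ‖z - v‖ ^ 2 / (2 * μ)))
    (Fμ : EuclideanSpace ℝ (Fin n) → ℝ)
    (hFμ : ∀ x, Fμ x = f x + M (x - μ • gradient f x) - μ / 2 * ‖gradient f x‖ ^ 2)
    (proxf : EuclideanSpace ℝ (Fin n) → EuclideanSpace ℝ (Fin n))
    (hproxf : ∀ v, IsMinOn (fun z => f z + ‖z - v‖ ^ 2 / (2 * μ)) univ (proxf v))
    (Dμ : EuclideanSpace ℝ (Fin n) → ℝ)
    (hDμ : ∀ z, Dμ z = Fμ (proxf z)) :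
    ConvexOn ℝ univ (fun z => Dμ z - mt / 2 * ‖z‖ ^ 2) := by

  have hμ0 : 0 < μ := hμ.1
  have hμL : μ * L < 1 := by
    have h := hμ.2
    rw [lt_div_iff₀ hL] at h
    linarith
  have hmL : m ≤ L := by
    obtain ⟨x0, hx0, he⟩ := hQmmin
    have h1 := hQL x0
    have h2 : 0 < ‖x0‖ ^ 2 := by
      have : ‖x0‖ ≠ 0 := norm_ne_zero_iff.mpr hx0
      positivity
    nlinarith [he ▸ h1]
  have hμm : μ * m < 1 := by nlinarith
  have hd1 : (0:ℝ) < (1 + μ * m) ^ 2 := by nlinarith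
  have hd2 : (0:ℝ) < (1 + μ * L) ^ 2 := by nlinarith
  have hem : mt * (1 + μ * m) ^ 2 ≤ (1 - μ * m) * m := by
    have h := min_le_left ((1 - μ * m) * m / (1 + μ * m) ^ 2)
      ((1 - μ * L) * L / (1 + μ * L) ^ 2)
    rw [← hmt] at h
    exact (le_div_iff₀ hd1).mp h
  have heL : mt * (1 + μ * L) ^ 2 ≤ (1 - μ * L) * L := by
    have h := min_le_right ((1 - μ * m) * m / (1 + μ * m) ^ 2)
      ((1 - μ * L) * L / (1 + μ * L) ^ 2)
    rw [← hmt] at h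
    exact (le_div_iff₀ hd2).mp h
  have hmt0 : 0 ≤ mt := by
    rw [hmt]
    apply le_min
    · exact div_nonneg (mul_nonneg (by linarith) hm) hd1.le
    · exact div_nonneg (mul_nonneg (by linarith) hL.le) hd2.le
  have hQm' : ∀ x : EuclideanSpace ℝ (Fin n), m * ⟪x, x⟫ ≤ ⟪x, Q x⟫ := fun x => by
    rw [real_inner_self_eq_norm_sq]; exact hQm x
  have hQL' : ∀ x : EuclideanSpace ℝ (Fin n), ⟪x, Q x⟫ ≤ L * ⟪x, x⟫ := fun x => by
    rw [real_inner_self_eq_norm_sq]; exact hQL x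
  have hQpos : ∀ x : EuclideanSpace ℝ (Fin n), 0 ≤ ⟪x, Q x⟫ := fun x =>
    le_trans (by positivity : (0:ℝ) ≤ m * ‖x‖ ^ 2) (hQm x)
  have hgrad : ∀ x, gradient f x = Q x + q := fun x => grad_quad Q q hQsym f hf x
  have hprox : ∀ v, proxf v + μ • Q (proxf v) + μ • q = v := fun v =>
    prox_char Q q μ hμ0 f hf hQsym hQpos v (proxf v) (hproxf v)
  have hbdd : ∀ v : EuclideanSpace ℝ (Fin n),
      BddBelow (range fun u => g u + ‖u - v‖ ^ 2 / (2 * μ)) := fun v =>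
    moreau_bddBelow_s10 g hgconv μ hμ0 v
  have hCpos : ∀ d w : EuclideanSpace ℝ (Fin n), 0 ≤ PsiC Q μ mt d w := fun d w =>
    PsiC_nonneg Q m L μ mt hm hL hmL hμ0 hμL hmt0 hem heL hQsym hQm' hQL' d w
  have hident : ∀ x u : EuclideanSpace ℝ (Fin n),
      f x + (g u + ‖u - (x - μ • (Q x + q))‖ ^ 2 / (2 * μ)) - μ / 2 * ‖Q x + q‖ ^ 2
        - mt / 2 * ‖x + μ • Q x + μ • q‖ ^ 2 = PsiF Q q μ mt x u + g u := by
    intro x u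
    rw [hf]
    simp only [← real_inner_self_eq_norm_sq]
    have e1 : u - (x - μ • (Q x + q)) = u - x + μ • (Q x + q) := by module
    have e2 : x + μ • Q x + μ • q = x + μ • (Q x + q) := by module
    rw [e1, e2, PsiF]
    ring
  have hup : ∀ z u : EuclideanSpace ℝ (Fin n),
      Dμ z - mt / 2 * ‖z‖ ^ 2 ≤ PsiF Q q μ mt (proxf z) u + g u := by
    intro z u
    rw [hDμ, hFμ, hgrad]
    have hMle : M (proxf z - μ • (Q (proxf z) + q))
        ≤ g u + ‖u - (proxf z - μ • (Q (proxf z) + q))‖ ^ 2 / (2 * μ) := by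
      rw [hM]
      exact ciInf_le (hbdd _) u
    have hznorm : ‖z‖ ^ 2 = ‖proxf z + μ • Q (proxf z) + μ • q‖ ^ 2 := by
      rw [hprox z]
    rw [hznorm]
    have hid := hident (proxf z) u
    linarith [hMle, hid]
  have hlow : ∀ (z : EuclideanSpace ℝ (Fin n)) (ε : ℝ), 0 < ε →
      ∃ u : EuclideanSpace ℝ (Fin n),
        PsiF Q q μ mt (proxf z) u + g u ≤ (Dμ z - mt / 2 * ‖z‖ ^ 2) + ε := by
    intro z ε hε
    set v := proxf z - μ • (Q (proxf z) + q) with hv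
    have h1 : (⨅ u : EuclideanSpace ℝ (Fin n), (g u + ‖u - v‖ ^ 2 / (2 * μ))) < M v + ε := by
      rw [hM]
      exact lt_add_of_pos_right _ hε
    obtain ⟨u, hu⟩ := exists_lt_of_ciInf_lt h1
    refine ⟨u, ?_⟩
    rw [hDμ, hFμ, hgrad]
    have hznorm : ‖z‖ ^ 2 = ‖proxf z + μ • Q (proxf z) + μ • q‖ ^ 2 := by
      rw [hprox z]
    rw [hznorm]
    have hid := hident (proxf z) u
    rw [← hv] at hid
    linarith [hu, hid]
  refine ⟨convex_univ, ?_⟩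
  intro z₁ _ z₂ _ a b ha hb hab
  simp only [smul_eq_mul]
  apply le_of_forall_pos_le_add
  intro ε hε
  obtain ⟨u₁, hu₁⟩ := hlow z₁ (ε / 2) (by linarith)
  obtain ⟨u₂, hu₂⟩ := hlow z₂ (ε / 2) (by linarith)
  have hxθ : proxf (a • z₁ + b • z₂) = a • proxf z₁ + b • proxf z₂ := by
    apply prox_inj Q q μ hμ0 hQpos
    rw [hprox (a • z₁ + b • z₂)]
    have hQ : Q (a • proxf z₁ + b • proxf z₂)
        = a • Q (proxf z₁) + b • Q (proxf z₂) := by simp [map_add, map_smul]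
    have e : a • proxf z₁ + b • proxf z₂ + μ • Q (a • proxf z₁ + b • proxf z₂) + μ • q
        = a • (proxf z₁ + μ • Q (proxf z₁) + μ • q)
          + b • (proxf z₂ + μ • Q (proxf z₂) + μ • q) := by
      rw [hQ]
      have hb' : b = 1 - a := by linarith
      subst hb'
      module
    rw [e, hprox z₁, hprox z₂]
  have h1 := hup (a • z₁ + b • z₂) (a • u₁ + b • u₂)
  rw [hxθ] at h1
  have h2 := Psi_combo Q q μ mt hCpos (proxf z₁) (proxf z₂) u₁ u₂ a b ha hb hab
  have h3 := hgconv.2 (mem_univ u₁) (mem_univ u₂) ha hb hab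
  simp only [smul_eq_mul] at h3
  have h4 : a * (PsiF Q q μ mt (proxf z₁) u₁ + g u₁)
      ≤ a * ((Dμ z₁ - mt / 2 * ‖z₁‖ ^ 2) + ε / 2) := mul_le_mul_of_nonneg_left hu₁ ha
  have h5 : b * (PsiF Q q μ mt (proxf z₂) u₂ + g u₂)
      ≤ b * ((Dμ z₂ - mt / 2 * ‖z₂‖ ^ 2) + ε / 2) := mul_le_mul_of_nonneg_left hu₂ hb
  have h6 : a * (ε / 2) + b * (ε / 2) = ε / 2 := by
    rw [← add_mul, hab, one_mul]
  nlinarith [h1, h2, h3, h4, h5, h6]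
end
end

section
/- Let 0 < m ≤ L be real numbers with L/m ≥ 2, let k ≥ 2 be a real number, and set μ = 1/(kL). Then the forward–backward envelope condition number satisfies (2(1 − μm)/μ) / min{(1 − μm)m, (1 − μL)L} ≤ 2k(L/m), and the Douglas–Rachford envelope condition number satisfies ((1 − μm)/(μ(1 + μm)²)) / min{ (1 − μm)m/(1 + μm)², (1 − μL)L/(1 + μL)² } ≤ 2k(L/m). -/
/-- for `μ = 1/(kL)` with `k ≥ 2` and condition number
`κ = L/m ≥ 2`, the condition numbers of the forward–backward and
Douglas–Rachford envelopes are both bounded by `2kκ`. -/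
theorem envelope_condition_number_bound (m L k μ : ℝ)
    (hm : 0 < m) (hmL : m ≤ L) (hκ : 2 ≤ L / m) (hk : 2 ≤ k)
    (hμ : μ = 1 / (k * L)) :
    (2 * (1 - μ * m) / μ) / min ((1 - μ * m) * m) ((1 - μ * L) * L) ≤
        2 * k * (L / m) ∧
    ((1 - μ * m) / (μ * (1 + μ * m) ^ 2)) /
        min ((1 - μ * m) * m / (1 + μ * m) ^ 2)
            ((1 - μ * L) * L / (1 + μ * L) ^ 2) ≤
        2 * k * (L / m) := by
  have hL : 0 < L := hm.trans_le hmL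
  have hk0 : (0:ℝ) < k := by linarith
  have hμ0 : 0 < μ := by rw [hμ]; positivity
  have hμL : μ * L = 1 / k := by rw [hμ]; field_simp
  have h2m : 2 * m ≤ L := by
    rw [le_div_iff₀ hm] at hκ; linarith
  have hμL2 : μ * L ≤ 1 / 2 := by
    rw [hμL, div_le_div_iff₀ hk0 (by norm_num)]; linarith
  have hμm : 0 < μ * m := by positivity
  have hμmL : 2 * (μ * m) ≤ μ * L := by nlinarith
  have h1m0 : 0 < 1 - μ * m := by nlinarith
  have h1L0 : 0 < 1 - μ * L := by linarith
  have hR : 2 * k * (L / m) = 2 / (μ * m) := by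
    rw [hμ]; field_simp
  have h1pm : (0:ℝ) < 1 + μ * m := by positivity
  have h1pL : (0:ℝ) < 1 + μ * L := by positivity
  rw [hR]
  constructor
  · rw [min_eq_left (by nlinarith : (1 - μ * m) * m ≤ (1 - μ * L) * L)]
    have : (2 * (1 - μ * m) / μ) / ((1 - μ * m) * m) = 2 / (μ * m) := by
      field_simp
    rw [this]
  · rcases le_total ((1 - μ * m) * m / (1 + μ * m) ^ 2)
      ((1 - μ * L) * L / (1 + μ * L) ^ 2) with h | h
    · rw [min_eq_left h]
      have heq : ((1 - μ * m) / (μ * (1 + μ * m) ^ 2)) /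
          ((1 - μ * m) * m / (1 + μ * m) ^ 2) = 1 / (μ * m) := by
        field_simp
      rw [heq, div_le_div_iff₀ hμm hμm]
      nlinarith
    · rw [min_eq_right h]
      have hp2 : 0 < (1 - μ * L) * L / (1 + μ * L) ^ 2 := by positivity
      rw [div_le_div_iff₀ hp2 hμm, div_mul_eq_mul_div, ← mul_div_assoc,
        div_le_div_iff₀ (by positivity) (by positivity)]
      have key : (1 - μ * m) * m * (1 + μ * L) ^ 2 ≤
          2 * ((1 - μ * L) * L) * (1 + μ * m) ^ 2 := by
        nlinarith [sq_nonneg (μ * L - 2 * μ * m), sq_nonneg (μ * m), sq_nonneg (μ * L),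
          mul_pos hμm hμm, mul_nonneg (mul_nonneg hμm.le hμm.le) hμm.le,
          mul_nonneg (sub_nonneg.2 hμmL) (sub_nonneg.2 hμL2),
          mul_nonneg (sub_nonneg.2 hμmL) hμm.le,
          mul_nonneg (sub_nonneg.2 hμL2) hμm.le,
          mul_nonneg (mul_nonneg (sub_nonneg.2 hμmL) (sub_nonneg.2 hμL2)) hμm.le]
      nlinarith [mul_le_mul_of_nonneg_left key hμ0.le]
end
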